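/- arXiv:1606.06705 — 7 statements merged into one kernel-verified Lean document; each statement's English description precedes it below -/
import Mathlib

section
/- For any weight v on (0,∞) and nonnegative measurable f, the greatest non-increasing minorant v↓(x) = ess inf_{0<t≤x} v(t) satisfies: inf over all nonnegative measurable g with ∫_{(0,x]} g dμ ≥ ∫_{(0,x]} f dμ for all x > 0, of ∫ g v dμ, equals ∫ f v↓ dμ. -/
open MeasureTheory ENNReal Set Filter Topology

noncomputable def Wfn (μ : Measure ℝ) (v : ℝ → ℝ≥0∞) (t : ℝ) : ℝ≥0∞ :=
  essInf v (μ.restrict (Set.Ioc 0 t))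

lemma Wfn_anti (μ : Measure ℝ) (v : ℝ → ℝ≥0∞) : Antitone (Wfn μ v) := fun s t hst =>
  essInf_antitone_measure <| Measure.absolutelyContinuous_of_le <|
    Measure.restrict_mono (Set.Ioc_subset_Ioc_right hst) le_rfl

lemma Wfn_meas (μ : Measure ℝ) (v : ℝ → ℝ≥0∞) : Measurable (Wfn μ v) :=
  (Wfn_anti μ v).measurable

lemma ae_Wfn_le_restrict (μ : Measure ℝ) (v : ℝ → ℝ≥0∞) (x : ℝ) :
    ∀ᵐ t ∂μ.restrict (Set.Ioc 0 x), Wfn μ v x ≤ v t :=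
  ae_essInf_le

lemma Wfn_null (μ : Measure ℝ) (v : ℝ → ℝ≥0∞) (x : ℝ) :
    μ ({t | v t < Wfn μ v x} ∩ Set.Ioc 0 x) = 0 := by
  have h := ae_Wfn_le_restrict μ v x
  rw [ae_iff, Measure.restrict_apply' measurableSet_Ioc] at h
  simpa only [not_le] using h

lemma ae_Wfn_le (μ : Measure ℝ) (v : ℝ → ℝ≥0∞) :
    ∀ᵐ t ∂μ.restrict (Set.Ioi 0), Wfn μ v t ≤ v t := by
  classical
  set W := Wfn μ v with hW
  -- bad set 1 : union over rationals
  set N : Set ℝ := ⋃ q : ℚ, ({t | v t < W q} ∩ Set.Ioc 0 (q : ℝ)) with hN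
  have hNnull : μ N = 0 := by
    refine measure_iUnion_null fun q => Wfn_null μ v q
  -- bad set 2 : non-atomic discontinuity points
  set D : Set ℝ := {t | ¬ContinuousAt W t ∧ μ {t} = 0} with hD
  have hDnull : μ D = 0 := by
    have hc : D.Countable :=
      ((Wfn_anti μ v).countable_not_continuousAt).mono fun t ht => ht.1
    have : D = ⋃ t ∈ D, {t} := by simp
    rw [this]
    exact (measure_biUnion_null_iff hc).2 fun t ht => ht.2
  have hN' : ∀ᵐ t ∂μ, t ∉ N := (measure_eq_zero_iff_ae_notMem.1 hNnull)
  have hD' : ∀ᵐ t ∂μ, t ∉ D := (measure_eq_zero_iff_ae_notMem.1 hDnull)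
  rw [ae_restrict_iff' measurableSet_Ioi]
  filter_upwards [hN', hD'] with t htN htD ht
  by_cases hatom : μ {t} = 0
  · -- continuity point
    have hcont : ContinuousAt W t := by
      by_contra hc
      exact htD ⟨hc, hatom⟩
    by_contra hlt
    push_neg at hlt
    have hmem : {y : ℝ | v t < W y} ∈ 𝓝 t :=
      hcont.preimage_mem_nhds (isOpen_Ioi.mem_nhds hlt)
    obtain ⟨ε, hε, hball⟩ := Metric.mem_nhds_iff.1 hmem
    obtain ⟨q, hq1, hq2⟩ := exists_rat_btwn (lt_add_of_pos_right t hε)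
    have hqmem : (q : ℝ) ∈ Metric.ball t ε := by
      rw [Metric.mem_ball, Real.dist_eq, abs_of_pos (by linarith)]
      linarith
    exact htN (Set.mem_iUnion.2 ⟨q, hball hqmem, ⟨ht, le_of_lt hq1⟩⟩)
  · -- atom
    by_contra hlt
    push_neg at hlt
    have h0 := Wfn_null μ v t
    have : μ {t} ≤ μ ({s | v s < W t} ∩ Set.Ioc 0 t) := by
      refine measure_mono fun s hs => ?_
      rw [Set.mem_singleton_iff] at hs
      subst hs
      exact ⟨hlt, ht, le_rfl⟩
    rw [h0] at this
    exact hatom (le_antisymm this zero_le)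

/-- comparison of integrals over an initial segment of `Ioi 0`. -/
lemma initial_seg_le (μ : Measure ℝ) (f g : ℝ → ℝ≥0∞)
    (hfg : ∀ x > (0 : ℝ), (∫⁻ t in Set.Ioc 0 x, f t ∂μ) ≤ ∫⁻ t in Set.Ioc 0 x, g t ∂μ)
    (A : Set ℝ) (hA : A ⊆ Set.Ioi 0) (hAmeas : MeasurableSet A)
    (hInit : ∀ x ∈ A, ∀ y : ℝ, 0 < y → y ≤ x → y ∈ A) :
    (∫⁻ t in A, f t ∂μ) ≤ ∫⁻ t in A, g t ∂μ := by
  rcases A.eq_empty_or_nonempty with rfl | hne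
  · simp
  obtain ⟨a, haA, hcov⟩ : ∃ a : ℕ → ℝ, (∀ n, a n ∈ A) ∧ A = ⋃ n, Set.Ioc 0 (a n) := by
    by_cases hbdd : BddAbove A
    · by_cases hs : sSup A ∈ A
      · refine ⟨fun _ => sSup A, fun _ => hs, ?_⟩
        apply Set.Subset.antisymm
        · intro x hx
          exact Set.mem_iUnion.2 ⟨0, hA hx, le_csSup hbdd hx⟩
        · intro x hx
          obtain ⟨n, hn⟩ := Set.mem_iUnion.1 hx
          exact hInit _ hs x hn.1 hn.2
      · obtain ⟨u, hu_mono, hu_t, hu_mem⟩ := exists_seq_tendsto_sSup hne hbdd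
        refine ⟨u, hu_mem, Set.Subset.antisymm ?_ ?_⟩
        · intro x hx
          have hxlt : x < sSup A := lt_of_le_of_ne (le_csSup hbdd hx) (fun h => hs (h ▸ hx))
          obtain ⟨n, hn⟩ := (hu_t.eventually (eventually_gt_nhds hxlt)).exists
          exact Set.mem_iUnion.2 ⟨n, hA hx, hn.le⟩
        · intro x hx
          obtain ⟨n, hn⟩ := Set.mem_iUnion.1 hx
          exact hInit _ (hu_mem n) x hn.1 hn.2
    · have h' : ∀ n : ℕ, ∃ y ∈ A, (n : ℝ) < y := by
        intro n
        rcases not_bddAbove_iff.1 hbdd (n : ℝ) with ⟨y, hy, hy'⟩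
        exact ⟨y, hy, hy'⟩
      choose a haA ha using h'
      refine ⟨a, haA, Set.Subset.antisymm ?_ ?_⟩
      · intro x hx
        obtain ⟨n, hn⟩ := exists_nat_ge x
        exact Set.mem_iUnion.2 ⟨n, hA hx, hn.trans (ha n).le⟩
      · intro x hx
        obtain ⟨n, hn⟩ := Set.mem_iUnion.1 hx
        exact hInit _ (haA n) x hn.1 hn.2
  have hdir : Directed (· ⊆ ·) (fun n => Set.Ioc (0:ℝ) (a n)) := by
    intro m n
    rcases le_total (a m) (a n) with h | h
    · exact ⟨n, Set.Ioc_subset_Ioc_right h, le_rfl⟩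
    · exact ⟨m, le_rfl, Set.Ioc_subset_Ioc_right h⟩
  have key : (∫⁻ t in A, f t ∂μ) = ⨆ n, ∫⁻ t in Set.Ioc 0 (a n), f t ∂μ := by
    rw [← withDensity_apply f hAmeas, hcov, Directed.measure_iUnion hdir]
    simp_rw [withDensity_apply f measurableSet_Ioc]
  rw [key]
  refine iSup_le fun n => (hfg (a n) (hA (haA n))).trans ?_
  refine lintegral_mono' (Measure.restrict_mono ?_ le_rfl) le_rfl
  intro y hy
  exact hInit _ (haA n) y hy.1 hy.2

lemma layer_vol (a : ℝ≥0∞) : (volume {s : ℝ | 0 < s ∧ ENNReal.ofReal s < a}) = a := by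
  rcases eq_or_ne a ⊤ with rfl | ha
  · have : {s : ℝ | 0 < s ∧ ENNReal.ofReal s < ⊤} = Set.Ioi 0 := by
      ext s; simp [ENNReal.ofReal_lt_top]
    rw [this, Real.volume_Ioi]
  · have : {s : ℝ | 0 < s ∧ ENNReal.ofReal s < a} = Set.Ioo 0 a.toReal := by
      ext s
      simp only [Set.mem_setOf_eq, Set.mem_Ioo, and_congr_right_iff]
      intro hs
      rw [ENNReal.ofReal_lt_iff_lt_toReal hs.le ha]
    rw [this, Real.volume_Ioo, sub_zero, ENNReal.ofReal_toReal ha]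

lemma mul_W_eq_lintegral (μ : Measure ℝ) (v : ℝ → ℝ≥0∞) (h : ℝ → ℝ≥0∞) (x : ℝ) :
    h x * Wfn μ v x
      = ∫⁻ s in Set.Ioi (0:ℝ),
          h x * ({q : ℝ × ℝ | ENNReal.ofReal q.2 < Wfn μ v q.1}.indicator (1 : ℝ × ℝ → ℝ≥0∞) (x, s)) := by
  have hset : MeasurableSet {s : ℝ | ENNReal.ofReal s < Wfn μ v x} :=
    measurableSet_lt ENNReal.measurable_ofReal (measurable_const)
  have heq : ∀ s : ℝ, ({q : ℝ × ℝ | ENNReal.ofReal q.2 < Wfn μ v q.1}.indicator (1 : ℝ × ℝ → ℝ≥0∞) (x, s))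
      = ({s : ℝ | ENNReal.ofReal s < Wfn μ v x}.indicator (1 : ℝ → ℝ≥0∞) s) := by
    intro s
    simp [Set.indicator_apply]
  simp_rw [heq]
  rw [lintegral_const_mul _ (measurable_one.indicator hset)]
  congr 1
  rw [lintegral_indicator hset, Measure.restrict_restrict hset]
  simp only [Pi.one_apply, MeasureTheory.setLIntegral_one]
  rw [show {s : ℝ | ENNReal.ofReal s < Wfn μ v x} ∩ Set.Ioi 0
      = {s : ℝ | 0 < s ∧ ENNReal.ofReal s < Wfn μ v x} by
    ext s; simp only [Set.mem_inter_iff, Set.mem_setOf_eq, Set.mem_Ioi]; tauto]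
  exact (layer_vol _).symm

lemma dirA (μ : Measure ℝ) [SigmaFinite μ] (v f g : ℝ → ℝ≥0∞)
    (hf : Measurable f) (hg : Measurable g)
    (hfg : ∀ x > (0 : ℝ), (∫⁻ t in Set.Ioc 0 x, f t ∂μ) ≤ ∫⁻ t in Set.Ioc 0 x, g t ∂μ) :
    (∫⁻ t in Set.Ioi (0:ℝ), f t * Wfn μ v t ∂μ)
      ≤ ∫⁻ t in Set.Ioi (0:ℝ), g t * Wfn μ v t ∂μ := by
  classical
  set W := Wfn μ v with hWdef
  set K : Set (ℝ × ℝ) := {q : ℝ × ℝ | ENNReal.ofReal q.2 < W q.1} with hK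
  have hKmeas : MeasurableSet K :=
    measurableSet_lt (ENNReal.measurable_ofReal.comp measurable_snd)
      ((Wfn_meas μ v).comp measurable_fst)
  have hswap : ∀ h : ℝ → ℝ≥0∞, Measurable h →
      (∫⁻ x in Set.Ioi (0:ℝ), ∫⁻ s in Set.Ioi (0:ℝ), h x * (K.indicator (1 : ℝ × ℝ → ℝ≥0∞) (x, s)) ∂volume ∂μ)
        = ∫⁻ s in Set.Ioi (0:ℝ), ∫⁻ x in Set.Ioi (0:ℝ), h x * (K.indicator (1 : ℝ × ℝ → ℝ≥0∞) (x, s)) ∂μ ∂volume := by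
    intro h hh
    exact lintegral_lintegral_swap
      (((hh.comp measurable_fst).mul (measurable_one.indicator hKmeas)).aemeasurable)
  have hinner : ∀ (h : ℝ → ℝ≥0∞) (s : ℝ),
      (∫⁻ x in Set.Ioi (0:ℝ), h x * (K.indicator (1 : ℝ × ℝ → ℝ≥0∞) (x, s)) ∂μ)
        = ∫⁻ x in {x : ℝ | ENNReal.ofReal s < W x} ∩ Set.Ioi 0, h x ∂μ := by
    intro h s
    have hBmeas : MeasurableSet {x : ℝ | ENNReal.ofReal s < W x} :=
      measurableSet_lt measurable_const (Wfn_meas μ v)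
    have : ∀ x : ℝ, h x * (K.indicator (1 : ℝ × ℝ → ℝ≥0∞) (x, s))
        = ({x : ℝ | ENNReal.ofReal s < W x}.indicator h) x := by
      intro x
      simp [Set.indicator_apply, hK]
    simp_rw [this]
    rw [lintegral_indicator hBmeas, Measure.restrict_restrict hBmeas]
  calc (∫⁻ t in Set.Ioi (0:ℝ), f t * W t ∂μ)
      = ∫⁻ x in Set.Ioi (0:ℝ), ∫⁻ s in Set.Ioi (0:ℝ), f x * (K.indicator (1 : ℝ × ℝ → ℝ≥0∞) (x, s)) ∂volume ∂μ := by
        exact lintegral_congr fun t => mul_W_eq_lintegral μ v f t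
    _ = ∫⁻ s in Set.Ioi (0:ℝ), ∫⁻ x in Set.Ioi (0:ℝ), f x * (K.indicator (1 : ℝ × ℝ → ℝ≥0∞) (x, s)) ∂μ ∂volume :=
        hswap f hf
    _ ≤ ∫⁻ s in Set.Ioi (0:ℝ), ∫⁻ x in Set.Ioi (0:ℝ), g x * (K.indicator (1 : ℝ × ℝ → ℝ≥0∞) (x, s)) ∂μ ∂volume := by
        refine lintegral_mono fun s => ?_
        rw [hinner f s, hinner g s]
        refine initial_seg_le μ f g hfg _ Set.inter_subset_right
          ((measurableSet_lt measurable_const (Wfn_meas μ v)).inter measurableSet_Ioi) ?_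
        rintro x ⟨hx1, _⟩ y hy hyx
        exact ⟨lt_of_lt_of_le hx1 (Wfn_anti μ v hyx), hy⟩
    _ = ∫⁻ x in Set.Ioi (0:ℝ), ∫⁻ s in Set.Ioi (0:ℝ), g x * (K.indicator (1 : ℝ × ℝ → ℝ≥0∞) (x, s)) ∂volume ∂μ :=
        (hswap g hg).symm
    _ = ∫⁻ t in Set.Ioi (0:ℝ), g t * W t ∂μ := by
        exact lintegral_congr fun t => (mul_W_eq_lintegral μ v g t).symm

/-- decompose an order-convex subset of `Ioi 0` into countably many cells,
each having a designated point of `S` below it. -/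
lemma cell_decomp (S : Set ℝ) (hS : S ⊆ Set.Ioi 0) (hmeas : MeasurableSet S)
    (hconv : ∀ x ∈ S, ∀ z : ℝ, z ∈ S → ∀ w : ℝ, x ≤ w → w ≤ z → w ∈ S) :
    ∃ (T : ℕ → Set ℝ) (p : ℕ → ℝ),
      (∀ k, MeasurableSet (T k)) ∧ (⋃ k, T k) = S ∧
      (Pairwise (Function.onFun Disjoint T)) ∧
      (∀ k, T k ⊆ S) ∧ (∀ k, ∀ x ∈ T k, p k ∈ S ∧ p k ≤ x) := by
  classical
  rcases S.eq_empty_or_nonempty with rfl | hne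
  · exact ⟨fun _ => ∅, fun _ => 1, fun _ => MeasurableSet.empty, by simp,
      fun i j _ => by simp [Function.onFun], fun _ => by simp, fun k x hx => hx.elim⟩
  by_cases hmin : ∃ p ∈ S, ∀ x ∈ S, p ≤ x
  · obtain ⟨p0, hp0, hp0min⟩ := hmin
    refine ⟨fun k => if k = 0 then S else ∅, fun _ => p0, ?_, ?_, ?_, ?_, ?_⟩
    · intro k; by_cases h : k = 0 <;> simp [h, hmeas]
    · ext x; simp only [Set.mem_iUnion]
      constructor
      · rintro ⟨k, hk⟩; by_cases h : k = 0 <;> simp_all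
      · intro hx; exact ⟨0, by simpa⟩
    · intro i j hij
      rcases Nat.eq_zero_or_pos i with rfl | hi
      · have : j ≠ 0 := fun h => hij h.symm
        simp [Function.onFun, this]
      · simp [Function.onFun, Nat.pos_iff_ne_zero.1 hi]
    · intro k; by_cases h : k = 0 <;> simp [h]
    · intro k x hx
      by_cases h : k = 0
      · rw [h] at hx; simp only [if_pos] at hx
        exact ⟨hp0, hp0min x (by simpa using hx)⟩
      · simp [h] at hx
  · have hbdd : BddBelow S := ⟨0, fun x hx => (hS hx).le⟩
    obtain ⟨u, hu_anti, hu_t, hu_mem⟩ := exists_seq_tendsto_sInf hne hbdd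
    refine ⟨fun k => if k = 0 then S ∩ Set.Ici (u 0) else S ∩ Set.Ico (u k) (u (k-1)),
      u, ?_, ?_, ?_, ?_, ?_⟩
    · intro k; by_cases h : k = 0 <;>
        simp [h, hmeas, hmeas.inter measurableSet_Ici, hmeas.inter measurableSet_Ico]
    · apply Set.Subset.antisymm
      · intro x hx
        obtain ⟨k, hk⟩ := Set.mem_iUnion.1 hx
        by_cases h : k = 0
        · rw [h] at hk; simpa using hk.1
        · simp only [if_neg h] at hk; exact hk.1
      · intro x hx
        have hxb : sInf S < x := by
          rcases lt_or_eq_of_le (csInf_le hbdd hx) with h | h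
          · exact h
          · exact absurd ⟨x, hx, fun z hz => h ▸ csInf_le hbdd hz⟩ hmin
        obtain ⟨n, hn⟩ := (hu_t.eventually (eventually_lt_nhds hxb)).exists
        have hP : ∃ k, u k ≤ x := ⟨n, hn.le⟩
        set k0 := Nat.find hP with hk0
        have hspec : u k0 ≤ x := Nat.find_spec hP
        rcases Nat.eq_zero_or_pos k0 with h0 | h0
        · refine Set.mem_iUnion.2 ⟨0, ?_⟩
          simp only [if_pos rfl]
          exact ⟨hx, h0 ▸ hspec⟩
        · refine Set.mem_iUnion.2 ⟨k0, ?_⟩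
          have hne0 : k0 ≠ 0 := Nat.pos_iff_ne_zero.1 h0
          simp only [if_neg hne0]
          refine ⟨hx, hspec, ?_⟩
          have := Nat.find_min hP (m := k0 - 1) (by omega)
          exact lt_of_not_ge this
    · have key : ∀ i j : ℕ, i < j →
          Disjoint (if i = 0 then S ∩ Set.Ici (u 0) else S ∩ Set.Ico (u i) (u (i-1)))
            (if j = 0 then S ∩ Set.Ici (u 0) else S ∩ Set.Ico (u j) (u (j-1))) := by
        intro i j hlt
        have hj0 : j ≠ 0 := by omega
        rw [Set.disjoint_left]
        intro x hxi hxj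
        simp only [if_neg hj0] at hxj
        have hxj2 : x < u (j - 1) := hxj.2.2
        by_cases h : i = 0
        · rw [h] at hxi; simp only [if_pos rfl] at hxi
          have : u (j-1) ≤ u 0 := hu_anti (by omega)
          exact absurd hxi.2 (not_le.2 (lt_of_lt_of_le hxj2 this))
        · simp only [if_neg h] at hxi
          have : u (j-1) ≤ u i := hu_anti (by omega)
          exact absurd hxi.2.1 (not_le.2 (lt_of_lt_of_le hxj2 this))
      intro i j hij
      rcases hij.lt_or_gt with h | h
      · exact key i j h
      · exact (key j i h).symm
    · intro k; by_cases h : k = 0 <;> simp [h, Set.inter_subset_left]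
    · intro k x hx
      by_cases h : k = 0
      · subst h; simp only [if_pos rfl] at hx
        exact ⟨hu_mem 0, hx.2⟩
      · simp only [if_neg h] at hx
        exact ⟨hu_mem k, hx.2.1⟩

/-- choose a target set of finite positive measure where `v` is small. -/
lemma target_set (μ : Measure ℝ) [SigmaFinite μ] (v : ℝ → ℝ≥0∞) (hv : Measurable v)
    (p : ℝ) (c : ℝ≥0∞) (hc : Wfn μ v p < c) :
    ∃ B : Set ℝ, MeasurableSet B ∧ B ⊆ Set.Ioc 0 p ∧ 0 < μ B ∧ μ B < ⊤ ∧
      ∀ t ∈ B, v t < c := by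
  have hpos : 0 < μ ({t | v t < c} ∩ Set.Ioc 0 p) := by
    rcases eq_or_ne (μ ({t | v t < c} ∩ Set.Ioc 0 p)) 0 with h0 | h0
    · exfalso
      have : ∀ᵐ t ∂μ.restrict (Set.Ioc 0 p), c ≤ v t := by
        rw [ae_iff, Measure.restrict_apply' measurableSet_Ioc]
        simpa only [not_le] using h0
      exact absurd (le_essInf_of_ae_le c this) (not_le.2 hc)
    · exact pos_iff_ne_zero.2 h0
  obtain ⟨B, hBmeas, hBsub, hBpos, hBfin⟩ :=
    MeasureTheory.Measure.exists_subset_measure_lt_top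
      ((measurableSet_lt hv measurable_const).inter measurableSet_Ioc) hpos
  exact ⟨B, hBmeas, fun t ht => (hBsub ht).2, hBpos, hBfin, fun t ht => (hBsub ht).1⟩

lemma dirB (μ : Measure ℝ) [SigmaFinite μ] (v f : ℝ → ℝ≥0∞) (hv : Measurable v)
    (hf : Measurable f) (y : ℝ≥0∞) (hy1 : 1 < y) (hytop : y ≠ ⊤)
    (ε : ℝ≥0∞) (hε0 : ε ≠ 0) :
    ∃ g : ℝ → ℝ≥0∞, Measurable g ∧
      (∀ x > (0:ℝ), (∫⁻ t in Set.Ioc 0 x, f t ∂μ) ≤ ∫⁻ t in Set.Ioc 0 x, g t ∂μ) ∧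
      (∫⁻ t in Set.Ioi (0:ℝ), g t * v t ∂μ)
        ≤ y * (∫⁻ t in Set.Ioi (0:ℝ), f t * Wfn μ v t ∂μ) + ε := by
  classical
  set W := Wfn μ v with hWdef
  have hWm : Measurable W := Wfn_meas μ v
  have hy0 : y ≠ 0 := (lt_trans zero_lt_one hy1).ne'
  -- regions
  set E : Set ℝ := Set.Ioi 0 ∩ W ⁻¹' {⊤} with hEdef
  set Z : Set ℝ := Set.Ioi 0 ∩ W ⁻¹' {0} with hZdef
  set I : ℤ → Set ℝ := fun n => Set.Ioi 0 ∩ W ⁻¹' (Set.Ico (y^n) (y^(n+1))) with hIdef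
  have hEm : MeasurableSet E := measurableSet_Ioi.inter (hWm (measurableSet_singleton ⊤))
  have hZm : MeasurableSet Z := measurableSet_Ioi.inter (hWm (measurableSet_singleton 0))
  have hIm : ∀ n, MeasurableSet (I n) := fun n =>
    measurableSet_Ioi.inter (hWm measurableSet_Ico)
  -- cells for the main regions
  have hIcell : ∀ n : ℤ, ∃ (T : ℕ → Set ℝ) (p : ℕ → ℝ),
      (∀ k, MeasurableSet (T k)) ∧ (⋃ k, T k) = I n ∧
      (Pairwise (Function.onFun Disjoint T)) ∧
      (∀ k, T k ⊆ I n) ∧ (∀ k, ∀ x ∈ T k, p k ∈ I n ∧ p k ≤ x) := by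
    intro n
    refine cell_decomp (I n) Set.inter_subset_left (hIm n) ?_
    rintro x ⟨hx0, hx1⟩ z ⟨hz0, hz1⟩ w hxw hwz
    rw [Set.mem_preimage, Set.mem_Ico] at hx1 hz1
    exact ⟨lt_of_lt_of_le hx0 hxw, le_trans hz1.1 (Wfn_anti μ v hwz),
      lt_of_le_of_lt (Wfn_anti μ v hxw) hx1.2⟩
  choose T p hTmeas hTunion hTdisj hTsub hTpt using hIcell
  -- cells for the zero region
  obtain ⟨TZ, pZ, hTZmeas, hTZunion, hTZdisj, hTZsub, hTZpt⟩ :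
      ∃ (T : ℕ → Set ℝ) (p : ℕ → ℝ),
      (∀ k, MeasurableSet (T k)) ∧ (⋃ k, T k) = Z ∧
      (Pairwise (Function.onFun Disjoint T)) ∧
      (∀ k, T k ⊆ Z) ∧ (∀ k, ∀ x ∈ T k, p k ∈ Z ∧ p k ≤ x) := by
    refine cell_decomp Z Set.inter_subset_left hZm ?_
    rintro x ⟨hx0, hx1⟩ z ⟨hz0, hz1⟩ w hxw hwz
    rw [Set.mem_preimage, Set.mem_singleton_iff] at hx1
    refine ⟨lt_of_lt_of_le hx0 hxw, ?_⟩
    rw [Set.mem_preimage, Set.mem_singleton_iff]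
    refine le_antisymm ?_ zero_le
    calc W w ≤ W x := Wfn_anti μ v hxw
      _ ≤ 0 := hx1.le
  -- masses
  set m : ℤ → ℕ → ℝ≥0∞ := fun n k => ∫⁻ t in T n k, f t ∂μ with hmdef
  -- target sets for main cells
  have hBex : ∀ (n : ℤ) (k : ℕ), ∃ B : Set ℝ, MeasurableSet B ∧
      ((T n k).Nonempty → (B ⊆ Set.Ioc 0 (p n k) ∧ 0 < μ B ∧ μ B < ⊤ ∧
        ∀ t ∈ B, v t < y^(n+1))) := by
    intro n k
    by_cases h : (T n k).Nonempty
    · obtain ⟨x, hx⟩ := h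
      have hp := hTpt n k x hx
      have hplt : W (p n k) < y^(n+1) := by
        have := hp.1.2
        rw [Set.mem_preimage, Set.mem_Ico] at this
        exact this.2
      obtain ⟨B, h1, h2, h3, h4, h5⟩ :=
        target_set μ v hv (p n k) (y^(n+1)) hplt
      exact ⟨B, h1, fun _ => ⟨h2, h3, h4, h5⟩⟩
    · exact ⟨∅, MeasurableSet.empty, fun h' => absurd h' h⟩
  choose B hBmeas hBspec using hBex
  -- target sets for zero cells
  set δ : ℕ → ℕ → ℝ≥0∞ := fun k i => (ε * 4⁻¹ * 2⁻¹^k * 2⁻¹^i) / 2^i with hδdef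
  have h2i0 : ∀ i : ℕ, ((2:ℝ≥0∞)⁻¹)^i ≠ 0 := fun i =>
    pow_ne_zero _ (ENNReal.inv_ne_zero.2 ENNReal.ofNat_ne_top)
  have h40 : (4:ℝ≥0∞)⁻¹ ≠ 0 := ENNReal.inv_ne_zero.2 (by norm_num)
  have hδ0 : ∀ k i, 0 < δ k i := by
    intro k i
    simp only [hδdef]
    exact ENNReal.div_pos (mul_ne_zero (mul_ne_zero (mul_ne_zero hε0 h40) (h2i0 k)) (h2i0 i))
      (ENNReal.pow_ne_top ENNReal.ofNat_ne_top)
  have hBZex : ∀ (k i : ℕ), ∃ BZ : Set ℝ, MeasurableSet BZ ∧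
      ((TZ k).Nonempty → (BZ ⊆ Set.Ioc 0 (pZ k) ∧ 0 < μ BZ ∧ μ BZ < ⊤ ∧
        ∀ t ∈ BZ, v t < δ k i)) ∧ (¬(TZ k).Nonempty → BZ = ∅) := by
    intro k i
    by_cases h : (TZ k).Nonempty
    · obtain ⟨x, hx⟩ := h
      have hp := hTZpt k x hx
      have h0 : W (pZ k) < δ k i := by
        have := hp.1.2
        rw [Set.mem_preimage, Set.mem_singleton_iff] at this
        rw [this]
        exact hδ0 k i
      obtain ⟨BZ, h1, h2, h3, h4, h5⟩ := target_set μ v hv (pZ k) (δ k i) h0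
      exact ⟨BZ, h1, fun _ => ⟨h2, h3, h4, h5⟩, fun h' => absurd ⟨x, hx⟩ h'⟩
    · exact ⟨∅, MeasurableSet.empty, fun h' => absurd h' h, fun _ => rfl⟩
  choose BZ hBZmeas hBZspec hBZempty using hBZex
  -- the competitor function
  set gE : ℝ → ℝ≥0∞ := E.indicator f with hgEdef
  set F1 : ℤ × ℕ → ℝ → ℝ≥0∞ := fun nk t =>
    (m nk.1 nk.2 / μ (B nk.1 nk.2)) * (B nk.1 nk.2).indicator (1 : ℝ → ℝ≥0∞) t with hF1def
  set FZ : ℕ × ℕ → ℝ → ℝ≥0∞ := fun ki t =>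
    ((2:ℝ≥0∞)^ki.2 / μ (BZ ki.1 ki.2)) * (BZ ki.1 ki.2).indicator (1 : ℝ → ℝ≥0∞) t with hFZdef
  set g1 : ℝ → ℝ≥0∞ := fun t => ∑' nk : ℤ × ℕ, F1 nk t with hg1def
  set gZ : ℝ → ℝ≥0∞ := fun t => ∑' ki : ℕ × ℕ, FZ ki t with hgZdef
  have hF1m : ∀ nk : ℤ × ℕ, Measurable (F1 nk) := by
    intro nk
    simp only [hF1def]
    exact measurable_const.mul (measurable_one.indicator (hBmeas nk.1 nk.2))
  have hFZm : ∀ ki : ℕ × ℕ, Measurable (FZ ki) := by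
    intro ki
    simp only [hFZdef]
    exact measurable_const.mul (measurable_one.indicator (hBZmeas ki.1 ki.2))
  have hgEm : Measurable gE := hf.indicator hEm
  have hg1m : Measurable g1 := Measurable.ennreal_tsum hF1m
  have hgZm : Measurable gZ := Measurable.ennreal_tsum hFZm
  refine ⟨fun t => gE t + g1 t + gZ t, (hgEm.add hg1m).add hgZm, ?_, ?_⟩
  · -- admissibility
    intro x hx
    set ν := μ.withDensity f with hνdef
    have hν : ∀ s : Set ℝ, MeasurableSet s → ν s = ∫⁻ t in s, f t ∂μ := fun s hs =>
      withDensity_apply f hs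
    have hcover : Set.Ioc 0 x ⊆ (E ∩ Set.Ioc 0 x) ∪
        ((⋃ nk : ℤ × ℕ, T nk.1 nk.2 ∩ Set.Ioc 0 x) ∪ (⋃ k, TZ k ∩ Set.Ioc 0 x)) := by
      intro t ht
      have ht0 : (0:ℝ) < t := ht.1
      rcases eq_or_ne (W t) ⊤ with htop | htop
      · exact Or.inl ⟨⟨ht0, htop⟩, ht⟩
      rcases eq_or_ne (W t) 0 with h0 | h0
      · have htZ : t ∈ Z := ⟨ht0, h0⟩
        rw [← hTZunion] at htZ
        obtain ⟨k, hk⟩ := Set.mem_iUnion.1 htZ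
        exact Or.inr (Or.inr (Set.mem_iUnion.2 ⟨k, hk, ht⟩))
      · obtain ⟨n, hn⟩ := ENNReal.exists_mem_Ico_zpow h0 htop hy1 hytop
        have htI : t ∈ I n := ⟨ht0, hn⟩
        rw [← hTunion n] at htI
        obtain ⟨k, hk⟩ := Set.mem_iUnion.1 htI
        exact Or.inr (Or.inl (Set.mem_iUnion.2 ⟨(n, k), hk, ht⟩))
    have hterm1 : ∀ nk : ℤ × ℕ, ν (T nk.1 nk.2 ∩ Set.Ioc 0 x)
        ≤ ∫⁻ t in Set.Ioc 0 x, F1 nk t ∂μ := by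
      rintro ⟨n, k⟩
      rcases (T n k ∩ Set.Ioc 0 x).eq_empty_or_nonempty with hemp | ⟨z, hz⟩
      · rw [hemp, measure_empty]; exact zero_le
      have hTne : (T n k).Nonempty := ⟨z, hz.1⟩
      obtain ⟨hBsub, hBpos, hBfin, hBv⟩ := hBspec n k hTne
      have hBsub' : B n k ⊆ Set.Ioc 0 x := fun t ht =>
        ⟨(hBsub ht).1, le_trans (hBsub ht).2 (le_trans (hTpt n k z hz.1).2 hz.2.2)⟩
      have hRHS : (∫⁻ t in Set.Ioc 0 x, F1 (n, k) t ∂μ) = m n k := by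
        simp only [hF1def]
        rw [lintegral_const_mul _ (measurable_one.indicator (hBmeas n k)),
          lintegral_indicator (hBmeas n k), Measure.restrict_restrict (hBmeas n k),
          Set.inter_eq_self_of_subset_left hBsub']
        simp only [Pi.one_apply, MeasureTheory.setLIntegral_one]
        exact ENNReal.div_mul_cancel hBpos.ne' hBfin.ne
      rw [hRHS]
      calc ν (T n k ∩ Set.Ioc 0 x) ≤ ν (T n k) := measure_mono Set.inter_subset_left
        _ = m n k := hν _ (hTmeas n k)
    have htermZ : ∀ k : ℕ, ν (TZ k ∩ Set.Ioc 0 x)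
        ≤ ∑' i : ℕ, ∫⁻ t in Set.Ioc 0 x, FZ (k, i) t ∂μ := by
      intro k
      rcases (TZ k ∩ Set.Ioc 0 x).eq_empty_or_nonempty with hemp | ⟨z, hz⟩
      · rw [hemp, measure_empty]; exact zero_le
      have hTne : (TZ k).Nonempty := ⟨z, hz.1⟩
      have hRHS : ∀ i : ℕ, (∫⁻ t in Set.Ioc 0 x, FZ (k, i) t ∂μ) = 2^i := by
        intro i
        obtain ⟨hBsub, hBpos, hBfin, hBv⟩ := hBZspec k i hTne
        have hBsub' : BZ k i ⊆ Set.Ioc 0 x := fun t ht =>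
          ⟨(hBsub ht).1, le_trans (hBsub ht).2 (le_trans (hTZpt k z hz.1).2 hz.2.2)⟩
        simp only [hFZdef]
        rw [lintegral_const_mul _ (measurable_one.indicator (hBZmeas k i)),
          lintegral_indicator (hBZmeas k i), Measure.restrict_restrict (hBZmeas k i),
          Set.inter_eq_self_of_subset_left hBsub']
        simp only [Pi.one_apply, MeasureTheory.setLIntegral_one]
        exact ENNReal.div_mul_cancel hBpos.ne' hBfin.ne
      simp_rw [hRHS]
      have htop2 : (∑' i : ℕ, (2:ℝ≥0∞)^i) = ⊤ := by
        refine top_le_iff.1 ?_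
        calc (⊤:ℝ≥0∞) = ∑' _ : ℕ, (1:ℝ≥0∞) :=
              (ENNReal.tsum_const_eq_top_of_ne_zero one_ne_zero).symm
          _ ≤ ∑' i : ℕ, (2:ℝ≥0∞)^i := ENNReal.tsum_le_tsum fun i => by
              calc (1:ℝ≥0∞) = 1^i := (one_pow i).symm
                _ ≤ 2^i := pow_le_pow_left' one_le_two i
      rw [htop2]
      exact le_top
    calc (∫⁻ t in Set.Ioc 0 x, f t ∂μ) = ν (Set.Ioc 0 x) :=
          (hν _ measurableSet_Ioc).symm
      _ ≤ ν (E ∩ Set.Ioc 0 x) + ((∑' nk : ℤ × ℕ, ν (T nk.1 nk.2 ∩ Set.Ioc 0 x))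
            + ∑' k : ℕ, ν (TZ k ∩ Set.Ioc 0 x)) := by
          refine le_trans (measure_mono hcover) ?_
          refine le_trans (measure_union_le _ _) ?_
          refine add_le_add le_rfl ?_
          refine le_trans (measure_union_le _ _) ?_
          exact add_le_add (measure_iUnion_le _) (measure_iUnion_le _)
      _ ≤ (∫⁻ t in Set.Ioc 0 x, gE t ∂μ) + ((∫⁻ t in Set.Ioc 0 x, g1 t ∂μ)
            + ∫⁻ t in Set.Ioc 0 x, gZ t ∂μ) := by
          refine add_le_add ?_ (add_le_add ?_ ?_)
          · rw [hgEdef]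
            rw [lintegral_indicator hEm, Measure.restrict_restrict hEm]
            exact le_of_eq (hν _ (hEm.inter measurableSet_Ioc))
          · simp only [hg1def]
            rw [lintegral_tsum fun nk => (hF1m nk).aemeasurable]
            exact ENNReal.tsum_le_tsum hterm1
          · simp only [hgZdef]
            rw [lintegral_tsum fun ki => (hFZm ki).aemeasurable, ENNReal.tsum_prod']
            exact ENNReal.tsum_le_tsum htermZ
      _ = ∫⁻ t in Set.Ioc 0 x, (gE t + g1 t + gZ t) ∂μ := by
          rw [lintegral_add_right _ hgZm, lintegral_add_right _ hg1m, add_assoc]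
  · -- cost bound
    set ν' := μ.withDensity (fun t => f t * W t) with hν'def
    have hν' : ∀ s : Set ℝ, MeasurableSet s → ν' s = ∫⁻ t in s, f t * W t ∂μ := fun s hs =>
      withDensity_apply _ hs
    have hsplit : (∫⁻ t in Set.Ioi (0:ℝ), (gE t + g1 t + gZ t) * v t ∂μ)
        = (∫⁻ t in Set.Ioi (0:ℝ), gE t * v t ∂μ) + (∫⁻ t in Set.Ioi (0:ℝ), g1 t * v t ∂μ)
          + ∫⁻ t in Set.Ioi (0:ℝ), gZ t * v t ∂μ := by
      simp_rw [add_mul]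
      rw [lintegral_add_right _ (show Measurable fun t => gZ t * v t from hgZm.mul hv),
        lintegral_add_right _ (show Measurable fun t => g1 t * v t from hg1m.mul hv)]
    have hcostE : (∫⁻ t in Set.Ioi (0:ℝ), gE t * v t ∂μ) ≤ ν' E := by
      have hpt : ∀ t, gE t * v t ≤ E.indicator (fun t => f t * W t) t := by
        intro t
        by_cases ht : t ∈ E
        · simp only [hgEdef, Set.indicator_of_mem ht]
          refine mul_le_mul_right ?_ _
          have : W t = ⊤ := ht.2
          rw [this]
          exact le_top
        · simp [hgEdef, Set.indicator_of_notMem ht]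
      calc (∫⁻ t in Set.Ioi (0:ℝ), gE t * v t ∂μ)
          ≤ ∫⁻ t in Set.Ioi (0:ℝ), E.indicator (fun t => f t * W t) t ∂μ :=
            lintegral_mono hpt
        _ = ν' E := by
            rw [lintegral_indicator hEm, Measure.restrict_restrict hEm,
              Set.inter_eq_self_of_subset_left (Set.inter_subset_left : E ⊆ Set.Ioi 0),
              hν' _ hEm]
    have hcost1 : (∫⁻ t in Set.Ioi (0:ℝ), g1 t * v t ∂μ)
        ≤ y * ∑' nk : ℤ × ℕ, ν' (T nk.1 nk.2) := by
      have h1 : (∫⁻ t in Set.Ioi (0:ℝ), g1 t * v t ∂μ)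
          = ∑' nk : ℤ × ℕ, ∫⁻ t in Set.Ioi (0:ℝ), F1 nk t * v t ∂μ := by
        simp only [hg1def]
        simp_rw [← ENNReal.tsum_mul_right]
        exact lintegral_tsum fun nk => ((hF1m nk).mul hv).aemeasurable
      rw [h1]
      have hterm : ∀ nk : ℤ × ℕ, (∫⁻ t in Set.Ioi (0:ℝ), F1 nk t * v t ∂μ)
          ≤ y * ν' (T nk.1 nk.2) := by
        rintro ⟨n, k⟩
        rcases (T n k).eq_empty_or_nonempty with hemp | hTne
        · have hm0 : m n k = 0 := by
            simp only [hmdef, hemp, Measure.restrict_empty, lintegral_zero_measure]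
          have hz : ∀ t, F1 (n,k) t * v t = 0 := by
            intro t
            simp [hF1def, hm0, ENNReal.zero_div]
          simp_rw [hz]
          simp
        · obtain ⟨hBsub, hBpos, hBfin, hBv⟩ := hBspec n k hTne
          have hstep1 : (∫⁻ t in Set.Ioi (0:ℝ), F1 (n,k) t * v t ∂μ)
              ≤ (m n k / μ (B n k)) * (y^(n+1) * μ (B n k)) := by
            simp only [hF1def]
            have hrw : ∀ t, (m n k / μ (B n k)) * (B n k).indicator (1:ℝ→ℝ≥0∞) t * v t
                = (m n k / μ (B n k)) * (B n k).indicator v t := by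
              intro t
              by_cases ht : t ∈ B n k
              · simp [Set.indicator_of_mem ht, mul_assoc]
              · simp [Set.indicator_of_notMem ht]
            simp_rw [hrw]
            rw [lintegral_const_mul _ (hv.indicator (hBmeas n k))]
            refine mul_le_mul_right ?_ _
            rw [lintegral_indicator (hBmeas n k), Measure.restrict_restrict (hBmeas n k)]
            calc (∫⁻ t in B n k ∩ Set.Ioi 0, v t ∂μ)
                ≤ ∫⁻ t in B n k ∩ Set.Ioi 0, y^(n+1) ∂μ :=
                  setLIntegral_mono measurable_const fun t ht => (hBv t ht.1).le
              _ = y^(n+1) * μ (B n k ∩ Set.Ioi 0) := by rw [setLIntegral_const]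
              _ ≤ y^(n+1) * μ (B n k) := mul_le_mul_right (measure_mono Set.inter_subset_left) _
          refine hstep1.trans ?_
          rw [mul_left_comm, ENNReal.div_mul_cancel hBpos.ne' hBfin.ne]
          have hν'T : y^n * m n k ≤ ν' (T n k) := by
            rw [hν' _ (hTmeas n k), hmdef]
            rw [← lintegral_const_mul _ hf]
            refine setLIntegral_mono (hf.mul (hWm.comp measurable_id)) ?_
            intro t ht
            have hWt : y^n ≤ W t := by
              have := (hTsub n k ht).2
              rw [Set.mem_preimage, Set.mem_Ico] at this
              exact this.1
            calc y^n * f t = f t * y^n := mul_comm _ _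
              _ ≤ f t * W t := mul_le_mul_right hWt _
          have hyy : y^(n+1) = y^n * y := by
            rw [ENNReal.zpow_add hy0 hytop n 1, zpow_one]
          calc y^(n+1) * m n k = y * (y^n * m n k) := by
                rw [hyy]
                ring
            _ ≤ y * ν' (T n k) := mul_le_mul_right hν'T _
      calc (∑' nk : ℤ × ℕ, ∫⁻ t in Set.Ioi (0:ℝ), F1 nk t * v t ∂μ)
          ≤ ∑' nk : ℤ × ℕ, y * ν' (T nk.1 nk.2) := ENNReal.tsum_le_tsum hterm
        _ = y * ∑' nk : ℤ × ℕ, ν' (T nk.1 nk.2) := ENNReal.tsum_mul_left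
    have hcostZ : (∫⁻ t in Set.Ioi (0:ℝ), gZ t * v t ∂μ) ≤ ε := by
      have h1 : (∫⁻ t in Set.Ioi (0:ℝ), gZ t * v t ∂μ)
          = ∑' ki : ℕ × ℕ, ∫⁻ t in Set.Ioi (0:ℝ), FZ ki t * v t ∂μ := by
        simp only [hgZdef]
        simp_rw [← ENNReal.tsum_mul_right]
        exact lintegral_tsum fun ki => ((hFZm ki).mul hv).aemeasurable
      rw [h1]
      have hterm : ∀ ki : ℕ × ℕ, (∫⁻ t in Set.Ioi (0:ℝ), FZ ki t * v t ∂μ)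
          ≤ (ε * 4⁻¹ * 2⁻¹^ki.1) * 2⁻¹^ki.2 := by
        rintro ⟨k, i⟩
        rcases (TZ k).eq_empty_or_nonempty with hemp | hTne
        · have hB0 : BZ k i = ∅ := hBZempty k i (by rw [hemp]; exact Set.not_nonempty_empty)
          have hz : ∀ t, FZ (k,i) t * v t = 0 := by
            intro t
            simp [hFZdef, hB0]
          simp_rw [hz]
          simp
        · obtain ⟨hBsub, hBpos, hBfin, hBv⟩ := hBZspec k i hTne
          have hstep1 : (∫⁻ t in Set.Ioi (0:ℝ), FZ (k,i) t * v t ∂μ)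
              ≤ ((2:ℝ≥0∞)^i / μ (BZ k i)) * (δ k i * μ (BZ k i)) := by
            simp only [hFZdef]
            have hrw : ∀ t, ((2:ℝ≥0∞)^i / μ (BZ k i)) * (BZ k i).indicator (1:ℝ→ℝ≥0∞) t * v t
                = ((2:ℝ≥0∞)^i / μ (BZ k i)) * (BZ k i).indicator v t := by
              intro t
              by_cases ht : t ∈ BZ k i
              · simp [Set.indicator_of_mem ht, mul_assoc]
              · simp [Set.indicator_of_notMem ht]
            simp_rw [hrw]
            rw [lintegral_const_mul _ (hv.indicator (hBZmeas k i))]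
            refine mul_le_mul_right ?_ _
            rw [lintegral_indicator (hBZmeas k i), Measure.restrict_restrict (hBZmeas k i)]
            calc (∫⁻ t in BZ k i ∩ Set.Ioi 0, v t ∂μ)
                ≤ ∫⁻ t in BZ k i ∩ Set.Ioi 0, δ k i ∂μ :=
                  setLIntegral_mono measurable_const fun t ht => (hBv t ht.1).le
              _ = δ k i * μ (BZ k i ∩ Set.Ioi 0) := by rw [setLIntegral_const]
              _ ≤ δ k i * μ (BZ k i) := mul_le_mul_right (measure_mono Set.inter_subset_left) _
          refine hstep1.trans ?_
          rw [mul_left_comm, ENNReal.div_mul_cancel hBpos.ne' hBfin.ne]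
          simp only [hδdef]
          rw [ENNReal.div_mul_cancel (pow_ne_zero i two_ne_zero)
            (ENNReal.pow_ne_top ENNReal.ofNat_ne_top)]
      calc (∑' ki : ℕ × ℕ, ∫⁻ t in Set.Ioi (0:ℝ), FZ ki t * v t ∂μ)
          ≤ ∑' ki : ℕ × ℕ, (ε * 4⁻¹ * 2⁻¹^ki.1) * 2⁻¹^ki.2 := ENNReal.tsum_le_tsum hterm
        _ = ε := by
          rw [ENNReal.tsum_prod']
          have hgeo : (∑' i : ℕ, ((2:ℝ≥0∞)⁻¹)^i) = 2 := by
            rw [ENNReal.tsum_geometric, ENNReal.one_sub_inv_two, inv_inv]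
          have hinner : ∀ k : ℕ, (∑' i : ℕ, (ε * 4⁻¹ * 2⁻¹^k) * 2⁻¹^i)
              = (ε * 4⁻¹ * 2) * 2⁻¹^k := by
            intro k
            rw [ENNReal.tsum_mul_left, hgeo]
            ring
          simp_rw [hinner]
          rw [ENNReal.tsum_mul_left, hgeo]
          have h4 : (4:ℝ≥0∞)⁻¹ * 2 * 2 = 1 := by
            rw [mul_assoc, show (2:ℝ≥0∞) * 2 = 4 by norm_num]
            exact ENNReal.inv_mul_cancel (by norm_num) (by norm_num)
          calc ε * 4⁻¹ * 2 * 2 = ε * (4⁻¹ * 2 * 2) := by ring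
            _ = ε := by rw [h4, mul_one]
    -- pairwise disjointness of all the main cells
    have hpairT : Pairwise (Function.onFun Disjoint fun nk : ℤ × ℕ => T nk.1 nk.2) := by
      rintro ⟨n, k⟩ ⟨n', k'⟩ hne
      rcases eq_or_ne n n' with rfl | hnn
      · have hkk : k ≠ k' := fun h => hne (by rw [h])
        exact hTdisj n hkk
      · have key : ∀ a b : ℤ, a < b → Disjoint (I a) (I b) := by
          intro a b hab
          rw [Set.disjoint_left]
          rintro t ⟨_, ht1⟩ ⟨_, ht2⟩
          rw [Set.mem_preimage, Set.mem_Ico] at ht1 ht2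
          exact absurd (lt_of_lt_of_le ht1.2
            (ENNReal.zpow_le_of_le hy1.le (by omega))) (not_lt.2 ht2.1)
        have hd : Disjoint (I n) (I n') :=
          hnn.lt_or_gt.elim (key n n') (fun h => (key n' n h).symm)
        exact hd.mono (hTsub n k) (hTsub n' k')
    have hdisjE : Disjoint E (⋃ nk : ℤ × ℕ, T nk.1 nk.2) := by
      rw [Set.disjoint_left]
      rintro t ⟨_, ht⟩ htU
      obtain ⟨nk, hnk⟩ := Set.mem_iUnion.1 htU
      have h2 := (hTsub nk.1 nk.2 hnk).2
      rw [Set.mem_preimage, Set.mem_Ico] at h2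
      rw [Set.mem_preimage, Set.mem_singleton_iff] at ht
      rw [ht] at h2
      exact absurd h2.2 (not_lt.2 le_top)
    have hsum_le : ν' E + (∑' nk : ℤ × ℕ, ν' (T nk.1 nk.2))
        ≤ ∫⁻ t in Set.Ioi (0:ℝ), f t * W t ∂μ := by
      rw [← measure_iUnion hpairT (fun nk => hTmeas nk.1 nk.2)]
      rw [← measure_union hdisjE (MeasurableSet.iUnion fun nk => hTmeas nk.1 nk.2)]
      have hsub : E ∪ (⋃ nk : ℤ × ℕ, T nk.1 nk.2) ⊆ Set.Ioi 0 :=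
        Set.union_subset Set.inter_subset_left
          (Set.iUnion_subset fun nk => (hTsub nk.1 nk.2).trans Set.inter_subset_left)
      calc ν' (E ∪ ⋃ nk : ℤ × ℕ, T nk.1 nk.2) ≤ ν' (Set.Ioi 0) := measure_mono hsub
        _ = _ := hν' _ measurableSet_Ioi
    calc (∫⁻ t in Set.Ioi (0:ℝ), (gE t + g1 t + gZ t) * v t ∂μ)
        = (∫⁻ t in Set.Ioi (0:ℝ), gE t * v t ∂μ) + (∫⁻ t in Set.Ioi (0:ℝ), g1 t * v t ∂μ)
          + ∫⁻ t in Set.Ioi (0:ℝ), gZ t * v t ∂μ := hsplit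
      _ ≤ (ν' E + y * ∑' nk : ℤ × ℕ, ν' (T nk.1 nk.2)) + ε :=
          add_le_add (add_le_add hcostE hcost1) hcostZ
      _ ≤ y * (ν' E + ∑' nk : ℤ × ℕ, ν' (T nk.1 nk.2)) + ε := by
          rw [mul_add]
          exact add_le_add_left (add_le_add (le_mul_of_one_le_left zero_le hy1.le) le_rfl) ε
      _ ≤ y * (∫⁻ t in Set.Ioi (0:ℝ), f t * W t ∂μ) + ε :=
          add_le_add_left (mul_le_mul_right hsum_le y) ε


/-- Sinnamon's level-function identity for the Hardy operator:
the infimum of `∫ g v dμ` over all nonnegative measurable `g` with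
`Hg ≥ Hf` equals `∫ f v↓ dμ`, where `v↓(x) = ess inf_{0<t≤x} v(t)`. -/
theorem inf_over_Hardy_majorants_eq_lintegral_decreasing_minorant
    (μ : Measure ℝ) [SigmaFinite μ] (v f : ℝ → ℝ≥0∞)
    (hv : Measurable v) (hf : Measurable f) :
    (⨅ (g : ℝ → ℝ≥0∞) (_ : Measurable g)
        (_ : ∀ x > (0 : ℝ), (∫⁻ t in Set.Ioc 0 x, f t ∂μ) ≤ ∫⁻ t in Set.Ioc 0 x, g t ∂μ),
        ∫⁻ t in Set.Ioi (0 : ℝ), g t * v t ∂μ)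
      = ∫⁻ t in Set.Ioi (0 : ℝ), f t * essInf v (μ.restrict (Set.Ioc 0 t)) ∂μ := by
  have hrw : (∫⁻ t in Set.Ioi (0 : ℝ), f t * essInf v (μ.restrict (Set.Ioc 0 t)) ∂μ)
      = ∫⁻ t in Set.Ioi (0 : ℝ), f t * Wfn μ v t ∂μ := rfl
  rw [hrw]
  set C := ∫⁻ t in Set.Ioi (0:ℝ), f t * Wfn μ v t ∂μ with hCdef
  apply le_antisymm
  · -- the infimum is at most C
    rcases eq_or_ne C ⊤ with htop | htop
    · rw [htop]; exact le_top
    apply ENNReal.le_of_forall_pos_le_add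
    intro ε' hε' _
    have hε0 : ((ε' : ℝ≥0∞) / 2) ≠ 0 :=
      ENNReal.div_ne_zero.2 ⟨ENNReal.coe_ne_zero.2 hε'.ne', ENNReal.ofNat_ne_top⟩
    have hC1 : C + 1 ≠ ⊤ := ENNReal.add_ne_top.2 ⟨htop, ENNReal.one_ne_top⟩
    have hC10 : C + 1 ≠ 0 := by
      intro h
      have : (1:ℝ≥0∞) ≤ C + 1 := le_add_self
      rw [h] at this
      exact absurd this (by simp)
    set η : ℝ≥0∞ := ((ε' : ℝ≥0∞) / 2) / (C + 1) with hηdef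
    have hη0 : η ≠ 0 := (ENNReal.div_pos hε0 hC1).ne'
    have hηtop : η ≠ ⊤ :=
      (ENNReal.div_lt_top (ENNReal.div_lt_top ENNReal.coe_ne_top two_ne_zero).ne
        hC10).ne
    have hy1 : (1:ℝ≥0∞) < 1 + η := ENNReal.lt_add_right ENNReal.one_ne_top hη0
    have hytop : (1:ℝ≥0∞) + η ≠ ⊤ := ENNReal.add_ne_top.2 ⟨ENNReal.one_ne_top, hηtop⟩
    obtain ⟨g, hgm, hgadm, hgcost⟩ :=
      dirB μ v f hv hf (1 + η) hy1 hytop ((ε' : ℝ≥0∞) / 2) hε0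
    have hinf_le : (⨅ (g : ℝ → ℝ≥0∞) (_ : Measurable g)
        (_ : ∀ x > (0 : ℝ), (∫⁻ t in Set.Ioc 0 x, f t ∂μ) ≤ ∫⁻ t in Set.Ioc 0 x, g t ∂μ),
        ∫⁻ t in Set.Ioi (0 : ℝ), g t * v t ∂μ)
        ≤ ∫⁻ t in Set.Ioi (0 : ℝ), g t * v t ∂μ :=
      iInf_le_of_le g (iInf_le_of_le hgm (iInf_le _ hgadm))
    refine hinf_le.trans (hgcost.trans ?_)
    have hηC : η * C ≤ (ε' : ℝ≥0∞) / 2 := by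
      calc η * C ≤ η * (C + 1) := mul_le_mul_right le_self_add η
        _ = (ε' : ℝ≥0∞) / 2 := by
          rw [hηdef, ENNReal.div_mul_cancel hC10 hC1]
    calc (1 + η) * C + (ε' : ℝ≥0∞) / 2 = C + (η * C + (ε' : ℝ≥0∞) / 2) := by
          rw [add_mul, one_mul, add_assoc]
      _ ≤ C + ((ε' : ℝ≥0∞) / 2 + (ε' : ℝ≥0∞) / 2) :=
          add_le_add le_rfl (add_le_add hηC le_rfl)
      _ = C + ε' := by rw [ENNReal.add_halves]
  · -- C is a lower bound
    refine le_iInf fun g => le_iInf fun hgm => le_iInf fun hadm => ?_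
    calc C ≤ ∫⁻ t in Set.Ioi (0:ℝ), g t * Wfn μ v t ∂μ := dirA μ v f g hf hgm hadm
      _ ≤ ∫⁻ t in Set.Ioi (0:ℝ), g t * v t ∂μ := by
        refine lintegral_mono_ae ?_
        filter_upwards [ae_Wfn_le μ v] with t ht
        exact mul_le_mul_right ht (g t)
end

section
/- For any weight v on (0,∞) and nonnegative measurable f, the greatest non-decreasing minorant v↑(x) = ess inf_{x≤t<∞} v(t) satisfies: inf over all nonnegative measurable g with ∫_{[x,∞)} g dμ ≥ ∫_{[x,∞)} f dμ for all x > 0, of ∫ g v dμ, equals ∫ f v↑ dμ. -/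
open MeasureTheory ENNReal Set
open scoped NNReal

namespace SinnamonAux

variable (μ : Measure ℝ) (v : ℝ → ℝ≥0∞)

/-- The greatest nondecreasing minorant `v↑`. -/
noncomputable def W (t : ℝ) : ℝ≥0∞ := essInf v (μ.restrict (Set.Ici t))

/-- Admissibility: `H* g ≥ H* f` on `(0, ∞)`. -/
def Adm (f g : ℝ → ℝ≥0∞) : Prop :=
  ∀ x > (0 : ℝ), (∫⁻ t in Set.Ici x, f t ∂μ) ≤ ∫⁻ t in Set.Ici x, g t ∂μ

/-- Near-optimality predicate used in the `≤` direction. -/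
def OK (f : ℝ → ℝ≥0∞) : Prop :=
  ∀ ε δ : ℝ≥0∞, ε ≠ 0 → ε ≠ ⊤ → δ ≠ 0 → δ ≠ ⊤ →
    ∃ g : ℝ → ℝ≥0∞, Measurable g ∧ Adm μ f g ∧
      (∫⁻ t in Set.Ioi (0:ℝ), g t * v t ∂μ)
        ≤ (1 + ε) * (∫⁻ t in Set.Ioi (0:ℝ), f t * W μ v t ∂μ) + δ

lemma W_mono : Monotone (W μ v) := by
  intro s t hst
  exact essInf_antitone_measure
    (Measure.absolutelyContinuous_of_le (Measure.restrict_mono (Ici_subset_Ici.2 hst) le_rfl))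

lemma W_meas : Measurable (W μ v) := (W_mono μ v).measurable

lemma lint_ind (c : ℝ≥0∞) {E : Set ℝ} (hE : MeasurableSet E) (s : Set ℝ) :
    ∫⁻ t in s, E.indicator (fun _ => c) t ∂μ = c * μ (E ∩ s) := by
  rw [lintegral_indicator hE, Measure.restrict_restrict hE, setLIntegral_const]

lemma lint_ind_mul (h : ℝ → ℝ≥0∞) (c : ℝ≥0∞) {E : Set ℝ} (hE : MeasurableSet E) (s : Set ℝ) :
    ∫⁻ t in s, E.indicator (fun _ => c) t * h t ∂μ = ∫⁻ t in E ∩ s, c * h t ∂μ := by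
  have heq : ∀ t, E.indicator (fun _ => c) t * h t = E.indicator (fun u => c * h u) t := by
    intro t; by_cases ht : t ∈ E <;> simp [ht]
  simp_rw [heq]
  rw [lintegral_indicator hE, Measure.restrict_restrict hE]

lemma null_of_right_null (A : Set ℝ) (h : ∀ t0 ∈ A, μ (A ∩ Ici t0) = 0) : μ A = 0 := by
  rcases A.eq_empty_or_nonempty with rfl | hne
  · simp
  by_cases hbd : BddBelow A
  · set i := sInf A with hidef
    by_cases hiA : i ∈ A
    · exact measure_mono_null (show A ⊆ A ∩ Ici i from fun t ht => ⟨ht, csInf_le hbd ht⟩) (h i hiA)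
    · have hs : ∀ n : ℕ, ∃ s ∈ A, s < i + 1 / (n + 1) := by
        intro n
        refine (csInf_lt_iff hbd hne).1 ?_
        have : (0:ℝ) < 1 / (n + 1) := by positivity
        linarith
      choose s hsA hslt using hs
      have hsub : A ⊆ ⋃ n, A ∩ Ici (s n) := by
        intro t ht
        have hti : i < t := lt_of_le_of_ne (csInf_le hbd ht) (by rintro rfl; exact hiA ht)
        obtain ⟨n, hn⟩ := exists_nat_one_div_lt (sub_pos.2 hti)
        have := hslt n
        exact mem_iUnion.2 ⟨n, ht, by simp only [mem_Ici]; linarith⟩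
      exact measure_mono_null hsub (measure_iUnion_null fun n => h (s n) (hsA n))
  · have hs : ∀ n : ℕ, ∃ s ∈ A, s < -(n:ℝ) := by
      intro n
      obtain ⟨y, hy, hy'⟩ := not_bddBelow_iff.1 hbd (-(n:ℝ))
      exact ⟨y, hy, hy'⟩
    choose s hsA hslt using hs
    have hsub : A ⊆ ⋃ n, A ∩ Ici (s n) := by
      intro t ht
      obtain ⟨n, hn⟩ := exists_nat_ge (-t)
      have := hslt n
      exact mem_iUnion.2 ⟨n, ht, by simp only [mem_Ici]; linarith⟩
    exact measure_mono_null hsub (measure_iUnion_null fun n => h (s n) (hsA n))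

lemma ae_W_le (hv : Measurable v) : ∀ᵐ t ∂μ, W μ v t ≤ v t := by
  have hWm := W_meas μ v
  rw [ae_iff]
  have hsub : {t | ¬ W μ v t ≤ v t} ⊆
      ⋃ q : ℚ, {t | v t < (Real.toNNReal q : ℝ≥0∞) ∧ (Real.toNNReal q : ℝ≥0∞) ≤ W μ v t} := by
    intro t ht
    simp only [mem_setOf_eq, not_le] at ht
    obtain ⟨q, _, h1, h2⟩ := ENNReal.lt_iff_exists_rat_btwn.1 ht
    exact mem_iUnion.2 ⟨q, h1, h2.le⟩
  refine measure_mono_null hsub (measure_iUnion_null fun q => ?_)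
  set A := {t | v t < (Real.toNNReal q : ℝ≥0∞) ∧ (Real.toNNReal q : ℝ≥0∞) ≤ W μ v t} with hA
  have hAm : MeasurableSet A :=
    (hv measurableSet_Iio).inter (hWm measurableSet_Ici)
  refine null_of_right_null μ A (fun t0 ht0 => ?_)
  have h1 : ∀ᵐ x ∂μ.restrict (Ici t0), W μ v t0 ≤ v x := ae_essInf_le
  have h2 : ∀ᵐ x ∂μ.restrict (Ici t0), x ∉ A := by
    filter_upwards [h1] with x hx hxA
    exact absurd (lt_of_lt_of_le hxA.1 (le_trans ht0.2 hx)) (lt_irrefl _)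
  have h3 : μ.restrict (Ici t0) A = 0 := by
    have := ae_iff.1 h2
    simpa using this
  rw [Measure.restrict_apply hAm] at h3
  exact h3

lemma layer (c : ℝ≥0∞) :
    (∫⁻ l in Ioi (0:ℝ), (if ENNReal.ofReal l < c then (1:ℝ≥0∞) else 0)) = c := by
  have hmeas : MeasurableSet {l : ℝ | ENNReal.ofReal l < c} :=
    measurableSet_lt ENNReal.measurable_ofReal measurable_const
  have heq : (fun l : ℝ => if ENNReal.ofReal l < c then (1:ℝ≥0∞) else 0)
      = {l : ℝ | ENNReal.ofReal l < c}.indicator (fun _ => 1) := by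
    funext l; by_cases h : ENNReal.ofReal l < c <;> simp [h]
  rw [heq, lintegral_indicator hmeas, Measure.restrict_restrict hmeas, setLIntegral_const,
    one_mul]
  rcases eq_or_ne c ⊤ with rfl | hc
  · have h2 : {l : ℝ | ENNReal.ofReal l < ⊤} ∩ Ioi 0 = Ioi (0:ℝ) := by
      ext l; simp [ofReal_lt_top]
    rw [h2, Real.volume_Ioi]
  · have h2 : {l : ℝ | ENNReal.ofReal l < c} ∩ Ioi 0 = Ioo 0 c.toReal := by
      ext l
      simp only [mem_inter_iff, mem_setOf_eq, mem_Ioi, mem_Ioo]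
      constructor
      · rintro ⟨h1, h2⟩
        exact ⟨h2, (ENNReal.ofReal_lt_iff_lt_toReal h2.le hc).1 h1⟩
      · rintro ⟨h1, h2⟩
        exact ⟨(ENNReal.ofReal_lt_iff_lt_toReal h1.le hc).2 h2, h1⟩
    rw [h2, Real.volume_Ioo, sub_zero, ENNReal.ofReal_toReal hc]

lemma lint_Ioi (a : ℝ) {h : ℝ → ℝ≥0∞} (hh : Measurable h) :
    ∫⁻ t in Ioi a, h t ∂μ = ⨆ n : ℕ, ∫⁻ t in Ici (a + 1 / (n + 1)), h t ∂μ := by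
  have hmono : Monotone (fun n : ℕ => (Ici (a + 1 / ((n:ℝ) + 1))).indicator h) := by
    intro m n hmn
    refine indicator_le_indicator_of_subset (Ici_subset_Ici.2 ?_) (fun t => zero_le)
    have h1 : (1:ℝ)/((n:ℝ)+1) ≤ 1/((m:ℝ)+1) := by
      apply one_div_le_one_div_of_le
      · positivity
      · exact_mod_cast by exact_mod_cast Nat.add_le_add_right hmn 1
    linarith
  have hpt : ∀ t, (Ioi a).indicator h t = ⨆ n : ℕ, (Ici (a + 1 / ((n:ℝ) + 1))).indicator h t := by
    intro t
    by_cases ht : a < t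
    · rw [indicator_of_mem (show t ∈ Ioi a from ht)]
      refine le_antisymm ?_ ?_
      · obtain ⟨n, hn⟩ := exists_nat_one_div_lt (sub_pos.2 ht)
        refine le_iSup_of_le n ?_
        rw [indicator_of_mem (show t ∈ Ici (a + 1/((n:ℝ)+1)) from by
          simp only [mem_Ici]; linarith)]
      · refine iSup_le fun n => ?_
        by_cases h' : t ∈ Ici (a + 1/((n:ℝ)+1))
        · rw [indicator_of_mem h']
        · rw [indicator_of_notMem h']; exact zero_le
    · rw [indicator_of_notMem (show t ∉ Ioi a from ht)]
      symm
      rw [le_antisymm_iff]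
      constructor
      · refine iSup_le fun n => ?_
        rw [indicator_of_notMem (show t ∉ Ici (a + 1/((n:ℝ)+1)) from by
          simp only [mem_Ici, not_le]
          have h1 : (0:ℝ) < 1/((n:ℝ)+1) := by positivity
          push_neg at ht
          linarith)]
      · exact zero_le
  calc ∫⁻ t in Ioi a, h t ∂μ
      = ∫⁻ t, (Ioi a).indicator h t ∂μ := (lintegral_indicator measurableSet_Ioi h).symm
    _ = ∫⁻ t, ⨆ n : ℕ, (Ici (a + 1 / ((n:ℝ) + 1))).indicator h t ∂μ := lintegral_congr hpt
    _ = ⨆ n : ℕ, ∫⁻ t, (Ici (a + 1 / ((n:ℝ) + 1))).indicator h t ∂μ :=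
        lintegral_iSup (fun n => hh.indicator measurableSet_Ici) hmono
    _ = ⨆ n : ℕ, ∫⁻ t in Ici (a + 1 / ((n:ℝ) + 1)), h t ∂μ := by
        simp_rw [lintegral_indicator measurableSet_Ici]

lemma upset_le {f g : ℝ → ℝ≥0∞} (hf : Measurable f) (hg : Measurable g)
    (hadm : Adm μ f g) {U : Set ℝ} (hU : ∀ ⦃s t : ℝ⦄, s ∈ U → s ≤ t → t ∈ U) :
    ∫⁻ t in U ∩ Ioi 0, f t ∂μ ≤ ∫⁻ t in U ∩ Ioi 0, g t ∂μ := by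
  rcases (U ∩ Ioi 0).eq_empty_or_nonempty with he | hne
  · rw [he]; simp
  have hbd : BddBelow (U ∩ Ioi 0) := ⟨0, fun t ht => ht.2.le⟩
  set i := sInf (U ∩ Ioi 0) with hidef
  have hi0 : 0 ≤ i := le_csInf hne fun t ht => ht.2.le
  by_cases hiU : i ∈ U ∩ Ioi 0
  · have hS : U ∩ Ioi 0 = Ici i := by
      apply Subset.antisymm
      · exact fun t ht => csInf_le hbd ht
      · exact fun t ht => ⟨hU hiU.1 ht, mem_Ioi.2 (lt_of_lt_of_le (mem_Ioi.1 hiU.2) (mem_Ici.1 ht))⟩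
    rw [hS]
    exact hadm i hiU.2
  · have hS : U ∩ Ioi 0 = Ioi i := by
      apply Subset.antisymm
      · intro t ht
        exact mem_Ioi.2 (lt_of_le_of_ne (csInf_le hbd ht) (by rintro rfl; exact hiU ht))
      · intro t ht
        obtain ⟨s, hs, hst⟩ := (csInf_lt_iff hbd hne).1 (mem_Ioi.1 ht)
        exact ⟨hU hs.1 hst.le, mem_Ioi.2 (lt_trans (mem_Ioi.1 hs.2) hst)⟩
    rw [hS, lint_Ioi μ i hf, lint_Ioi μ i hg]
    refine iSup_mono fun n => hadm _ ?_
    have h1 : (0:ℝ) < 1/((n:ℝ)+1) := by positivity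
    linarith

lemma ge_dir [SigmaFinite μ] {f g : ℝ → ℝ≥0∞} (hf : Measurable f) (hg : Measurable g)
    (hadm : Adm μ f g) :
    ∫⁻ t in Ioi (0:ℝ), f t * W μ v t ∂μ ≤ ∫⁻ t in Ioi (0:ℝ), g t * W μ v t ∂μ := by
  have hWm := W_meas μ v
  have key : ∀ (h : ℝ → ℝ≥0∞), Measurable h →
      (∫⁻ t in Ioi (0:ℝ), h t * W μ v t ∂μ)
        = ∫⁻ l in Ioi (0:ℝ), (∫⁻ t in {t : ℝ | ENNReal.ofReal l < W μ v t} ∩ Ioi 0, h t ∂μ) ∂volume := by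
    intro h hh
    have hFmeas : Measurable (fun p : ℝ × ℝ =>
        if ENNReal.ofReal p.2 < W μ v p.1 then h p.1 else 0) := by
      refine Measurable.ite ?_ (hh.comp measurable_fst) measurable_const
      exact measurableSet_lt (ENNReal.measurable_ofReal.comp measurable_snd)
        (hWm.comp measurable_fst)
    have step1 : (∫⁻ t in Ioi (0:ℝ), h t * W μ v t ∂μ)
        = ∫⁻ t in Ioi (0:ℝ), (∫⁻ l in Ioi (0:ℝ),
            (if ENNReal.ofReal l < W μ v t then h t else 0) ∂volume) ∂μ := by
      refine lintegral_congr fun t => ?_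
      have heq : ∀ l : ℝ, (if ENNReal.ofReal l < W μ v t then h t else 0)
          = h t * (if ENNReal.ofReal l < W μ v t then 1 else 0) := by
        intro l; by_cases hl : ENNReal.ofReal l < W μ v t <;> simp [hl]
      simp_rw [heq]
      rw [lintegral_const_mul _ (Measurable.ite
        (measurableSet_lt ENNReal.measurable_ofReal measurable_const)
        measurable_const measurable_const), layer]
    have step2 : (∫⁻ t in Ioi (0:ℝ), (∫⁻ l in Ioi (0:ℝ),
            (if ENNReal.ofReal l < W μ v t then h t else 0) ∂volume) ∂μ)
        = ∫⁻ l in Ioi (0:ℝ), (∫⁻ t in Ioi (0:ℝ),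
            (if ENNReal.ofReal l < W μ v t then h t else 0) ∂μ) ∂volume :=
      lintegral_lintegral_swap hFmeas.aemeasurable
    refine step1.trans (step2.trans (lintegral_congr fun l => ?_))
    have hUm : MeasurableSet {t : ℝ | ENNReal.ofReal l < W μ v t} := hWm measurableSet_Ioi
    rw [← Measure.restrict_restrict hUm, ← lintegral_indicator hUm]
    refine lintegral_congr fun t => ?_
    by_cases h' : ENNReal.ofReal l < W μ v t
    · rw [indicator_of_mem (show t ∈ {t : ℝ | ENNReal.ofReal l < W μ v t} from h')]
      exact if_pos h'
    · rw [indicator_of_notMem (show t ∉ {t : ℝ | ENNReal.ofReal l < W μ v t} from h')]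
      exact if_neg h'
  rw [key f hf, key g hg]
  refine lintegral_mono fun l => ?_
  exact upset_le μ hf hg hadm (fun s t hs hst => lt_of_lt_of_le hs (W_mono μ v hst))

lemma ge_direction (hv : Measurable v) [SigmaFinite μ] {f g : ℝ → ℝ≥0∞}
    (hf : Measurable f) (hg : Measurable g) (hadm : Adm μ f g) :
    ∫⁻ t in Ioi (0:ℝ), f t * W μ v t ∂μ ≤ ∫⁻ t in Ioi (0:ℝ), g t * v t ∂μ := by
  refine le_trans (ge_dir μ v hf hg hadm) ?_
  refine lintegral_mono_ae ?_
  have h0 : ∀ᵐ t ∂(μ.restrict (Ioi 0)), W μ v t ≤ v t := ae_restrict_of_ae (ae_W_le μ v hv)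
  filter_upwards [h0] with t ht
  exact mul_le_mul_right ht _

lemma base [SigmaFinite μ] (hv : Measurable v) (c : ℝ≥0∞) (hc : c ≠ ⊤)
    {E : Set ℝ} (hE : MeasurableSet E) (hE0 : E ⊆ Ioi 0)
    {β : ℝ≥0∞} (hβ : ∀ t ∈ E, W μ v t < β) :
    ∃ g : ℝ → ℝ≥0∞, Measurable g ∧ Adm μ (E.indicator fun _ => c) g ∧
      (∫⁻ t in Ioi (0:ℝ), g t * v t ∂μ) ≤ β * (c * μ E) := by
  classical
  set F : Set ℝ := {s | v s < β} with hFdef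
  have hF : MeasurableSet F := hv measurableSet_Iio
  have key : ∀ t ∈ E \ F, ∃ q : ℚ, t < (q:ℝ) ∧ μ (F ∩ Ici ((q:ℝ))) ≠ 0 := by
    intro t ht
    have h1 : μ (F ∩ Ici t) ≠ 0 := by
      intro h0
      have hae : (fun _ : ℝ => β) ≤ᵐ[μ.restrict (Ici t)] v := by
        have : ∀ᵐ x ∂μ.restrict (Ici t), β ≤ v x := by
          rw [ae_iff]
          have hss : {x | ¬ β ≤ v x} = F := by
            ext x; simp [hFdef, not_le]
          rw [hss, Measure.restrict_apply hF]
          exact h0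
        exact this
      have hle : β ≤ W μ v t := le_essInf_of_ae_le β hae
      exact absurd (hβ t ht.1) (not_lt.2 hle)
    have h2 : F ∩ Ici t = F ∩ Ioi t := by
      ext s
      constructor
      · rintro ⟨hsF, hst⟩
        rcases eq_or_lt_of_le (mem_Ici.1 hst) with rfl | hlt
        · exact absurd hsF ht.2
        · exact ⟨hsF, mem_Ioi.2 hlt⟩
      · rintro ⟨hsF, hst⟩; exact ⟨hsF, mem_Ici.2 (mem_Ioi.1 hst).le⟩
    by_contra hcon
    push_neg at hcon
    apply h1
    rw [h2]
    have hsub : F ∩ Ioi t ⊆ ⋃ q : ℚ, (if t < (q:ℝ) then F ∩ Ici ((q:ℝ)) else ∅) := by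
      rintro s ⟨hsF, hst⟩
      obtain ⟨q, hq1, hq2⟩ := exists_rat_btwn (mem_Ioi.1 hst)
      refine mem_iUnion.2 ⟨q, ?_⟩
      rw [if_pos hq1]
      exact ⟨hsF, mem_Ici.2 hq2.le⟩
    refine measure_mono_null hsub (measure_iUnion_null fun q => ?_)
    split_ifs with h
    · exact hcon q h
    · exact measure_empty
  let e : ℕ → ℚ := fun n => (Denumerable.eqv ℚ).symm n
  have he : Function.Surjective e := (Denumerable.eqv ℚ).symm.surjective
  set A : ℚ → Set ℝ := fun q => if μ (F ∩ Ici ((q:ℝ))) ≠ 0 then (E \ F) ∩ Iio ((q:ℝ)) else ∅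
    with hAdef
  have hAm : ∀ q, MeasurableSet (A q) := by
    intro q
    rw [hAdef]
    dsimp only
    split_ifs with h
    · exact (hE.diff hF).inter measurableSet_Iio
    · exact MeasurableSet.empty
  have hcover : ⋃ n, A (e n) = E \ F := by
    rw [he.iUnion_comp]
    apply Subset.antisymm
    · refine iUnion_subset fun q => ?_
      rw [hAdef]
      dsimp only
      split_ifs with h
      · exact inter_subset_left
      · exact empty_subset _
    · intro t ht
      obtain ⟨q, hq1, hq2⟩ := key t ht
      refine mem_iUnion.2 ⟨q, ?_⟩
      rw [hAdef]
      dsimp only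
      rw [if_pos hq2]
      exact ⟨ht, hq1⟩
  set B : ℕ → Set ℝ := disjointed (fun n => A (e n)) with hBdef
  have hBm : ∀ n, MeasurableSet (B n) := MeasurableSet.disjointed (fun n => hAm (e n))
  have hBd : Pairwise (Function.onFun Disjoint B) := disjoint_disjointed _
  have hBU : ⋃ n, B n = E \ F := by rw [hBdef, iUnion_disjointed]; exact hcover
  have hBsub : ∀ n, B n ⊆ A (e n) := fun n => disjointed_subset _ n
  have hBE : ∀ n, B n ⊆ E \ F := by
    intro n t ht
    rw [← hBU]; exact mem_iUnion.2 ⟨n, ht⟩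
  have hSex : ∀ n, ∃ Sn : Set ℝ, MeasurableSet Sn ∧ Sn ⊆ F ∧
      (∀ x : ℝ, (B n ∩ Ici x).Nonempty → Sn ⊆ Ici x) ∧
      (B n = ∅ ∨ (μ Sn ≠ 0 ∧ μ Sn ≠ ⊤)) := by
    intro n
    by_cases hq : μ (F ∩ Ici (((e n : ℚ)):ℝ)) ≠ 0
    · obtain ⟨Sn, hSm, hSsub, hS0, hStop⟩ :=
        Measure.exists_subset_measure_lt_top (hF.inter measurableSet_Ici)
          (pos_iff_ne_zero.2 hq)
      refine ⟨Sn, hSm, fun x hx => (hSsub hx).1, ?_, Or.inr ⟨hS0.ne', hStop.ne⟩⟩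
      rintro x ⟨t, htB, htx⟩
      have htA := hBsub n htB
      rw [hAdef] at htA
      dsimp only at htA
      rw [if_pos hq] at htA
      intro s hsS
      have h3 : (((e n : ℚ)):ℝ) ≤ s := (hSsub hsS).2
      have h4 : t < (((e n : ℚ)):ℝ) := htA.2
      have h5 : x ≤ t := htx
      simp only [mem_Ici]
      linarith
    · refine ⟨∅, MeasurableSet.empty, empty_subset _, ?_, Or.inl ?_⟩
      · rintro x ⟨t, htB, -⟩
        have := hBsub n htB
        rw [hAdef] at this
        dsimp only at this
        rw [if_neg hq] at this
        exact absurd this (notMem_empty t)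
      · have hAe : A (e n) = ∅ := by rw [hAdef]; dsimp only; rw [if_neg hq]
        exact eq_empty_of_subset_empty (hAe ▸ hBsub n)
  choose Sn hSm hSF hSx hSalt using hSex
  set coef : ℕ → ℝ≥0∞ := fun n => c * μ (B n) / μ (Sn n) with hcoef
  set g1 : ℝ → ℝ≥0∞ := (E ∩ F).indicator (fun _ => c) with hg1
  set gn : ℕ → ℝ → ℝ≥0∞ := fun n => (Sn n).indicator (fun _ => coef n) with hgn
  have hg1m : Measurable g1 := measurable_const.indicator (hE.inter hF)
  have hgnm : ∀ n, Measurable (gn n) := fun n => measurable_const.indicator (hSm n)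
  refine ⟨fun t => g1 t + ∑' n, gn n t,
    hg1m.add (Measurable.ennreal_tsum hgnm), ?_, ?_⟩
  · intro x hx
    rw [lint_ind μ c hE]
    have hsplit : μ (E ∩ Ici x) = μ (E ∩ F ∩ Ici x) + ∑' n, μ (B n ∩ Ici x) := by
      have h1 : E ∩ Ici x = (E ∩ F ∩ Ici x) ∪ (⋃ n, B n ∩ Ici x) := by
        rw [← iUnion_inter, hBU]
        ext t
        constructor
        · rintro ⟨htE, htx⟩
          by_cases htF : t ∈ F
          · exact Or.inl ⟨⟨htE, htF⟩, htx⟩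
          · exact Or.inr ⟨⟨htE, htF⟩, htx⟩
        · rintro (⟨⟨h1, -⟩, h2⟩ | ⟨⟨h1, -⟩, h2⟩) <;> exact ⟨h1, h2⟩
      have hdis : Disjoint (E ∩ F ∩ Ici x) (⋃ n, B n ∩ Ici x) := by
        rw [disjoint_left]
        intro t ht hts
        obtain ⟨n, htn⟩ := mem_iUnion.1 hts
        exact (hBE n htn.1).2 ht.1.2
      rw [h1, measure_union hdis ((MeasurableSet.iUnion
        (fun n => (hBm n).inter measurableSet_Ici))),
        measure_iUnion (fun m n hmn => ((hBd hmn).mono inter_subset_left inter_subset_left))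
          (fun n => (hBm n).inter measurableSet_Ici)]
    have hrhs : (∫⁻ t in Ici x, (g1 t + ∑' n, gn n t) ∂μ)
        = c * μ (E ∩ F ∩ Ici x) + ∑' n, coef n * μ (Sn n ∩ Ici x) := by
      rw [lintegral_add_left hg1m, lintegral_tsum (fun n => (hgnm n).aemeasurable)]
      congr 1
      · exact lint_ind μ c (hE.inter hF) _
      · exact tsum_congr fun n => lint_ind μ (coef n) (hSm n) _
    rw [hrhs, hsplit, mul_add, ← ENNReal.tsum_mul_left]
    refine add_le_add le_rfl (ENNReal.tsum_le_tsum fun n => ?_)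
    rcases (B n ∩ Ici x).eq_empty_or_nonempty with hBe | hBne
    · rw [hBe, measure_empty, mul_zero]; exact zero_le
    · have hSsub := hSx n x hBne
      rw [inter_eq_left.2 hSsub]
      rcases hSalt n with hB0 | ⟨hS0, hStop⟩
      · rcases hBne with ⟨t, ht⟩
        rw [hB0] at ht
        exact absurd ht.1 (notMem_empty t)
      · rw [hcoef]
        dsimp only
        rw [ENNReal.div_mul_cancel hS0 hStop]
        exact mul_le_mul_right (measure_mono inter_subset_left) c
  · have hcost1 : (∫⁻ t in Ioi (0:ℝ), g1 t * v t ∂μ) ≤ β * (c * μ (E ∩ F)) := by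
      rw [hg1, lint_ind_mul μ v c (hE.inter hF)]
      calc (∫⁻ t in (E ∩ F) ∩ Ioi 0, c * v t ∂μ)
          ≤ ∫⁻ _t in (E ∩ F) ∩ Ioi 0, c * β ∂μ := by
            refine setLIntegral_mono measurable_const (fun t ht => ?_)
            exact mul_le_mul_right (le_of_lt ht.1.2) c
        _ = c * β * μ ((E ∩ F) ∩ Ioi 0) := setLIntegral_const _ _
        _ ≤ β * (c * μ (E ∩ F)) := by
            rw [mul_comm c β, mul_assoc]
            exact mul_le_mul_right (mul_le_mul_right (measure_mono inter_subset_left) c) β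
    have hcostn : ∀ n, (∫⁻ t in Ioi (0:ℝ), gn n t * v t ∂μ) ≤ β * (c * μ (B n)) := by
      intro n
      rcases hSalt n with hB0 | ⟨hS0, hStop⟩
      · have hc0 : coef n = 0 := by
          rw [hcoef]; dsimp only; rw [hB0, measure_empty, mul_zero, ENNReal.zero_div]
        have : gn n = fun _ => 0 := by
          funext t; rw [hgn]; dsimp only; rw [hc0]; simp
        rw [this]
        simp
      · calc (∫⁻ t in Ioi (0:ℝ), gn n t * v t ∂μ)
            ≤ ∫⁻ t, gn n t * v t ∂μ := setLIntegral_le_lintegral _ _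
          _ = ∫⁻ t in Sn n, coef n * v t ∂μ := by
              rw [hgn]
              dsimp only
              have heq : ∀ t, (Sn n).indicator (fun _ => coef n) t * v t
                  = (Sn n).indicator (fun u => coef n * v u) t := by
                intro t; by_cases ht : t ∈ Sn n <;> simp [ht]
              simp_rw [heq]
              exact lintegral_indicator (hSm n) _
          _ ≤ ∫⁻ _t in Sn n, coef n * β ∂μ := by
              refine setLIntegral_mono measurable_const (fun t ht => ?_)
              exact mul_le_mul_right (le_of_lt (hSF n ht)) _
          _ = coef n * β * μ (Sn n) := setLIntegral_const _ _
          _ = β * (c * μ (B n)) := by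
              rw [hcoef]
              dsimp only
              rw [mul_comm _ β, mul_assoc, ENNReal.div_mul_cancel hS0 hStop]
    have hGv : ∀ t, (g1 t + ∑' n, gn n t) * v t = g1 t * v t + ∑' n, gn n t * v t := by
      intro t
      rw [add_mul, ENNReal.tsum_mul_right]
    calc (∫⁻ t in Ioi (0:ℝ), (g1 t + ∑' n, gn n t) * v t ∂μ)
        = (∫⁻ t in Ioi 0, g1 t * v t ∂μ) + ∑' n, ∫⁻ t in Ioi 0, gn n t * v t ∂μ := by
          simp_rw [hGv]
          rw [lintegral_add_left (show Measurable fun t => g1 t * v t from hg1m.mul hv),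
            lintegral_tsum (fun n => (show Measurable fun t => gn n t * v t from (hgnm n).mul hv).aemeasurable)]
      _ ≤ β * (c * μ (E ∩ F)) + ∑' n, β * (c * μ (B n)) :=
          add_le_add hcost1 (ENNReal.tsum_le_tsum hcostn)
      _ = β * (c * (μ (E ∩ F) + ∑' n, μ (B n))) := by
          rw [ENNReal.tsum_mul_left, ENNReal.tsum_mul_left]
          ring
      _ = β * (c * μ E) := by
          rw [← measure_iUnion hBd hBm, hBU, measure_inter_add_diff E hF]


lemma OK_indicator [SigmaFinite μ] (hv : Measurable v) (c : ℝ≥0∞) (hc : c ≠ ⊤)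
    {E : Set ℝ} (hE : MeasurableSet E) : OK μ v (E.indicator fun _ => c) := by
  classical
  intro ε δ hε hεt hδ hδt
  have hWm := W_meas μ v
  set R := ∫⁻ t in Ioi (0:ℝ), (E.indicator fun _ => c) t * W μ v t ∂μ with hRdef
  by_cases hR : R = ⊤
  · refine ⟨E.indicator fun _ => c, measurable_const.indicator hE, fun x _ => le_rfl, ?_⟩
    have h2 : (1+ε) * R + δ = ⊤ := by
      rw [hR, ENNReal.mul_top (by simp : (1:ℝ≥0∞)+ε ≠ 0)]
      simp
    rw [h2]
    exact le_top
  by_cases hc0 : c = 0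
  · refine ⟨fun _ => 0, measurable_const, ?_, ?_⟩
    · intro x _
      have h2 : ∀ t : ℝ, E.indicator (fun _ => c) t = 0 := by
        intro t; by_cases ht : t ∈ E <;> simp [ht, hc0]
      simp_rw [h2]
      exact le_rfl
    · simp
  have h1ε0 : (1:ℝ≥0∞) + ε ≠ 0 := by simp
  have h1εt : (1:ℝ≥0∞) + ε ≠ ⊤ := ENNReal.add_ne_top.2 ⟨ENNReal.one_ne_top, hεt⟩
  have h1ε1 : (1:ℝ≥0∞) < 1 + ε := ENNReal.lt_add_right ENNReal.one_ne_top hε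
  have hRlow : ∀ (s : Set ℝ), MeasurableSet s → s ⊆ E ∩ Ioi 0 → (∀ t ∈ s, W μ v t = ⊤) →
      μ s = 0 := by
    intro s hs hsub htop
    by_contra hne
    apply hR
    refine eq_top_iff.2 ?_
    calc (⊤:ℝ≥0∞) = ∫⁻ _t in s, ⊤ ∂μ := by
          rw [setLIntegral_const, ENNReal.top_mul hne]
      _ ≤ ∫⁻ t in s, (E.indicator fun _ => c) t * W μ v t ∂μ := by
          refine setLIntegral_mono ((measurable_const.indicator hE).mul hWm) (fun t ht => ?_)
          rw [indicator_of_mem (hsub ht).1, htop t ht, ENNReal.mul_top hc0]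
      _ ≤ R := lintegral_mono_set (fun t ht => (hsub ht).2)
  set E' : Set ℝ := (E ∩ Ioi 0) ∩ {t | W μ v t ≠ ⊤} with hE'def
  have hE'm : MeasurableSet E' :=
    (hE.inter measurableSet_Ioi).inter (hWm (measurableSet_singleton ⊤)).compl
  have hE'sub : E' ⊆ E ∩ Ioi 0 := inter_subset_left
  have hnull : μ ((E ∩ Ioi 0) \ E') = 0 := by
    refine hRlow _ ((hE.inter measurableSet_Ioi).diff hE'm) diff_subset ?_
    intro t ht
    by_contra hne
    exact ht.2 ⟨ht.1, hne⟩
  have hmeq : ∀ x : ℝ, 0 < x → μ (E ∩ Ici x) = μ (E' ∩ Ici x) := by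
    intro x hx
    apply le_antisymm
    · have hsub2 : E ∩ Ici x ⊆ (E' ∩ Ici x) ∪ ((E ∩ Ioi 0) \ E') := by
        rintro t ⟨htE, htx⟩
        have ht0 : t ∈ Ioi 0 := lt_of_lt_of_le hx htx
        by_cases htE' : t ∈ E'
        · exact Or.inl ⟨htE', htx⟩
        · exact Or.inr ⟨⟨htE, ht0⟩, htE'⟩
      calc μ (E ∩ Ici x) ≤ μ ((E' ∩ Ici x) ∪ ((E ∩ Ioi 0) \ E')) := measure_mono hsub2
        _ ≤ μ (E' ∩ Ici x) + μ ((E ∩ Ioi 0) \ E') := measure_union_le _ _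
        _ = μ (E' ∩ Ici x) := by rw [hnull, add_zero]
    · exact measure_mono (inter_subset_inter_left _ (fun t ht => ht.1.1))
  suffices h : ∃ g : ℝ → ℝ≥0∞, Measurable g ∧ Adm μ (E'.indicator fun _ => c) g ∧
      (∫⁻ t in Ioi (0:ℝ), g t * v t ∂μ)
        ≤ (1+ε) * (∫⁻ t in Ioi (0:ℝ), (E'.indicator fun _ => c) t * W μ v t ∂μ) + δ by
    obtain ⟨g, hgm, hgadm, hgc⟩ := h
    refine ⟨g, hgm, ?_, ?_⟩
    · intro x hx
      have h2 := hgadm x hx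
      rw [lint_ind μ c hE'm] at h2
      rw [lint_ind μ c hE, hmeq x hx]
      exact h2
    · refine le_trans hgc ?_
      refine add_le_add_left (mul_le_mul_right ?_ _) δ
      refine lintegral_mono fun t => ?_
      by_cases ht : t ∈ E'
      · rw [indicator_of_mem ht, indicator_of_mem ht.1.1]
      · rw [indicator_of_notMem ht]
        simp
  set E0 : Set ℝ := E' ∩ {t | W μ v t = 0} with hE0def
  set E1 : Set ℝ := E' ∩ {t | W μ v t ≠ 0} with hE1def
  have hE0m : MeasurableSet E0 := hE'm.inter (hWm (measurableSet_singleton 0))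
  have hE1m : MeasurableSet E1 := hE'm.inter (hWm (measurableSet_singleton 0)).compl
  -- the positive part, indexed by ℤ
  set C : ℤ → Set ℝ := fun k =>
    E1 ∩ (W μ v ⁻¹' Ico (((1:ℝ≥0∞)+ε)^k) (((1:ℝ≥0∞)+ε)^(k+1))) with hCdef
  have hCm : ∀ k, MeasurableSet (C k) := fun k => hE1m.inter (hWm measurableSet_Ico)
  have hCcover : ⋃ k, C k = E1 := by
    apply Subset.antisymm
    · exact iUnion_subset fun k => inter_subset_left
    · intro t ht
      obtain ⟨k, hk⟩ := ENNReal.exists_mem_Ico_zpow ht.2 ht.1.2 h1ε1 h1εt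
      exact mem_iUnion.2 ⟨k, ht, hk⟩
  have hCd : Pairwise (Function.onFun Disjoint C) := by
    have hcontr : ∀ a b : ℤ, a < b → ∀ t, t ∈ C a → t ∈ C b → False := by
      intro a b hab t hta htb
      have h1 : W μ v t < ((1:ℝ≥0∞)+ε)^(a+1) := hta.2.2
      have h2 : ((1:ℝ≥0∞)+ε)^(a+1) ≤ ((1:ℝ≥0∞)+ε)^b := ENNReal.zpow_le_of_le h1ε1.le (by omega)
      exact absurd (lt_of_lt_of_le h1 (le_trans h2 htb.2.1)) (lt_irrefl _)
    intro k k' hkk'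
    rw [Function.onFun, Set.disjoint_left]
    intro t htk htk'
    rcases lt_or_gt_of_ne hkk' with h | h
    · exact hcontr k k' h t htk htk'
    · exact hcontr k' k h t htk' htk
  have hbase1 : ∀ k : ℤ, ∃ g : ℝ → ℝ≥0∞, Measurable g ∧ Adm μ ((C k).indicator fun _ => c) g ∧
      (∫⁻ t in Ioi (0:ℝ), g t * v t ∂μ) ≤ ((1:ℝ≥0∞)+ε)^(k+1) * (c * μ (C k)) :=
    fun k => base μ v hv c hc (hCm k) (fun t ht => ht.1.1.1.2) (fun t ht => ht.2.2)
  choose gp hgpm hgpadm hgpcost using hbase1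
  set G1 : ℝ → ℝ≥0∞ := fun t => ∑' k : ℤ, gp k t with hG1def
  have hG1m : Measurable G1 := Measurable.ennreal_tsum hgpm
  have hadm1 : ∀ x > (0:ℝ), c * μ (E1 ∩ Ici x) ≤ ∫⁻ t in Ici x, G1 t ∂μ := by
    intro x hx
    have h1 : μ (E1 ∩ Ici x) = ∑' k : ℤ, μ (C k ∩ Ici x) := by
      rw [← hCcover, iUnion_inter]
      exact measure_iUnion
        (fun a b hab => (hCd hab).mono inter_subset_left inter_subset_left)
        (fun k => (hCm k).inter measurableSet_Ici)
    have h2 : (∫⁻ t in Ici x, G1 t ∂μ) = ∑' k : ℤ, ∫⁻ t in Ici x, gp k t ∂μ := by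
      simp only [hG1def]
      exact lintegral_tsum (fun k => (hgpm k).aemeasurable)
    rw [h1, h2, ← ENNReal.tsum_mul_left]
    refine ENNReal.tsum_le_tsum fun k => ?_
    have h3 := hgpadm k x hx
    rw [lint_ind μ c (hCm k)] at h3
    exact h3
  have hcost1 : (∫⁻ t in Ioi (0:ℝ), G1 t * v t ∂μ)
      ≤ (1+ε) * (c * ∫⁻ t in E1, W μ v t ∂μ) := by
    have hpt : ∀ t, G1 t * v t = ∑' k : ℤ, gp k t * v t := by
      intro t
      simp only [hG1def]
      exact ENNReal.tsum_mul_right.symm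
    calc (∫⁻ t in Ioi (0:ℝ), G1 t * v t ∂μ)
        = ∑' k : ℤ, ∫⁻ t in Ioi 0, gp k t * v t ∂μ := by
          rw [lintegral_congr hpt]
          exact lintegral_tsum (fun k => ((hgpm k).mul hv).aemeasurable)
      _ ≤ ∑' k : ℤ, ((1:ℝ≥0∞)+ε)^(k+1) * (c * μ (C k)) := ENNReal.tsum_le_tsum hgpcost
      _ ≤ ∑' k : ℤ, (1+ε) * (c * ∫⁻ t in C k, W μ v t ∂μ) := by
          refine ENNReal.tsum_le_tsum fun k => ?_
          have hlow : ((1:ℝ≥0∞)+ε)^(k:ℤ) * μ (C k) ≤ ∫⁻ t in C k, W μ v t ∂μ := by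
            calc ((1:ℝ≥0∞)+ε)^(k:ℤ) * μ (C k)
                = ∫⁻ _t in C k, ((1:ℝ≥0∞)+ε)^(k:ℤ) ∂μ := (setLIntegral_const _ _).symm
              _ ≤ ∫⁻ t in C k, W μ v t ∂μ :=
                  setLIntegral_mono hWm (fun t ht => ht.2.1)
          calc ((1:ℝ≥0∞)+ε)^(k+1) * (c * μ (C k))
              = (1+ε) * (c * (((1:ℝ≥0∞)+ε)^(k:ℤ) * μ (C k))) := by
                rw [ENNReal.zpow_add h1ε0 h1εt k 1, zpow_one]
                ring
            _ ≤ (1+ε) * (c * ∫⁻ t in C k, W μ v t ∂μ) :=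
                mul_le_mul_right (mul_le_mul_right hlow c) _
      _ = (1+ε) * (c * ∫⁻ t in E1, W μ v t ∂μ) := by
          rw [ENNReal.tsum_mul_left, ENNReal.tsum_mul_left, ← lintegral_iUnion hCm hCd, hCcover]
  -- the zero part, indexed by ℕ
  set P : ℕ → Set ℝ := fun n => E0 ∩ disjointed (spanningSets μ) n with hPdef
  have hPm : ∀ n, MeasurableSet (P n) :=
    fun n => hE0m.inter (MeasurableSet.disjointed (measurableSet_spanningSets μ) n)
  have hPd : Pairwise (Function.onFun Disjoint P) := by
    intro a b hab
    exact ((disjoint_disjointed (spanningSets μ)) hab).mono inter_subset_right inter_subset_right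
  have hPU : ⋃ n, P n = E0 := by
    simp only [hPdef]
    rw [← inter_iUnion, iUnion_disjointed, iUnion_spanningSets, inter_univ]
  have hPfin : ∀ n, μ (P n) ≠ ⊤ := by
    intro n
    refine ne_of_lt (lt_of_le_of_lt (measure_mono ?_) (measure_spanningSets_lt_top μ n))
    exact inter_subset_right.trans (disjointed_subset _ n)
  set dn : ℕ → ℝ≥0∞ := fun n => (δ/2) * (2⁻¹)^n / (c * μ (P n) + 1) with hdndef
  have hδ2 : δ/2 ≠ 0 := by
    rw [Ne, ENNReal.div_eq_zero_iff]; push_neg; exact ⟨hδ, ENNReal.ofNat_ne_top⟩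
  have hdenom0 : ∀ n, c * μ (P n) + 1 ≠ 0 := fun n => by simp
  have hdenomt : ∀ n, c * μ (P n) + 1 ≠ ⊤ :=
    fun n => ENNReal.add_ne_top.2 ⟨ENNReal.mul_ne_top hc (hPfin n), ENNReal.one_ne_top⟩
  have hdn0 : ∀ n, dn n ≠ 0 := by
    intro n
    simp only [hdndef]
    rw [Ne, ENNReal.div_eq_zero_iff]
    push_neg
    refine ⟨mul_ne_zero hδ2 (pow_ne_zero _ (by simp)), hdenomt n⟩
  have hbase0 : ∀ n : ℕ, ∃ g : ℝ → ℝ≥0∞, Measurable g ∧ Adm μ ((P n).indicator fun _ => c) g ∧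
      (∫⁻ t in Ioi (0:ℝ), g t * v t ∂μ) ≤ dn n * (c * μ (P n)) := by
    intro n
    refine base μ v hv c hc (hPm n) (fun t ht => ht.1.1.1.2) (fun t ht => ?_)
    rw [ht.1.2]
    exact pos_iff_ne_zero.2 (hdn0 n)
  choose gz hgzm hgzadm hgzcost using hbase0
  set G0 : ℝ → ℝ≥0∞ := fun t => ∑' n, gz n t with hG0def
  have hG0m : Measurable G0 := Measurable.ennreal_tsum hgzm
  have hadm0 : ∀ x > (0:ℝ), c * μ (E0 ∩ Ici x) ≤ ∫⁻ t in Ici x, G0 t ∂μ := by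
    intro x hx
    have h1 : μ (E0 ∩ Ici x) = ∑' n, μ (P n ∩ Ici x) := by
      rw [← hPU, iUnion_inter]
      exact measure_iUnion
        (fun a b hab => (hPd hab).mono inter_subset_left inter_subset_left)
        (fun n => (hPm n).inter measurableSet_Ici)
    have h2 : (∫⁻ t in Ici x, G0 t ∂μ) = ∑' n, ∫⁻ t in Ici x, gz n t ∂μ := by
      simp only [hG0def]
      exact lintegral_tsum (fun n => (hgzm n).aemeasurable)
    rw [h1, h2, ← ENNReal.tsum_mul_left]
    refine ENNReal.tsum_le_tsum fun n => ?_
    have h3 := hgzadm n x hx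
    rw [lint_ind μ c (hPm n)] at h3
    exact h3
  have hcost0 : (∫⁻ t in Ioi (0:ℝ), G0 t * v t ∂μ) ≤ δ := by
    have hpt : ∀ t, G0 t * v t = ∑' n, gz n t * v t := by
      intro t
      simp only [hG0def]
      exact ENNReal.tsum_mul_right.symm
    calc (∫⁻ t in Ioi (0:ℝ), G0 t * v t ∂μ)
        = ∑' n, ∫⁻ t in Ioi 0, gz n t * v t ∂μ := by
          rw [lintegral_congr hpt]
          exact lintegral_tsum (fun n => ((hgzm n).mul hv).aemeasurable)
      _ ≤ ∑' n, (δ/2) * (2⁻¹)^n := by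
          refine ENNReal.tsum_le_tsum fun n => ?_
          refine le_trans (hgzcost n) ?_
          calc dn n * (c * μ (P n)) ≤ dn n * (c * μ (P n) + 1) :=
                mul_le_mul_right le_self_add _
            _ = (δ/2) * (2⁻¹)^n := by
                simp only [hdndef]
                exact ENNReal.div_mul_cancel (hdenom0 n) (hdenomt n)
      _ = δ := by
          rw [ENNReal.tsum_mul_left, ENNReal.tsum_geometric, ENNReal.one_sub_inv_two, inv_inv,
            ENNReal.div_mul_cancel two_ne_zero ENNReal.ofNat_ne_top]
  refine ⟨fun t => G0 t + G1 t, hG0m.add hG1m, ?_, ?_⟩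
  · intro x hx
    rw [lint_ind μ c hE'm]
    have hsplitm : μ (E' ∩ Ici x) = μ (E0 ∩ Ici x) + μ (E1 ∩ Ici x) := by
      have hsplit : E' ∩ Ici x = (E0 ∩ Ici x) ∪ (E1 ∩ Ici x) := by
        ext t
        constructor
        · rintro ⟨ht', htx⟩
          by_cases h0 : W μ v t = 0
          · exact Or.inl ⟨⟨ht', h0⟩, htx⟩
          · exact Or.inr ⟨⟨ht', h0⟩, htx⟩
        · rintro (⟨⟨h1, -⟩, h2⟩ | ⟨⟨h1, -⟩, h2⟩) <;> exact ⟨h1, h2⟩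
      have hdis : Disjoint (E0 ∩ Ici x) (E1 ∩ Ici x) := by
        rw [Set.disjoint_left]
        rintro t ⟨⟨-, h0⟩, -⟩ ⟨⟨-, h1⟩, -⟩
        exact h1 h0
      rw [hsplit, measure_union hdis (hE1m.inter measurableSet_Ici)]
    rw [hsplitm, mul_add, lintegral_add_left hG0m]
    exact add_le_add (hadm0 x hx) (hadm1 x hx)
  · have hWE' : (∫⁻ t in Ioi (0:ℝ), (E'.indicator fun _ => c) t * W μ v t ∂μ)
        = c * ∫⁻ t in E' ∩ Ioi 0, W μ v t ∂μ := by
      rw [lint_ind_mul μ (W μ v) c hE'm]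
      exact lintegral_const_mul c hWm
    calc (∫⁻ t in Ioi (0:ℝ), (G0 t + G1 t) * v t ∂μ)
        = (∫⁻ t in Ioi 0, G0 t * v t ∂μ) + ∫⁻ t in Ioi 0, G1 t * v t ∂μ := by
          rw [lintegral_congr (fun t => add_mul (G0 t) (G1 t) (v t)),
            lintegral_add_left (show Measurable fun t => G0 t * v t from hG0m.mul hv)]
      _ ≤ δ + (1+ε) * (c * ∫⁻ t in E1, W μ v t ∂μ) := add_le_add hcost0 hcost1
      _ ≤ δ + (1+ε) * (∫⁻ t in Ioi (0:ℝ), (E'.indicator fun _ => c) t * W μ v t ∂μ) := by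
          refine add_le_add_right (mul_le_mul_right ?_ _) δ
          rw [hWE']
          refine mul_le_mul_right (lintegral_mono_set ?_) c
          intro t ht
          exact ⟨ht.1, ht.1.1.2⟩
      _ = (1+ε) * (∫⁻ t in Ioi (0:ℝ), (E'.indicator fun _ => c) t * W μ v t ∂μ) + δ :=
          add_comm _ _

lemma OK_add [SigmaFinite μ] (hv : Measurable v) {f g : ℝ → ℝ≥0∞}
    (hfm : Measurable f) (hgm : Measurable g)
    (hf : OK μ v f) (hg : OK μ v g) : OK μ v (fun t => f t + g t) := by
  intro ε δ hε hεt hδ hδt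
  have hδ2 : δ/2 ≠ 0 := by
    rw [Ne, ENNReal.div_eq_zero_iff]; push_neg; exact ⟨hδ, ENNReal.ofNat_ne_top⟩
  have hδ2t : δ/2 ≠ ⊤ := (ENNReal.div_lt_top hδt two_ne_zero).ne
  obtain ⟨Gf, h1, h2, h3⟩ := hf ε (δ/2) hε hεt hδ2 hδ2t
  obtain ⟨Gg, h4, h5, h6⟩ := hg ε (δ/2) hε hεt hδ2 hδ2t
  refine ⟨fun t => Gf t + Gg t, h1.add h4, ?_, ?_⟩
  · intro x hx
    rw [lintegral_add_left hfm, lintegral_add_left h1]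
    exact add_le_add (h2 x hx) (h5 x hx)
  · rw [lintegral_congr (fun t => add_mul (Gf t) (Gg t) (v t)),
      lintegral_add_left (show Measurable fun t => Gf t * v t from h1.mul hv),
      lintegral_congr (fun t => add_mul (f t) (g t) (W μ v t)),
      lintegral_add_left (show Measurable fun t => f t * W μ v t from hfm.mul (W_meas μ v)), mul_add]
    refine le_trans (add_le_add h3 h6) ?_
    rw [add_add_add_comm, ENNReal.add_halves]

lemma OK_tsum [SigmaFinite μ] (hv : Measurable v) {F : ℕ → ℝ → ℝ≥0∞}
    (hFm : ∀ n, Measurable (F n)) (hFok : ∀ n, OK μ v (F n)) :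
    OK μ v (fun t => ∑' n, F n t) := by
  intro ε δ hε hεt hδ hδt
  have hδ2 : δ/2 ≠ 0 := by
    rw [Ne, ENNReal.div_eq_zero_iff]; push_neg; exact ⟨hδ, ENNReal.ofNat_ne_top⟩
  have hb0 : ∀ n : ℕ, (δ/2) * (2⁻¹)^n ≠ 0 :=
    fun n => mul_ne_zero hδ2 (pow_ne_zero _ (by simp))
  have hbt : ∀ n : ℕ, (δ/2) * (2⁻¹)^n ≠ ⊤ := by
    intro n
    exact ENNReal.mul_ne_top ((ENNReal.div_lt_top hδt two_ne_zero).ne)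
      (ENNReal.pow_ne_top (ENNReal.inv_ne_top.2 two_ne_zero))
  choose G hGm hGadm hGcost using fun n => hFok n ε ((δ/2)*(2⁻¹)^n) hε hεt (hb0 n) (hbt n)
  refine ⟨fun t => ∑' n, G n t, Measurable.ennreal_tsum hGm, ?_, ?_⟩
  · intro x hx
    rw [lintegral_tsum (fun n => (hFm n).aemeasurable),
      lintegral_tsum (fun n => (hGm n).aemeasurable)]
    exact ENNReal.tsum_le_tsum fun n => hGadm n x hx
  · have hpt : ∀ t, (∑' n, G n t) * v t = ∑' n, G n t * v t :=
      fun t => ENNReal.tsum_mul_right.symm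
    have hpt2 : ∀ t, (∑' n, F n t) * W μ v t = ∑' n, F n t * W μ v t :=
      fun t => ENNReal.tsum_mul_right.symm
    rw [lintegral_congr hpt, lintegral_tsum (fun n => (show Measurable fun t => G n t * v t from (hGm n).mul hv).aemeasurable),
      lintegral_congr hpt2, lintegral_tsum (fun n => (show Measurable fun t => F n t * W μ v t from (hFm n).mul (W_meas μ v)).aemeasurable)]
    calc (∑' n, ∫⁻ t in Ioi (0:ℝ), G n t * v t ∂μ)
        ≤ ∑' n, ((1+ε) * (∫⁻ t in Ioi (0:ℝ), F n t * W μ v t ∂μ) + (δ/2)*(2⁻¹)^n) :=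
          ENNReal.tsum_le_tsum fun n => hGcost n
      _ = (1+ε) * (∑' n, ∫⁻ t in Ioi (0:ℝ), F n t * W μ v t ∂μ) + (δ/2) * ∑' n, (2⁻¹:ℝ≥0∞)^n := by
          rw [ENNReal.tsum_add, ENNReal.tsum_mul_left, ENNReal.tsum_mul_left]
      _ = (1+ε) * (∑' n, ∫⁻ t in Ioi (0:ℝ), F n t * W μ v t ∂μ) + δ := by
          rw [ENNReal.tsum_geometric, ENNReal.one_sub_inv_two, inv_inv,
            ENNReal.div_mul_cancel two_ne_zero ENNReal.ofNat_ne_top]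

lemma OK_simple [SigmaFinite μ] (hv : Measurable v) (s : SimpleFunc ℝ NNReal) :
    OK μ v (fun t => (s t : ℝ≥0∞)) := by
  refine SimpleFunc.induction ?_ ?_ s
  · intro c s' hs'
    have heq : (fun t => (((SimpleFunc.piecewise s' hs' (SimpleFunc.const ℝ c)
        (SimpleFunc.const ℝ 0)) t : ℝ≥0) : ℝ≥0∞))
        = s'.indicator (fun _ => (c : ℝ≥0∞)) := by
      funext t
      by_cases ht : t ∈ s' <;>
        simp [SimpleFunc.piecewise_apply, ht]
    rw [heq]
    exact OK_indicator μ v hv (c:ℝ≥0∞) ENNReal.coe_ne_top hs'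
  · intro f g _hdisj hf hg
    have heq : (fun t => (((f + g) t : ℝ≥0) : ℝ≥0∞))
        = fun t => ((f t : ℝ≥0∞) + (g t : ℝ≥0∞)) := by
      funext t
      simp [SimpleFunc.coe_add]
    rw [heq]
    exact OK_add μ v hv f.measurable.coe_nnreal_ennreal g.measurable.coe_nnreal_ennreal hf hg

lemma OK_meas [SigmaFinite μ] (hv : Measurable v) (f : ℝ → ℝ≥0∞) (hf : Measurable f) :
    OK μ v f := by
  have heq : f = fun t => ∑' n, ((SimpleFunc.eapproxDiff f n t : ℝ≥0) : ℝ≥0∞) := by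
    funext t
    exact (SimpleFunc.tsum_eapproxDiff f hf t).symm
  rw [heq]
  exact OK_tsum μ v hv
    (fun n => (SimpleFunc.eapproxDiff f n).measurable.coe_nnreal_ennreal)
    (fun n => OK_simple μ v hv (SimpleFunc.eapproxDiff f n))


end SinnamonAux

/-- Sinnamon's identity for the Copson operator:
the infimum of `∫ g v dμ` over all nonnegative measurable `g` with
`H*g ≥ H*f` equals `∫ f v↑ dμ`, where `v↑(x) = ess inf_{x≤t<∞} v(t)`. -/
theorem inf_over_Copson_majorants_eq_lintegral_increasing_minorant
    (μ : Measure ℝ) [SigmaFinite μ] (v f : ℝ → ℝ≥0∞)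
    (hv : Measurable v) (hf : Measurable f) :
    (⨅ (g : ℝ → ℝ≥0∞) (_ : Measurable g)
        (_ : ∀ x > (0 : ℝ), (∫⁻ t in Set.Ici x, f t ∂μ) ≤ ∫⁻ t in Set.Ici x, g t ∂μ),
        ∫⁻ t in Set.Ioi (0 : ℝ), g t * v t ∂μ)
      = ∫⁻ t in Set.Ioi (0 : ℝ), f t * essInf v (μ.restrict (Set.Ici t)) ∂μ := by
  classical
  apply le_antisymm
  · -- the infimum is at most the right-hand side
    have hOK := SinnamonAux.OK_meas μ v hv f hf
    set R := ∫⁻ t in Set.Ioi (0:ℝ), f t * SinnamonAux.W μ v t ∂μ with hRdef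
    have hReq : (∫⁻ t in Set.Ioi (0:ℝ), f t * essInf v (μ.restrict (Set.Ici t)) ∂μ) = R := rfl
    rw [hReq]
    refine ENNReal.le_of_forall_pos_le_add fun η hη hRtop => ?_
    have hR1 : R + 1 ≠ 0 := by simp
    have hR1t : R + 1 ≠ ⊤ := ENNReal.add_ne_top.2 ⟨hRtop.ne, ENNReal.one_ne_top⟩
    set e : ℝ≥0∞ := (η : ℝ≥0∞)/2/(R+1) with hedef
    have hηn0 : (η:ℝ≥0∞) ≠ 0 := ENNReal.coe_ne_zero.2 hη.ne'
    have hη2 : (η:ℝ≥0∞)/2 ≠ 0 := by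
      rw [Ne, ENNReal.div_eq_zero_iff]; push_neg; exact ⟨hηn0, ENNReal.ofNat_ne_top⟩
    have hη2t : (η:ℝ≥0∞)/2 ≠ ⊤ := (ENNReal.div_lt_top ENNReal.coe_ne_top two_ne_zero).ne
    have he0 : e ≠ 0 := by
      rw [hedef, Ne, ENNReal.div_eq_zero_iff]; push_neg; exact ⟨hη2, hR1t⟩
    have het : e ≠ ⊤ := (ENNReal.div_lt_top hη2t hR1).ne
    obtain ⟨g, hgm, hgadm, hgc⟩ := hOK e ((η:ℝ≥0∞)/2) he0 het hη2 hη2t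
    have hstep : (⨅ (g : ℝ → ℝ≥0∞) (_ : Measurable g)
        (_ : ∀ x > (0 : ℝ), (∫⁻ t in Set.Ici x, f t ∂μ) ≤ ∫⁻ t in Set.Ici x, g t ∂μ),
        ∫⁻ t in Set.Ioi (0 : ℝ), g t * v t ∂μ) ≤ ∫⁻ t in Set.Ioi (0:ℝ), g t * v t ∂μ :=
      iInf_le_of_le g (iInf_le_of_le hgm (iInf_le_of_le hgadm le_rfl))
    refine le_trans hstep (le_trans hgc ?_)
    have h1 : e * R ≤ (η:ℝ≥0∞)/2 := by
      calc e * R ≤ e * (R+1) := mul_le_mul_right le_self_add e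
        _ = (η:ℝ≥0∞)/2 := by rw [hedef]; exact ENNReal.div_mul_cancel hR1 hR1t
    calc (1+e)*R + (η:ℝ≥0∞)/2 = R + e*R + (η:ℝ≥0∞)/2 := by rw [add_mul, one_mul]
      _ ≤ R + (η:ℝ≥0∞)/2 + (η:ℝ≥0∞)/2 := add_le_add (add_le_add_right h1 R) le_rfl
      _ = R + (η:ℝ≥0∞) := by rw [add_assoc, ENNReal.add_halves]
  · refine le_iInf fun g => le_iInf fun hg => le_iInf fun hadm => ?_
    exact SinnamonAux.ge_direction μ v hv hf hg hadm
end

section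
/- Let q ∈ (0,∞], N ≤ M in ℤ ∪ {±∞}, and {τ_k}_{k=N}^M a geometrically increasing sequence (there exists α > 1 with τ_k ≥ α τ_{k-1} for all k). Then for all nonnegative sequences {a_k}, the ℓ^q norm of {τ_k ∑_{m=k}^M a_m} is equivalent (with constants depending only on α and q) to the ℓ^q norm of {τ_k a_k}. -/
open ENNReal Set

/-- The discrete `ℓ^q` quasi-norm over an index set `Z ⊆ ℤ`, with `q ∈ (0,∞]`. -/
noncomputable def lqNorm (q : ℝ≥0∞) (Z : Set ℤ) (b : ℤ → ℝ≥0∞) : ℝ≥0∞ :=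
  if q = ∞ then ⨆ k ∈ Z, b k else (∑' k : Z, b (k : ℤ) ^ q.toReal) ^ (1 / q.toReal)

open Filter


lemma leindler_jensen_finset {p : ℝ} (hp : 1 ≤ p) (w x : ℕ → ℝ≥0∞) (s : Finset ℕ)
    (hw : ∑ j ∈ s, w j ≤ 1) :
    (∑ j ∈ s, w j * x j) ^ p ≤ ∑ j ∈ s, w j * x j ^ p := by
  obtain ⟨n, hn⟩ := Infinite.exists_notMem_finset s
  set W := ∑ j ∈ s, w j with hW
  set w' := Function.update w n (1 - W) with hw'
  set x' := Function.update x n 0 with hx'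
  have hsw : ∀ j ∈ s, w' j * x' j = w j * x j := by
    intro j hj
    have hjn : j ≠ n := fun h => hn (h ▸ hj)
    simp [hw', hx', Function.update_of_ne hjn]
  have hsw' : ∀ j ∈ s, w' j * x' j ^ p = w j * x j ^ p := by
    intro j hj
    have hjn : j ≠ n := fun h => hn (h ▸ hj)
    simp [hw', hx', Function.update_of_ne hjn]
  have hWs : ∑ j ∈ s, w' j = W := by
    rw [hW]
    refine Finset.sum_congr rfl fun j hj => ?_
    have hjn : j ≠ n := fun h => hn (h ▸ hj)
    simp [hw', Function.update_of_ne hjn]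
  have h1 : ∑ j ∈ insert n s, w' j = 1 := by
    rw [Finset.sum_insert hn, hWs]
    simpa [hw', Function.update_self] using tsub_add_cancel_of_le hw
  have h := ENNReal.rpow_arith_mean_le_arith_mean_rpow (insert n s) w' x' h1 hp
  rw [Finset.sum_insert hn, Finset.sum_insert hn, Finset.sum_congr rfl hsw,
    Finset.sum_congr rfl hsw'] at h
  have hx0 : x' n = 0 := Function.update_self n 0 x
  rw [hx0, mul_zero, zero_add, ENNReal.zero_rpow_of_pos (lt_of_lt_of_le zero_lt_one hp),
    mul_zero, zero_add] at h
  exact h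

lemma leindler_jensen_tsum {p : ℝ} (hp : 1 ≤ p) (w x : ℕ → ℝ≥0∞) (hw : ∑' j, w j ≤ 1) :
    (∑' j, w j * x j) ^ p ≤ ∑' j, w j * x j ^ p := by
  have key : ∀ n : ℕ, (∑ j ∈ Finset.range n, w j * x j) ^ p ≤ ∑' j, w j * x j ^ p := fun n =>
    le_trans (leindler_jensen_finset hp w x _ (le_trans (ENNReal.sum_le_tsum _) hw))
      (ENNReal.sum_le_tsum _)
  have ht : Tendsto (fun n => (∑ j ∈ Finset.range n, w j * x j) ^ p) atTop
      (nhds ((∑' j, w j * x j) ^ p)) :=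
    (ENNReal.continuous_rpow_const.tendsto _).comp (ENNReal.tendsto_nat_tsum _)
  exact le_of_tendsto' ht key

lemma leindler_rpow_tsum_le {p : ℝ} (hp0 : 0 < p) (hp : p ≤ 1) (x : ℕ → ℝ≥0∞) :
    (∑' j, x j) ^ p ≤ ∑' j, x j ^ p := by
  have fin : ∀ s : Finset ℕ, (∑ j ∈ s, x j) ^ p ≤ ∑ j ∈ s, x j ^ p := by
    intro s
    induction s using Finset.induction with
    | empty => simp [ENNReal.zero_rpow_of_pos hp0]
    | insert _ _ hns ih =>
      rw [Finset.sum_insert hns, Finset.sum_insert hns]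
      exact le_trans (ENNReal.rpow_add_le_add_rpow _ _ hp0.le hp) (add_le_add_right ih _)
  have key : ∀ n : ℕ, (∑ j ∈ Finset.range n, x j) ^ p ≤ ∑' j, x j ^ p := fun n =>
    le_trans (fin _) (ENNReal.sum_le_tsum _)
  have ht : Tendsto (fun n => (∑ j ∈ Finset.range n, x j) ^ p) atTop
      (nhds ((∑' j, x j) ^ p)) :=
    (ENNReal.continuous_rpow_const.tendsto _).comp (ENNReal.tendsto_nat_tsum _)
  exact le_of_tendsto' ht key

lemma leindler_tau_pow {α : ℝ≥0∞} {Z : Set ℤ} (hZ : Z.OrdConnected) {τ : ℤ → ℝ≥0∞}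
    (hgeo : ∀ k, k ∈ Z → (k - 1) ∈ Z → α * τ (k - 1) ≤ τ k) :
    ∀ (n : ℕ) (k : ℤ), k ∈ Z → (k + n) ∈ Z → α ^ n * τ k ≤ τ (k + n) := by
  intro n
  induction n with
  | zero => intro k hk _; simp
  | succ n ih =>
    intro k hk hk'
    have hmem : (k + n) ∈ Z := hZ.out hk hk' ⟨by omega, by push_cast; omega⟩
    have h1 := ih k hk hmem
    have h2 := hgeo (k + (n + 1 : ℕ)) hk' (by push_cast; rw [show (k + (n+1:ℤ)) - 1 = k + n by ring]; exact hmem)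
    calc α ^ (n + 1) * τ k = α * (α ^ n * τ k) := by rw [pow_succ]; ring_nf
      _ ≤ α * τ (k + n) := mul_le_mul_right h1 _
      _ ≤ τ (k + (n + 1 : ℕ)) := by
          refine le_trans (le_of_eq ?_) h2
          congr 1
          push_cast; ring

lemma leindler_pointwise {α : ℝ≥0∞} (hα0 : α ≠ 0) (hαt : α ≠ ∞) {Z : Set ℤ}
    (hZ : Z.OrdConnected) {τ : ℤ → ℝ≥0∞}
    (hgeo : ∀ k, k ∈ Z → (k - 1) ∈ Z → α * τ (k - 1) ≤ τ k)
    (a : ℤ → ℝ≥0∞) {k : ℤ} (hk : k ∈ Z) :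
    τ k * ∑' m : ↥(Z ∩ Set.Ici k), a (m : ℤ)
      ≤ ∑' j : ℕ, α⁻¹ ^ j * Z.indicator (fun m => τ m * a m) (k + j) := by
  rw [← ENNReal.tsum_mul_left]
  set g : ℕ → ℝ≥0∞ := fun j => α⁻¹ ^ j * Z.indicator (fun m => τ m * a m) (k + j) with hg
  have step : ∀ m : ↥(Z ∩ Set.Ici k), τ k * a (m : ℤ) ≤ g (((m : ℤ) - k).toNat) := by
    rintro ⟨m, hmZ, hmk⟩
    have hmk' : k ≤ m := hmk
    set n : ℕ := (m - k).toNat with hn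
    have hkn : k + (n : ℤ) = m := by omega
    have hτ : α ^ n * τ k ≤ τ m := by
      have := leindler_tau_pow hZ hgeo n k hk (by rw [hkn]; exact hmZ)
      rwa [hkn] at this
    have hτ' : τ k ≤ α⁻¹ ^ n * τ m := by
      calc τ k = (α⁻¹ ^ n * α ^ n) * τ k := by
            rw [← mul_pow, ENNReal.inv_mul_cancel hα0 hαt, one_pow, one_mul]
        _ = α⁻¹ ^ n * (α ^ n * τ k) := by rw [mul_assoc]
        _ ≤ α⁻¹ ^ n * τ m := mul_le_mul_right hτ _
    have : g n = α⁻¹ ^ n * (τ m * a m) := by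
      rw [hg]; simp only []
      rw [hkn, Set.indicator_of_mem hmZ]
    rw [this, ← mul_assoc]
    exact mul_le_mul_left hτ' _
  have hinj : Function.Injective (fun m : ↥(Z ∩ Set.Ici k) => ((m : ℤ) - k).toNat) := by
    rintro ⟨m₁, hm₁, hk₁⟩ ⟨m₂, hm₂, hk₂⟩ h
    apply Subtype.ext; show m₁ = m₂
    have hk₁' : k ≤ m₁ := hk₁
    have hk₂' : k ≤ m₂ := hk₂
    simp only at h
    omega
  calc ∑' m : ↥(Z ∩ Set.Ici k), τ k * a (m : ℤ)
      ≤ ∑' m : ↥(Z ∩ Set.Ici k), g (((m : ℤ) - k).toNat) := ENNReal.tsum_le_tsum step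
    _ ≤ ∑' j : ℕ, g j := ENNReal.tsum_comp_le_tsum_of_injective hinj g

lemma leindler_sum_bound {p : ℝ} {r : ℝ≥0∞} {w : ℕ → ℝ≥0∞}
    (H : ∀ y : ℕ → ℝ≥0∞, (∑' j : ℕ, r ^ j * y j) ^ p ≤ ∑' j : ℕ, w j * y j ^ p)
    (b' : ℤ → ℝ≥0∞) (Z : Set ℤ) :
    ∑' k : Z, (∑' j : ℕ, r ^ j * b' ((k : ℤ) + j)) ^ p
      ≤ (∑' j : ℕ, w j) * ∑' m : ℤ, b' m ^ p := by
  calc ∑' k : Z, (∑' j : ℕ, r ^ j * b' ((k : ℤ) + j)) ^ p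
      ≤ ∑' k : Z, ∑' j : ℕ, w j * b' ((k : ℤ) + j) ^ p :=
        ENNReal.tsum_le_tsum fun k => H _
    _ = ∑' j : ℕ, ∑' k : Z, w j * b' ((k : ℤ) + j) ^ p := ENNReal.tsum_comm
    _ = ∑' j : ℕ, w j * ∑' k : Z, b' ((k : ℤ) + j) ^ p := by
        simp only [ENNReal.tsum_mul_left]
    _ ≤ ∑' j : ℕ, w j * ∑' m : ℤ, b' m ^ p := by
        refine ENNReal.tsum_le_tsum fun j => mul_le_mul_right ?_ _
        calc ∑' k : Z, b' ((k : ℤ) + j) ^ p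
            ≤ ∑' k : ℤ, b' (k + j) ^ p :=
              ENNReal.tsum_comp_le_tsum_of_injective Subtype.val_injective
                (fun k => b' (k + (j : ℤ)) ^ p)
          _ = ∑' m : ℤ, b' m ^ p := (Equiv.addRight (j : ℤ)).tsum_eq (fun m => b' m ^ p)
    _ = (∑' j : ℕ, w j) * ∑' m : ℤ, b' m ^ p := ENNReal.tsum_mul_right

lemma lqNorm_mono (q : ℝ≥0∞) (Z : Set ℤ) {f g : ℤ → ℝ≥0∞} (h : ∀ k ∈ Z, f k ≤ g k) :
    lqNorm q Z f ≤ lqNorm q Z g := by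
  unfold lqNorm
  split_ifs
  · exact iSup₂_le fun k hk => le_trans (h k hk) (le_iSup₂ (f := fun m _ => g m) k hk)
  · refine ENNReal.rpow_le_rpow (ENNReal.tsum_le_tsum fun m => ?_)
      (div_nonneg zero_le_one ENNReal.toReal_nonneg)
    exact ENNReal.rpow_le_rpow (h m m.2) ENNReal.toReal_nonneg

lemma leindler_upper_finite (q : ℝ≥0∞) (hqi : q ≠ ∞) (hp : 0 < q.toReal)
    {α : ℝ≥0∞} (hα0 : α ≠ 0) (hαt : α ≠ ∞) {w : ℕ → ℝ≥0∞}
    (H : ∀ y : ℕ → ℝ≥0∞, (∑' j : ℕ, α⁻¹ ^ j * y j) ^ q.toReal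
        ≤ ∑' j : ℕ, w j * y j ^ q.toReal)
    {Z : Set ℤ} (hZc : Z.OrdConnected) {τ : ℤ → ℝ≥0∞}
    (hgeo : ∀ k, k ∈ Z → (k - 1) ∈ Z → α * τ (k - 1) ≤ τ k) (a : ℤ → ℝ≥0∞) :
    lqNorm q Z (fun k => τ k * ∑' m : ↥(Z ∩ Set.Ici k), a (m : ℤ))
      ≤ (∑' j : ℕ, w j) ^ (1 / q.toReal) * lqNorm q Z (fun k => τ k * a k) := by
  simp only [lqNorm, if_neg hqi]
  set p := q.toReal
  set b' := Z.indicator fun m => τ m * a m with hb'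
  have h1p : (0:ℝ) ≤ 1 / p := div_nonneg zero_le_one hp.le
  have hS : ∑' m : ℤ, b' m ^ p = ∑' m : Z, (τ (m : ℤ) * a (m : ℤ)) ^ p := by
    rw [tsum_subtype Z (fun m => (τ m * a m) ^ p)]
    congr 1; funext m
    by_cases hm : m ∈ Z
    · simp [hb', Set.indicator_of_mem hm]
    · simp [hb', Set.indicator_of_notMem hm, ENNReal.zero_rpow_of_pos hp]
  calc (∑' k : Z, (τ (k : ℤ) * ∑' m : ↥(Z ∩ Set.Ici (k : ℤ)), a (m : ℤ)) ^ p) ^ (1 / p)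
      ≤ (∑' k : Z, (∑' j : ℕ, α⁻¹ ^ j * b' ((k : ℤ) + j)) ^ p) ^ (1 / p) := by
        refine ENNReal.rpow_le_rpow (ENNReal.tsum_le_tsum fun k => ?_) h1p
        exact ENNReal.rpow_le_rpow
          (leindler_pointwise hα0 hαt hZc hgeo a k.2) hp.le
    _ ≤ ((∑' j : ℕ, w j) * ∑' m : ℤ, b' m ^ p) ^ (1 / p) :=
        ENNReal.rpow_le_rpow (leindler_sum_bound H b' Z) h1p
    _ = (∑' j : ℕ, w j) ^ (1 / p) * (∑' m : Z, (τ (m : ℤ) * a (m : ℤ)) ^ p) ^ (1 / p) := by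
        rw [ENNReal.mul_rpow_of_nonneg _ _ h1p, hS]

/-- Leindler: for a geometrically increasing sequence `{τ_k}` on an
integer interval `Z` (with right endpoint `M`), the `ℓ^q` norm of
`{τ_k ∑_{m=k}^{M} a_m}` is equivalent to that of `{τ_k a_k}`, with constants
depending only on `α` and `q`. -/
theorem lq_norm_tail_sums_equiv_geometric
    (q : ℝ≥0∞) (hq : 0 < q) (α : ℝ≥0∞) (hα : 1 < α) (hα' : α < ∞) :
    ∃ c₁ c₂ : ℝ≥0∞, 0 < c₁ ∧ c₂ < ∞ ∧
      ∀ (Z : Set ℤ), Z.OrdConnected → Z.Nonempty →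
      ∀ (τ : ℤ → ℝ≥0∞), (∀ k ∈ Z, 0 < τ k ∧ τ k < ∞) →
        (∀ k, k ∈ Z → (k - 1) ∈ Z → α * τ (k - 1) ≤ τ k) →
      ∀ a : ℤ → ℝ≥0∞,
        c₁ * lqNorm q Z (fun k => τ k * a k)
          ≤ lqNorm q Z (fun k => τ k * ∑' m : ↥(Z ∩ Set.Ici k), a (m : ℤ)) ∧
        lqNorm q Z (fun k => τ k * ∑' m : ↥(Z ∩ Set.Ici k), a (m : ℤ))
          ≤ c₂ * lqNorm q Z (fun k => τ k * a k) := by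
  have hα0 : α ≠ 0 := (zero_lt_one.trans hα).ne'
  have hαt : α ≠ ∞ := hα'.ne
  set r : ℝ≥0∞ := α⁻¹ with hrdef
  have hr1 : r < 1 := ENNReal.inv_lt_one.mpr hα
  have h1r0 : (1 : ℝ≥0∞) - r ≠ 0 := (tsub_pos_of_lt hr1).ne'
  have h1rt : (1 : ℝ≥0∞) - r ≠ ∞ := (lt_of_le_of_lt tsub_le_self ENNReal.one_lt_top).ne
  -- lower bound (valid for any q), with constant 1
  have hlow : ∀ (Z : Set ℤ) (τ a : ℤ → ℝ≥0∞),
      lqNorm q Z (fun k => τ k * a k)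
        ≤ lqNorm q Z (fun k => τ k * ∑' m : ↥(Z ∩ Set.Ici k), a (m : ℤ)) := by
    intro Z τ a
    refine lqNorm_mono q Z fun k hk => mul_le_mul_right ?_ _
    exact ENNReal.le_tsum (⟨k, hk, le_refl k⟩ : ↥(Z ∩ Set.Ici k))
  by_cases hqi : q = ∞
  · refine ⟨1, (1 - r)⁻¹, one_pos, ENNReal.inv_lt_top.mpr (tsub_pos_of_lt hr1), ?_⟩
    intro Z hZc _ τ _ hgeo a
    refine ⟨by rw [one_mul]; exact hlow Z τ a, ?_⟩
    subst hqi
    simp only [lqNorm, if_pos rfl]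
    set b' := Z.indicator fun m => τ m * a m with hb'
    set B := ⨆ k ∈ Z, τ k * a k with hB
    refine iSup₂_le fun k hk => ?_
    calc τ k * ∑' m : ↥(Z ∩ Set.Ici k), a (m : ℤ)
        ≤ ∑' j : ℕ, r ^ j * b' (k + j) := leindler_pointwise hα0 hαt hZc hgeo a hk
      _ ≤ ∑' j : ℕ, r ^ j * B := by
          refine ENNReal.tsum_le_tsum fun j => mul_le_mul_right ?_ _
          by_cases hm : (k + (j : ℤ)) ∈ Z
          · rw [hb', Set.indicator_of_mem hm]
            exact le_iSup₂ (f := fun m (_ : m ∈ Z) => τ m * a m) (k + (j : ℤ)) hm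
          · simp [hb', Set.indicator_of_notMem hm]
      _ = (1 - r)⁻¹ * B := by
          rw [ENNReal.tsum_mul_right, ENNReal.tsum_geometric]
  · have hp : 0 < q.toReal := ENNReal.toReal_pos hq.ne' hqi
    set p := q.toReal with hpdef
    by_cases hp1 : 1 ≤ p
    · -- case p ≥ 1
      set w : ℕ → ℝ≥0∞ := fun j => (1 - r)⁻¹ ^ p * ((1 - r) * r ^ j) with hw
      have hu : ∑' j : ℕ, (1 - r) * r ^ j = 1 := by
        rw [ENNReal.tsum_mul_left, ENNReal.tsum_geometric,
          ENNReal.mul_inv_cancel h1r0 h1rt]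
      have hwsum : ∑' j : ℕ, w j = (1 - r)⁻¹ ^ p := by
        rw [hw]
        simp only [ENNReal.tsum_mul_left, hu, mul_one]
      have hwne : (∑' j : ℕ, w j) ≠ ∞ := by
        rw [hwsum]
        exact (ENNReal.rpow_lt_top_of_nonneg hp.le (ENNReal.inv_ne_top.mpr h1r0)).ne
      have H : ∀ y : ℕ → ℝ≥0∞, (∑' j : ℕ, r ^ j * y j) ^ p ≤ ∑' j : ℕ, w j * y j ^ p := by
        intro y
        have hry : ∀ j : ℕ, r ^ j * y j = (1 - r)⁻¹ * (((1 - r) * r ^ j) * y j) := by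
          intro j
          rw [← mul_assoc, ← mul_assoc, ENNReal.inv_mul_cancel h1r0 h1rt, one_mul]
        calc (∑' j : ℕ, r ^ j * y j) ^ p
            = ((1 - r)⁻¹ * ∑' j : ℕ, ((1 - r) * r ^ j) * y j) ^ p := by
              rw [← ENNReal.tsum_mul_left]
              congr 1
              exact tsum_congr hry
          _ = (1 - r)⁻¹ ^ p * (∑' j : ℕ, ((1 - r) * r ^ j) * y j) ^ p :=
              ENNReal.mul_rpow_of_nonneg _ _ hp.le
          _ ≤ (1 - r)⁻¹ ^ p * ∑' j : ℕ, ((1 - r) * r ^ j) * y j ^ p :=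
              mul_le_mul_right (leindler_jensen_tsum hp1 _ y hu.le) _
          _ = ∑' j : ℕ, w j * y j ^ p := by
              rw [← ENNReal.tsum_mul_left]
              refine tsum_congr fun j => ?_
              rw [hw]; ring_nf
      refine ⟨1, (∑' j : ℕ, w j) ^ (1 / p), one_pos,
        ENNReal.rpow_lt_top_of_nonneg (div_nonneg zero_le_one hp.le) hwne, ?_⟩
      intro Z hZc _ τ _ hgeo a
      exact ⟨by rw [one_mul]; exact hlow Z τ a,
        leindler_upper_finite q hqi hp hα0 hαt H hZc hgeo a⟩
    · -- case p < 1
      push_neg at hp1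
      set w : ℕ → ℝ≥0∞ := fun j => (r ^ p) ^ j with hw
      have hrp1 : r ^ p < 1 := ENNReal.rpow_lt_one hr1 hp
      have hwsum : ∑' j : ℕ, w j = (1 - r ^ p)⁻¹ := ENNReal.tsum_geometric _
      have hwne : (∑' j : ℕ, w j) ≠ ∞ := by
        rw [hwsum]
        exact (ENNReal.inv_lt_top.mpr (tsub_pos_of_lt hrp1)).ne
      have H : ∀ y : ℕ → ℝ≥0∞, (∑' j : ℕ, r ^ j * y j) ^ p ≤ ∑' j : ℕ, w j * y j ^ p := by
        intro y
        refine le_trans (leindler_rpow_tsum_le hp hp1.le _) (le_of_eq (tsum_congr fun j => ?_))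
        rw [ENNReal.mul_rpow_of_nonneg _ _ hp.le]
        simp only [hw]
        congr 1
        rw [← ENNReal.rpow_natCast r j, ← ENNReal.rpow_natCast (r ^ p) j,
          ← ENNReal.rpow_mul, ← ENNReal.rpow_mul, mul_comm]
      refine ⟨1, (∑' j : ℕ, w j) ^ (1 / p), one_pos,
        ENNReal.rpow_lt_top_of_nonneg (div_nonneg zero_le_one hp.le) hwne, ?_⟩
      intro Z hZc _ τ _ hgeo a
      exact ⟨by rw [one_mul]; exact hlow Z τ a,
        leindler_upper_finite q hqi hp hα0 hαt H hZc hgeo a⟩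
end

section
/- Let q ∈ (0,∞], N ≤ M, and {τ_k}_{k=N}^M geometrically increasing with ratio α > 1. Then for all nonnegative sequences {a_k}, ‖{τ_k · sup_{k≤m≤M} a_m}‖_{ℓ^q} ≈ ‖{τ_k a_k}‖_{ℓ^q}, with equivalence constants depending only on α and q. -/
open ENNReal Set

lemma geo_pow_le {α : ℝ≥0∞} {Z : Set ℤ} {τ : ℤ → ℝ≥0∞} (hZ : Z.OrdConnected)
    (hτα : ∀ k, k ∈ Z → (k - 1) ∈ Z → α * τ (k - 1) ≤ τ k) :
    ∀ (n : ℕ) (k : ℤ), k ∈ Z → (k + n) ∈ Z → α ^ n * τ k ≤ τ (k + n) := by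
  intro n
  induction n with
  | zero => intro k hk _; simp
  | succ n ih =>
    intro k hk hk'
    have hmem : (k + n) ∈ Z := by
      have : (k + n) ∈ Icc k (k + (n+1 : ℕ)) := by
        constructor <;> push_cast <;> omega
      exact hZ.out hk hk' this
    have h1 : α * τ (k + n) ≤ τ (k + (n+1 : ℕ)) := by
      have := hτα (k + (n+1 : ℕ)) hk' (by
        have : (k + ((n:ℤ)+1)) - 1 = k + n := by ring
        push_cast
        rw [this]; exact hmem)
      convert this using 2
      push_cast; ring
    calc α ^ (n+1) * τ k = α * (α ^ n * τ k) := by ring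
    _ ≤ α * τ (k + n) := mul_le_mul_right (ih k hk hmem) α
    _ ≤ _ := h1

/-- the key comparison: for `k ≤ m` in `Z`, `α ^ (m-k) * τ k ≤ τ m`. -/
lemma geo_le {α : ℝ≥0∞} {Z : Set ℤ} {τ : ℤ → ℝ≥0∞} (hZ : Z.OrdConnected)
    (hτα : ∀ k, k ∈ Z → (k - 1) ∈ Z → α * τ (k - 1) ≤ τ k)
    {k m : ℤ} (hk : k ∈ Z) (hm : m ∈ Z) (hkm : k ≤ m) :
    α ^ (m - k).toNat * τ k ≤ τ m := by
  have h : k + ((m - k).toNat : ℤ) = m := by omega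
  have := geo_pow_le hZ hτα (m - k).toNat k hk (by rw [h]; exact hm)
  rwa [h] at this

/-- Leindler: for a geometrically increasing sequence `{τ_k}` on an
integer interval `Z` (with right endpoint `M`), the `ℓ^q` norm of
`{τ_k sup_{k≤m≤M} a_m}` is equivalent to that of `{τ_k a_k}`, with constants
depending only on `α` and `q`. -/
theorem lq_norm_tail_sups_equiv_geometric
    (q : ℝ≥0∞) (hq : 0 < q) (α : ℝ≥0∞) (hα : 1 < α) (hα' : α < ∞) :
    ∃ c₁ c₂ : ℝ≥0∞, 0 < c₁ ∧ c₂ < ∞ ∧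
      ∀ (Z : Set ℤ), Z.OrdConnected → Z.Nonempty →
      ∀ (τ : ℤ → ℝ≥0∞), (∀ k ∈ Z, 0 < τ k ∧ τ k < ∞) →
        (∀ k, k ∈ Z → (k - 1) ∈ Z → α * τ (k - 1) ≤ τ k) →
      ∀ a : ℤ → ℝ≥0∞,
        c₁ * lqNorm q Z (fun k => τ k * a k)
          ≤ lqNorm q Z (fun k => τ k * ⨆ m ∈ Z ∩ Set.Ici k, a m) ∧
        lqNorm q Z (fun k => τ k * ⨆ m ∈ Z ∩ Set.Ici k, a m)
          ≤ c₂ * lqNorm q Z (fun k => τ k * a k) := by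
  classical
  by_cases hqt : q = ∞
  · -- q = ∞ : c₁ = c₂ = 1
    refine ⟨1, 1, one_pos, one_lt_top, ?_⟩
    intro Z hZ _ τ hτ hτα a
    simp only [lqNorm, if_pos hqt, one_mul]
    constructor
    · refine iSup₂_le fun k hk => ?_
      refine le_trans (mul_le_mul_right ?_ (τ k)) (le_iSup₂ (f := fun k (_ : k ∈ Z) =>
        τ k * ⨆ m ∈ Z ∩ Set.Ici k, a m) k hk)
      exact le_iSup₂ (f := fun m (_ : m ∈ Z ∩ Set.Ici k) => a m) k ⟨hk, le_refl k⟩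
    · refine iSup₂_le fun k hk => ?_
      rw [ENNReal.mul_iSup]
      refine iSup_le fun m => ?_
      rw [ENNReal.mul_iSup]
      refine iSup_le fun hm => ?_
      have hτkm : τ k ≤ τ m := by
        have h1 : (1:ℝ≥0∞) ≤ α ^ (m - k).toNat := one_le_pow_of_one_le' hα.le _
        calc τ k = 1 * τ k := (one_mul _).symm
        _ ≤ α ^ (m - k).toNat * τ k := mul_le_mul_left h1 _
        _ ≤ τ m := geo_le hZ hτα hk hm.1 hm.2
      exact le_trans (mul_le_mul_left hτkm _)
        (le_iSup₂ (f := fun m (_ : m ∈ Z) => τ m * a m) m hm.1)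
  · -- q finite
    set r := q.toReal with hrdef
    have hr : 0 < r := ENNReal.toReal_pos hq.ne' hqt
    set β : ℝ≥0∞ := α⁻¹ ^ r with hβdef
    have hβ1 : β < 1 := ENNReal.rpow_lt_one (ENNReal.inv_lt_one.2 hα) hr
    set C : ℝ≥0∞ := (1 - β)⁻¹ with hCdef
    have hC : C < ∞ := ENNReal.inv_lt_top.2 (tsub_pos_of_lt hβ1)
    refine ⟨1, C ^ (1 / r), one_pos, ENNReal.rpow_lt_top_of_nonneg (by positivity) hC.ne, ?_⟩
    intro Z hZ _ τ hτ hτα a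
    simp only [lqNorm, if_neg hqt, one_mul, ← hrdef]
    have key : ∀ {k m : ℤ}, k ∈ Z → m ∈ Z → k ≤ m →
        τ k ^ r ≤ β ^ (m - k).toNat * τ m ^ r := by
      intro k m hk hm hkm
      set n := (m - k).toNat with hn
      have h1 : α ^ n * τ k ≤ τ m := geo_le hZ hτα hk hm hkm
      have h2 : (α ^ n * τ k) ^ r ≤ τ m ^ r := ENNReal.rpow_le_rpow h1 hr.le
      rw [ENNReal.mul_rpow_of_nonneg _ _ hr.le] at h2
      have hcancel : (α⁻¹ ^ n : ℝ≥0∞) ^ r * (α ^ n) ^ r = 1 := by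
        rw [← ENNReal.mul_rpow_of_nonneg _ _ hr.le, ← mul_pow,
          ENNReal.inv_mul_cancel (by positivity) hα'.ne, one_pow, ENNReal.one_rpow]
      have hβn : (α⁻¹ ^ n : ℝ≥0∞) ^ r = β ^ n := by
        rw [← ENNReal.rpow_natCast α⁻¹ n, ← ENNReal.rpow_mul, mul_comm,
          ENNReal.rpow_mul, ENNReal.rpow_natCast]
      calc τ k ^ r = (α⁻¹ ^ n) ^ r * ((α ^ n) ^ r * τ k ^ r) := by
            rw [← mul_assoc, hcancel, one_mul]
      _ ≤ (α⁻¹ ^ n) ^ r * τ m ^ r := mul_le_mul_right h2 _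
      _ = β ^ n * τ m ^ r := by rw [hβn]
    constructor
    · refine ENNReal.rpow_le_rpow (ENNReal.tsum_le_tsum fun k => ?_) (by positivity)
      refine ENNReal.rpow_le_rpow (mul_le_mul_right ?_ _) hr.le
      exact le_iSup₂ (f := fun m (_ : m ∈ Z ∩ Set.Ici (k:ℤ)) => a m) (k:ℤ) ⟨k.2, Set.self_mem_Ici⟩
    · -- main estimate
      have main : (∑' k : Z, ((fun k => τ k * ⨆ m ∈ Z ∩ Set.Ici k, a m) (k:ℤ)) ^ r)
          ≤ C * ∑' k : Z, ((fun k => τ k * a k) (k:ℤ)) ^ r := by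
        rw [tsum_subtype Z (fun k => ((τ k * ⨆ m ∈ Z ∩ Set.Ici k, a m)) ^ r),
          tsum_subtype Z (fun k => (τ k * a k) ^ r)]
        set g : ℤ → ℤ → ℝ≥0∞ := fun k m =>
          if k ∈ Z ∧ m ∈ Z ∧ k ≤ m then τ k ^ r * a m ^ r else 0 with hg
        have stepA : ∀ k, Z.indicator (fun k => (τ k * ⨆ m ∈ Z ∩ Set.Ici k, a m) ^ r) k
            ≤ ∑' m, g k m := by
          intro k
          by_cases hk : k ∈ Z
          · rw [indicator_of_mem hk, ENNReal.mul_rpow_of_nonneg _ _ hr.le]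
            have hsup : (⨆ m ∈ Z ∩ Set.Ici k, a m) ^ r
                ≤ ∑' m, (if m ∈ Z ∧ k ≤ m then a m ^ r else 0) := by
              have h1 : (⨆ m ∈ Z ∩ Set.Ici k, a m)
                  ≤ (∑' m, (if m ∈ Z ∧ k ≤ m then a m ^ r else 0)) ^ r⁻¹ := by
                refine iSup₂_le fun m hm => ?_
                have : a m ^ r ≤ ∑' m, (if m ∈ Z ∧ k ≤ m then a m ^ r else 0) := by
                  have := ENNReal.le_tsum (f := fun m => if m ∈ Z ∧ k ≤ m then a m ^ r else 0) m
                  rwa [if_pos ⟨hm.1, hm.2⟩] at this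
                calc a m = (a m ^ r) ^ r⁻¹ := by rw [ENNReal.rpow_rpow_inv hr.ne']
                _ ≤ _ := ENNReal.rpow_le_rpow this (by positivity)
              calc (⨆ m ∈ Z ∩ Set.Ici k, a m) ^ r
                  ≤ ((∑' m, (if m ∈ Z ∧ k ≤ m then a m ^ r else 0)) ^ r⁻¹) ^ r :=
                    ENNReal.rpow_le_rpow h1 hr.le
              _ = _ := ENNReal.rpow_inv_rpow hr.ne' _
            calc τ k ^ r * (⨆ m ∈ Z ∩ Set.Ici k, a m) ^ r
                ≤ τ k ^ r * ∑' m, (if m ∈ Z ∧ k ≤ m then a m ^ r else 0) :=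
                  mul_le_mul_right hsup _
            _ = ∑' m, τ k ^ r * (if m ∈ Z ∧ k ≤ m then a m ^ r else 0) :=
                  ENNReal.tsum_mul_left.symm
            _ = ∑' m, g k m := by
                  refine tsum_congr fun m => ?_
                  simp only [hg, mul_ite, mul_zero]
                  by_cases h : m ∈ Z ∧ k ≤ m
                  · rw [if_pos h, if_pos ⟨hk, h⟩]
                  · rw [if_neg h, if_neg (by tauto)]
          · rw [indicator_of_notMem hk]
            exact zero_le
        have stepC : ∀ m, (∑' k, g k m)
            ≤ C * Z.indicator (fun m => (τ m * a m) ^ r) m := by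
          intro m
          by_cases hm : m ∈ Z
          · rw [indicator_of_mem hm, ENNReal.mul_rpow_of_nonneg _ _ hr.le]
            have hle : ∀ k, g k m ≤ (if k ≤ m then β ^ (m - k).toNat else 0)
                * (τ m ^ r * a m ^ r) := by
              intro k
              simp only [hg]
              by_cases h : k ∈ Z ∧ m ∈ Z ∧ k ≤ m
              · rw [if_pos h, if_pos h.2.2]
                calc τ k ^ r * a m ^ r ≤ (β ^ (m - k).toNat * τ m ^ r) * a m ^ r :=
                      mul_le_mul_left (key h.1 h.2.1 h.2.2) _
                _ = _ := by ring
              · rw [if_neg h]; exact zero_le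
            calc (∑' k, g k m) ≤ ∑' k, (if k ≤ m then β ^ (m - k).toNat else 0)
                  * (τ m ^ r * a m ^ r) := ENNReal.tsum_le_tsum hle
            _ = (∑' k, (if k ≤ m then β ^ (m - k).toNat else 0)) * (τ m ^ r * a m ^ r) :=
                  ENNReal.tsum_mul_right
            _ = C * (τ m ^ r * a m ^ r) := by
                  congr 1
                  have hinj : Function.Injective (fun n : ℕ => m - (n : ℤ)) := by
                    intro n₁ n₂ h
                    simpa using h
                  rw [← Function.Injective.tsum_eq hinj (f := fun k : ℤ =>
                      (if k ≤ m then β ^ (m - k).toNat else 0)) ?_]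
                  · rw [hCdef, ← ENNReal.tsum_geometric β]
                    refine tsum_congr fun n => ?_
                    have h1 : m - (n:ℤ) ≤ m := by omega
                    show (if m - (n:ℤ) ≤ m then β ^ (m - (m - (n:ℤ))).toNat else 0) = β ^ n
                    rw [if_pos h1]
                    congr 1
                    omega
                  · intro k hk
                    simp only [Function.mem_support] at hk
                    have hkm : k ≤ m := by by_contra h; rw [if_neg h] at hk; exact hk rfl
                    exact ⟨(m - k).toNat, by show m - ((m - k).toNat : ℤ) = k; omega⟩
          · have : ∀ k, g k m = 0 := by
              intro k; simp only [hg]; rw [if_neg (by tauto)]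
            simp [this]
        calc (∑' k, Z.indicator (fun k => (τ k * ⨆ m ∈ Z ∩ Set.Ici k, a m) ^ r) k)
            ≤ ∑' k, ∑' m, g k m := ENNReal.tsum_le_tsum stepA
        _ = ∑' m, ∑' k, g k m := ENNReal.tsum_comm
        _ ≤ ∑' m, C * Z.indicator (fun m => (τ m * a m) ^ r) m :=
              ENNReal.tsum_le_tsum stepC
        _ = C * ∑' m, Z.indicator (fun m => (τ m * a m) ^ r) m := ENNReal.tsum_mul_left
      calc (∑' k : Z, ((fun k => τ k * ⨆ m ∈ Z ∩ Set.Ici k, a m) (k:ℤ)) ^ r) ^ (1/r)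
          ≤ (C * ∑' k : Z, ((fun k => τ k * a k) (k:ℤ)) ^ r) ^ (1/r) :=
            ENNReal.rpow_le_rpow main (by positivity)
      _ = C ^ (1/r) * (∑' k : Z, ((fun k => τ k * a k) (k:ℤ)) ^ r) ^ (1/r) :=
            ENNReal.mul_rpow_of_nonneg _ _ (by positivity)
end

section
/- Let 0 < r < ∞, Z ⊆ ℤ nonempty, and {v_k}, {w_k} positive sequences indexed by Z. If the embedding ℓ¹({v_k}, Z) ↪ ℓ^r({w_k}, Z) holds with norm C (i.e., (∑_k |a_k w_k|^r)^{1/r} ≤ C ∑_k |a_k| v_k for all sequences {a_k}), then ‖{w_k / v_k}‖_{ℓ^ρ(Z)} ≤ C, where 1/ρ = (1/r − 1)₊ (so ρ = r/(1−r) if r < 1 and ρ = ∞ if r ≥ 1). -/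
open ENNReal Set

/-- The discrete `ℓ^ρ` quasi-norm with `1/ρ = (1/r − 1)₊`:
`ρ = r/(1−r)` if `r < 1`, and `ρ = ∞` if `r ≥ 1`. -/
noncomputable def lrhoNorm (r : ℝ) (Z : Set ℤ) (b : ℤ → ℝ≥0∞) : ℝ≥0∞ :=
  if r < 1 then (∑' k : Z, b (k : ℤ) ^ (r / (1 - r))) ^ ((1 - r) / r)
  else ⨆ k ∈ Z, b k

/-- discrete Landau resonance: if `ℓ¹({v_k},Z) ↪ ℓ^r({w_k},Z)`
with embedding constant `C`, then `‖{w_k/v_k}‖_{ℓ^ρ(Z)} ≤ C`, where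
`1/ρ = (1/r − 1)₊`. -/
theorem embedding_l1_lr_implies_lrho_bound
    (r : ℝ) (hr : 0 < r) (Z : Set ℤ) (hZ : Z.Nonempty)
    (v w : ℤ → ℝ≥0∞) (hv : ∀ k ∈ Z, 0 < v k ∧ v k < ∞) (hw : ∀ k ∈ Z, 0 < w k ∧ w k < ∞)
    (C : ℝ≥0∞)
    (hemb : ∀ a : ℤ → ℝ≥0∞,
      (∑' k : Z, (a (k : ℤ) * w (k : ℤ)) ^ r) ^ (1 / r) ≤ C * ∑' k : Z, a (k : ℤ) * v (k : ℤ)) :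
    lrhoNorm r Z (fun k => w k / v k) ≤ C := by
  classical
  have hrne : r ≠ 0 := ne_of_gt hr
  set b : ℤ → ℝ≥0∞ := fun k => w k / v k with hb
  have hbfin : ∀ k ∈ Z, b k < ∞ := fun k hk =>
    ENNReal.div_lt_top (ne_of_lt (hw k hk).2) (ne_of_gt (hv k hk).1)
  have hbpos : ∀ k ∈ Z, 0 < b k := fun k hk =>
    ENNReal.div_pos (ne_of_gt (hw k hk).1) (ne_of_lt (hv k hk).2)
  rw [lrhoNorm]
  split_ifs with hr1
  · -- case r < 1
    set q : ℝ := r / (1 - r) with hqdef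
    set e : ℝ := (1 - r) / r with hedef
    have h1r : (0:ℝ) < 1 - r := by linarith
    have hqpos : 0 < q := div_pos hr h1r
    have hepos : 0 < e := div_pos h1r hr
    have heq : e * q = 1 := by
      rw [hedef, hqdef, div_mul_div_comm, mul_comm (1 - r) r]
      exact div_self (mul_ne_zero hrne (ne_of_gt h1r))
    have hqe : q * e = 1 := by rw [mul_comm]; exact heq
    -- key finite-set bound
    have key : ∀ F : Finset Z, (∑ j ∈ F, b (j : ℤ) ^ q) ≤ C ^ q := by
      intro F
      set S : ℝ≥0∞ := ∑ j ∈ F, b (j : ℤ) ^ q with hS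
      rcases F.eq_empty_or_nonempty with hF | hF
      · simp [hS, hF]
      have hSpos : 0 < S := by
        obtain ⟨j, hj⟩ := hF
        refine lt_of_lt_of_le ?_ (Finset.single_le_sum (fun i _ => zero_le) hj)
        exact ENNReal.rpow_pos (hbpos j j.2) (ne_of_lt (hbfin j j.2))
      have hSfin : S < ∞ := by
        refine lt_of_le_of_lt (Finset.sum_le_sum fun j _ => le_refl _) ?_
        refine ENNReal.sum_lt_top.mpr fun j _ => ?_
        exact ENNReal.rpow_lt_top_of_nonneg (le_of_lt hqpos) (ne_of_lt (hbfin j j.2))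
      -- test sequence
      set a : ℤ → ℝ≥0∞ := fun k => if ∃ j ∈ F, (j : ℤ) = k then b k ^ q / v k else 0 with ha
      have haj : ∀ j : Z, a (j : ℤ) = if j ∈ F then b (j : ℤ) ^ q / v (j : ℤ) else 0 := by
        intro j
        by_cases hj : j ∈ F
        · simp only [ha]
          rw [if_pos ⟨j, hj, rfl⟩, if_pos hj]
        · simp only [ha]
          rw [if_neg, if_neg hj]
          rintro ⟨j', hj', hjj⟩
          exact hj (by rwa [show j' = j from Subtype.ext hjj] at hj')
      have hav : ∀ j : Z, a (j : ℤ) * v (j : ℤ) = if j ∈ F then b (j : ℤ) ^ q else 0 := by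
        intro j
        rw [haj j]
        by_cases hj : j ∈ F
        · rw [if_pos hj, if_pos hj,
            ENNReal.div_mul_cancel (ne_of_gt (hv j j.2).1) (ne_of_lt (hv j j.2).2)]
        · rw [if_neg hj, if_neg hj, zero_mul]
      have hawr : ∀ j : Z, (a (j : ℤ) * w (j : ℤ)) ^ r = if j ∈ F then b (j : ℤ) ^ q else 0 := by
        intro j
        rw [haj j]
        by_cases hj : j ∈ F
        · rw [if_pos hj, if_pos hj]
          have h1 : b (j : ℤ) ^ q / v (j : ℤ) * w (j : ℤ) = b (j : ℤ) ^ q * b (j : ℤ) := by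
            rw [div_eq_mul_inv, mul_assoc, ← ENNReal.div_eq_inv_mul]
          have h2 : b (j : ℤ) ^ q * b (j : ℤ) = b (j : ℤ) ^ (q + 1) := by
            rw [ENNReal.rpow_add _ _ (ne_of_gt (hbpos j j.2)) (ne_of_lt (hbfin j j.2)),
              ENNReal.rpow_one]
          rw [h1, h2, ← ENNReal.rpow_mul]
          congr 1
          rw [hqdef]; field_simp; ring
        · rw [if_neg hj, if_neg hj, zero_mul, ENNReal.zero_rpow_of_pos hr]
      have hsum1 : (∑' j : Z, (a (j : ℤ) * w (j : ℤ)) ^ r) = S := by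
        rw [hS, tsum_eq_sum (s := F) (fun j hj => by rw [hawr j, if_neg hj])]
        exact Finset.sum_congr rfl fun j hj => by rw [hawr j, if_pos hj]
      have hsum2 : (∑' j : Z, a (j : ℤ) * v (j : ℤ)) = S := by
        rw [hS, tsum_eq_sum (s := F) (fun j hj => by rw [hav j, if_neg hj])]
        exact Finset.sum_congr rfl fun j hj => by rw [hav j, if_pos hj]
      have hemb' := hemb a
      rw [hsum1, hsum2] at hemb'
      -- S ^ (1/r) = S * S ^ e
      have hsplit : S ^ (1/r) = S * S ^ e := by
        nth_rewrite 2 [← ENNReal.rpow_one S]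
        rw [← ENNReal.rpow_add _ _ (ne_of_gt hSpos) (ne_of_lt hSfin)]
        congr 1
        rw [hedef]; field_simp; ring
      rw [hsplit] at hemb'
      have hSe : S ^ e ≤ C := by
        rw [mul_comm C S] at hemb'
        exact (ENNReal.mul_le_mul_iff_right (ne_of_gt hSpos) (ne_of_lt hSfin)).mp hemb'
      calc S = (S ^ e) ^ q := by rw [← ENNReal.rpow_mul, heq, ENNReal.rpow_one]
        _ ≤ C ^ q := ENNReal.rpow_le_rpow hSe (le_of_lt hqpos)
    have htsum : (∑' k : Z, b (k : ℤ) ^ q) ≤ C ^ q := by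
      rw [ENNReal.tsum_eq_iSup_sum]
      exact iSup_le key
    calc (∑' k : Z, b (k : ℤ) ^ q) ^ e ≤ (C ^ q) ^ e :=
          ENNReal.rpow_le_rpow htsum (le_of_lt hepos)
      _ = C := by rw [← ENNReal.rpow_mul, hqe, ENNReal.rpow_one]
  · -- case r ≥ 1 : sup bound
    refine iSup₂_le fun k hk => ?_
    set a : ℤ → ℝ≥0∞ := fun j => if j = k then (v k)⁻¹ else 0 with ha
    have hemb' := hemb a
    have hsum1 : (∑' j : Z, (a (j : ℤ) * w (j : ℤ)) ^ r) = ((v k)⁻¹ * w k) ^ r := by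
      rw [tsum_eq_single (⟨k, hk⟩ : Z)]
      · show ((if (k : ℤ) = k then (v k)⁻¹ else 0) * w k) ^ r = ((v k)⁻¹ * w k) ^ r
        rw [if_pos rfl]
      · intro j hj
        have hjk : (j : ℤ) ≠ k := fun h => hj (Subtype.ext h)
        simp [ha, hjk, ENNReal.zero_rpow_of_pos hr]
    have hsum2 : (∑' j : Z, a (j : ℤ) * v (j : ℤ)) = 1 := by
      rw [tsum_eq_single (⟨k, hk⟩ : Z)]
      · show (if (k : ℤ) = k then (v k)⁻¹ else 0) * v k = 1
        rw [if_pos rfl, ENNReal.inv_mul_cancel (ne_of_gt (hv k hk).1) (ne_of_lt (hv k hk).2)]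
      · intro j hj
        have hjk : (j : ℤ) ≠ k := fun h => hj (Subtype.ext h)
        simp [ha, hjk]
    rw [hsum1, hsum2, mul_one, ← ENNReal.rpow_mul,
      mul_one_div_cancel hrne, ENNReal.rpow_one] at hemb'
    calc w k / v k = (v k)⁻¹ * w k := by rw [ENNReal.div_eq_inv_mul]
      _ ≤ C := hemb'
end

section
/- Let 0 < q, r < ∞ with r ≥ 1, v non-decreasing weight, {x_k} a covering sequence with ∫_0^{x_k} u = 2^k. Then sup_{-∞<k≤M} 2^{k/r} (∫_{x_k}^{x_{k+1}} v(s)^{−q} w(s) ds)^{1/q} is equivalent (up to constants independent of the data) to sup_{t>0} (∫_0^t u)^{1/r} (∫_t^∞ v(s)^{−q} w(s) ds)^{1/q}. -/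
open MeasureTheory ENNReal Set

/-- A weight on `(0,∞)`: measurable, with positive finite integral over each `(0,x]`. -/
def IsWeight (v : ℝ → ℝ≥0∞) : Prop :=
  Measurable v ∧ ∀ x > (0 : ℝ),
    (0 < ∫⁻ t in Set.Ioc 0 x, v t) ∧ (∫⁻ t in Set.Ioc 0 x, v t) < ∞

/-- for `r ≥ 1`, non-decreasing weight `v`, and covering sequence
`∫_0^{x_k} u = 2^k`,
`sup_k 2^{k/r} (∫_{x_k}^{x_{k+1}} v^{−q} w)^{1/q} ≈ sup_{t>0} (∫_0^t u)^{1/r} (∫_t^∞ v^{−q} w)^{1/q}`. -/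
theorem discrete_sup_equiv_continuous_sup
    (q r : ℝ) (hq : 0 < q) (hr : 1 ≤ r) :
    ∃ c₁ c₂ : ℝ≥0∞, 0 < c₁ ∧ c₂ < ∞ ∧
      ∀ u v w : ℝ → ℝ≥0∞, IsWeight u → IsWeight v → IsWeight w →
        MonotoneOn v (Set.Ioi 0) →
      ∀ x : ℤ → ℝ, StrictMono x → (∀ k, 0 < x k) →
        (∀ k : ℤ, (∫⁻ t in Set.Ioc 0 (x k), u t) = 2 ^ k) →
        (⋃ k : ℤ, Set.Ioc (x k) (x (k + 1))) = Set.Ioi (0 : ℝ) →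
      c₁ * (⨆ t ∈ Set.Ioi (0 : ℝ), (∫⁻ s in Set.Ioc 0 t, u s) ^ (1 / r) *
              (∫⁻ s in Set.Ioi t, v s ^ (-q) * w s) ^ (1 / q))
          ≤ (⨆ k : ℤ, (2 : ℝ≥0∞) ^ ((k : ℝ) / r) *
              (∫⁻ s in Set.Ioc (x k) (x (k + 1)), v s ^ (-q) * w s) ^ (1 / q)) ∧
        (⨆ k : ℤ, (2 : ℝ≥0∞) ^ ((k : ℝ) / r) *
              (∫⁻ s in Set.Ioc (x k) (x (k + 1)), v s ^ (-q) * w s) ^ (1 / q))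
          ≤ c₂ * ⨆ t ∈ Set.Ioi (0 : ℝ), (∫⁻ s in Set.Ioc 0 t, u s) ^ (1 / r) *
              (∫⁻ s in Set.Ioi t, v s ^ (-q) * w s) ^ (1 / q) := by
  have hr0 : 0 < r := lt_of_lt_of_le one_pos hr
  have hq' : q ≠ 0 := ne_of_gt hq
  have hr' : r ≠ 0 := ne_of_gt hr0
  set a : ℝ≥0∞ := 2 ^ (-(q / r)) with ha_def
  have ha1 : a < 1 :=
    ENNReal.rpow_lt_one_of_one_lt_of_neg one_lt_two (neg_lt_zero.mpr (div_pos hq hr0))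
  set b : ℝ≥0∞ := 1 - a with hb_def
  have hb0 : b ≠ 0 := (tsub_pos_of_lt ha1).ne'
  have hbtop : b ≠ ∞ := (lt_of_le_of_lt tsub_le_self one_lt_top).ne
  have hbq0 : b ^ (1 / q) ≠ 0 :=
    (ENNReal.rpow_pos (tsub_pos_of_lt ha1) hbtop).ne'
  have hbqtop : b ^ (1 / q) ≠ ∞ :=
    ENNReal.rpow_ne_top_of_nonneg (by positivity) hbtop
  refine ⟨2 ^ (-(1 / r)) * b ^ (1 / q), 1, ?_, one_lt_top, ?_⟩
  · exact ENNReal.mul_pos (ENNReal.rpow_pos two_pos ENNReal.ofNat_ne_top).ne'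
      hbq0
  intro u v w hu hv hw hvmono x hx hxpos hxint hcov
  set f : ℝ → ℝ≥0∞ := fun s => v s ^ (-q) * w s with hf_def
  set D : ℝ≥0∞ := ⨆ k : ℤ, (2 : ℝ≥0∞) ^ ((k : ℝ) / r) *
      (∫⁻ s in Set.Ioc (x k) (x (k + 1)), f s) ^ (1 / q) with hD_def
  constructor
  · -- lower bound
    rw [ENNReal.mul_iSup]
    refine iSup_le fun t => ?_
    rw [ENNReal.mul_iSup]
    refine iSup_le fun ht => ?_
    -- find k with t ∈ Ioc (x k) (x (k+1))
    have ht' : t ∈ ⋃ k : ℤ, Set.Ioc (x k) (x (k + 1)) := hcov ▸ ht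
    obtain ⟨k, htk⟩ := mem_iUnion.mp ht'
    -- bound on inner integral of u
    have hA : (∫⁻ s in Set.Ioc 0 t, u s) ≤ 2 ^ (k + 1) := by
      rw [← hxint (k + 1)]
      exact lintegral_mono_set (Set.Ioc_subset_Ioc_right htk.2)
    -- bound on each piece
    have hI : ∀ j : ℤ, (∫⁻ s in Set.Ioc (x j) (x (j + 1)), f s)
        ≤ (2 : ℝ≥0∞) ^ (-((j : ℝ) / r) * q) * D ^ q := by
      intro j
      have h1 : (2 : ℝ≥0∞) ^ ((j : ℝ) / r) *
          (∫⁻ s in Set.Ioc (x j) (x (j + 1)), f s) ^ (1 / q) ≤ D := by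
        rw [hD_def]
        exact le_iSup (fun j : ℤ => (2 : ℝ≥0∞) ^ ((j : ℝ) / r) *
          (∫⁻ s in Set.Ioc (x j) (x (j + 1)), f s) ^ (1 / q)) j
      have h2 : (∫⁻ s in Set.Ioc (x j) (x (j + 1)), f s) ^ (1 / q)
          ≤ (2 : ℝ≥0∞) ^ (-((j : ℝ) / r)) * D := by
        calc (∫⁻ s in Set.Ioc (x j) (x (j + 1)), f s) ^ (1 / q)
            = (2 : ℝ≥0∞) ^ (-((j : ℝ) / r)) * ((2 : ℝ≥0∞) ^ ((j : ℝ) / r) *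
              (∫⁻ s in Set.Ioc (x j) (x (j + 1)), f s) ^ (1 / q)) := by
              rw [← mul_assoc, ← ENNReal.rpow_add _ _ two_ne_zero ENNReal.ofNat_ne_top]
              norm_num
          _ ≤ _ := mul_le_mul_right h1 _
      calc (∫⁻ s in Set.Ioc (x j) (x (j + 1)), f s)
          = ((∫⁻ s in Set.Ioc (x j) (x (j + 1)), f s) ^ (1 / q)) ^ q := by
            rw [← ENNReal.rpow_mul, one_div_mul_cancel hq', ENNReal.rpow_one]
        _ ≤ ((2 : ℝ≥0∞) ^ (-((j : ℝ) / r)) * D) ^ q := ENNReal.rpow_le_rpow h2 hq.le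
        _ = (2 : ℝ≥0∞) ^ (-((j : ℝ) / r) * q) * D ^ q := by
            rw [ENNReal.mul_rpow_of_nonneg _ _ hq.le, ← ENNReal.rpow_mul]
    -- decompose Ioi (x k) into pieces
    have hU : (⋃ n : ℕ, Set.Ioc (x (k + n)) (x (k + n + 1))) = Set.Ioi (x k) := by
      ext s
      simp only [mem_iUnion, mem_Ioc, mem_Ioi]
      constructor
      · rintro ⟨n, h1, _⟩
        exact lt_of_le_of_lt (hx.monotone (le_add_of_nonneg_right (Int.natCast_nonneg n))) h1
      · intro hs
        have hs0 : s ∈ Set.Ioi (0 : ℝ) := lt_trans (hxpos k) hs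
        rw [← hcov] at hs0
        obtain ⟨j, hj⟩ := mem_iUnion.mp hs0
        have hkj : k ≤ j := by
          by_contra hc
          push_neg at hc
          have : x (j + 1) ≤ x k := hx.monotone (by omega)
          exact absurd (hj.2.trans this) (not_le.mpr hs)
        obtain ⟨n, rfl⟩ : ∃ n : ℕ, j = k + n := ⟨(j - k).toNat, by omega⟩
        exact ⟨n, hj.1, hj.2⟩
    have hdisj : Pairwise (Function.onFun Disjoint fun n : ℕ => Set.Ioc (x (k + n)) (x (k + n + 1))) := by
      intro m n hmn
      rcases lt_or_gt_of_ne hmn with h | h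
      · refine Set.Ioc_disjoint_Ioc.mpr (min_le_of_left_le ?_)
        exact le_trans (hx.monotone (by omega)) (le_max_right _ _)
      · refine Set.Ioc_disjoint_Ioc.mpr (min_le_of_right_le ?_)
        exact le_trans (hx.monotone (by omega)) (le_max_left _ _)
    have hB : (∫⁻ s in Set.Ioi t, f s) ≤ 2 ^ (-((k : ℝ) / r) * q) * D ^ q * b⁻¹ := by
      calc (∫⁻ s in Set.Ioi t, f s)
          ≤ ∫⁻ s in Set.Ioi (x k), f s := lintegral_mono_set (Ioi_subset_Ioi htk.1.le)
        _ = ∑' n : ℕ, ∫⁻ s in Set.Ioc (x (k + n)) (x (k + n + 1)), f s := by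
            rw [← hU, lintegral_iUnion (fun n => measurableSet_Ioc) hdisj]
        _ ≤ ∑' n : ℕ, (2 : ℝ≥0∞) ^ (-(((k + n : ℤ) : ℝ) / r) * q) * D ^ q :=
            ENNReal.tsum_le_tsum fun n => hI (k + n)
        _ = ∑' n : ℕ, (2 : ℝ≥0∞) ^ (-((k : ℝ) / r) * q) * D ^ q * a ^ n := by
            refine tsum_congr fun n => ?_
            have he : (-(((k + n : ℤ) : ℝ) / r) * q)
                = (-((k : ℝ) / r) * q) + (-(q / r)) * (n : ℝ) := by
              push_cast
              field_simp
              ring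
            rw [he, ENNReal.rpow_add _ _ two_ne_zero ENNReal.ofNat_ne_top,
              ENNReal.rpow_mul 2 (-(q / r)) (n : ℝ), ENNReal.rpow_natCast]
            ring
        _ = 2 ^ (-((k : ℝ) / r) * q) * D ^ q * b⁻¹ := by
            rw [ENNReal.tsum_mul_left, ENNReal.tsum_geometric, hb_def]
    -- combine
    have hAr : (∫⁻ s in Set.Ioc 0 t, u s) ^ (1 / r) ≤ (2 : ℝ≥0∞) ^ (((k : ℝ) + 1) / r) := by
      calc (∫⁻ s in Set.Ioc 0 t, u s) ^ (1 / r)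
          ≤ ((2 : ℝ≥0∞) ^ (k + 1)) ^ (1 / r) := ENNReal.rpow_le_rpow hA (by positivity)
        _ = (2 : ℝ≥0∞) ^ (((k : ℝ) + 1) / r) := by
            rw [← ENNReal.rpow_intCast 2 (k + 1), ← ENNReal.rpow_mul]
            push_cast
            ring_nf
    have hBq : (∫⁻ s in Set.Ioi t, f s) ^ (1 / q)
        ≤ (2 : ℝ≥0∞) ^ (-((k : ℝ) / r)) * D * (b ^ (1 / q))⁻¹ := by
      calc (∫⁻ s in Set.Ioi t, f s) ^ (1 / q)
          ≤ ((2 : ℝ≥0∞) ^ (-((k : ℝ) / r) * q) * D ^ q * b⁻¹) ^ (1 / q) :=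
            ENNReal.rpow_le_rpow hB (by positivity)
        _ = (2 : ℝ≥0∞) ^ (-((k : ℝ) / r)) * D * (b ^ (1 / q))⁻¹ := by
            have h2e : (((2 : ℝ≥0∞)) ^ (-((k : ℝ) / r) * q)) ^ (1 / q)
                = (2 : ℝ≥0∞) ^ (-((k : ℝ) / r)) := by
              rw [← ENNReal.rpow_mul, mul_assoc, mul_one_div_cancel hq', mul_one]
            have hDe : (D ^ q) ^ (1 / q) = D := by
              rw [← ENNReal.rpow_mul, mul_one_div_cancel hq', ENNReal.rpow_one]
            rw [ENNReal.mul_rpow_of_nonneg _ _ (by positivity),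
              ENNReal.mul_rpow_of_nonneg _ _ (by positivity), h2e, hDe,
              ENNReal.inv_rpow]
    calc (2 ^ (-(1 / r)) * b ^ (1 / q)) * ((∫⁻ s in Set.Ioc 0 t, u s) ^ (1 / r) *
          (∫⁻ s in Set.Ioi t, f s) ^ (1 / q))
        ≤ (2 ^ (-(1 / r)) * b ^ (1 / q)) * ((2 : ℝ≥0∞) ^ (((k : ℝ) + 1) / r) *
          ((2 : ℝ≥0∞) ^ (-((k : ℝ) / r)) * D * (b ^ (1 / q))⁻¹)) :=
          mul_le_mul_right (mul_le_mul' hAr hBq) _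
      _ = ((2 : ℝ≥0∞) ^ (-(1 / r)) * 2 ^ (((k : ℝ) + 1) / r) * 2 ^ (-((k : ℝ) / r))) *
          (b ^ (1 / q) * (b ^ (1 / q))⁻¹) * D := by ring
      _ = D := by
          rw [← ENNReal.rpow_add _ _ two_ne_zero ENNReal.ofNat_ne_top,
            ← ENNReal.rpow_add _ _ two_ne_zero ENNReal.ofNat_ne_top,
            ENNReal.mul_inv_cancel hbq0 hbqtop]
          have : -(1 / r) + ((k : ℝ) + 1) / r + -((k : ℝ) / r) = 0 := by
            field_simp
            ring
          rw [this, ENNReal.rpow_zero, one_mul, one_mul]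
  · -- upper bound
    rw [one_mul]
    refine iSup_le fun k => ?_
    have h1 : (2 : ℝ≥0∞) ^ ((k : ℝ) / r) = (∫⁻ s in Set.Ioc 0 (x k), u s) ^ (1 / r) := by
      rw [hxint k, ← ENNReal.rpow_intCast 2 k, ← ENNReal.rpow_mul]
      congr 1
      field_simp
    have h2 : (∫⁻ s in Set.Ioc (x k) (x (k + 1)), f s) ^ (1 / q)
        ≤ (∫⁻ s in Set.Ioi (x k), f s) ^ (1 / q) :=
      ENNReal.rpow_le_rpow (lintegral_mono_set Set.Ioc_subset_Ioi_self) (by positivity)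
    calc (2 : ℝ≥0∞) ^ ((k : ℝ) / r) * (∫⁻ s in Set.Ioc (x k) (x (k + 1)), f s) ^ (1 / q)
        ≤ (∫⁻ s in Set.Ioc 0 (x k), u s) ^ (1 / r) *
          (∫⁻ s in Set.Ioi (x k), f s) ^ (1 / q) := by rw [h1]; exact mul_le_mul_right h2 _
      _ ≤ ⨆ t ∈ Set.Ioi (0 : ℝ), (∫⁻ s in Set.Ioc 0 t, u s) ^ (1 / r) *
          (∫⁻ s in Set.Ioi t, f s) ^ (1 / q) :=
        le_iSup₂ (f := fun t (_ : t ∈ Set.Ioi (0 : ℝ)) =>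
          (∫⁻ s in Set.Ioc 0 t, u s) ^ (1 / r) * (∫⁻ s in Set.Ioi t, f s) ^ (1 / q))
          (x k) (hxpos k)
end

section
/- Let 0 < r < 1, set r' = r/(1−r), let v be a non-decreasing weight, and {x_k} a covering sequence with ∫_0^{x_k} u = 2^k. Then (∑_k 2^{k r'/r} (∫_{x_k}^{x_{k+1}} v(s)^{−q} w(s) ds)^{r'/q})^{1/r'} is equivalent to (∫_0^∞ (∫_0^t u)^{r'} (∫_t^∞ v(s)^{−q} w(s) ds)^{r'/q} u(t) dt)^{1/r'}, with equivalence constants independent of u, v, w. -/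
open MeasureTheory ENNReal Set

lemma two_rpow_ne_top (y : ℝ) : (2:ℝ≥0∞) ^ y ≠ ⊤ := by
  simp [ENNReal.rpow_eq_top_iff]

lemma two_rpow_ne_zero (y : ℝ) : (2:ℝ≥0∞) ^ y ≠ 0 := by
  simp [ENNReal.rpow_eq_zero_iff]

lemma two_rpow_mul_two_rpow (a b : ℝ) :
    (2:ℝ≥0∞) ^ a * (2:ℝ≥0∞) ^ b = (2:ℝ≥0∞) ^ (a + b) :=
  (ENNReal.rpow_add a b two_ne_zero ENNReal.ofNat_ne_top).symm

/-- geometric series over ℕ -/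
lemma geom_nat (c : ℝ) : ∑' m : ℕ, (2:ℝ≥0∞) ^ (-((m:ℝ) * c)) = (1 - 2 ^ (-c))⁻¹ := by
  have h : ∀ m : ℕ, (2:ℝ≥0∞) ^ (-((m:ℝ) * c)) = ((2:ℝ≥0∞) ^ (-c)) ^ m := by
    intro m
    rw [← ENNReal.rpow_natCast ((2:ℝ≥0∞) ^ (-c)) m, ← ENNReal.rpow_mul]
    ring_nf
  simp_rw [h]
  exact ENNReal.tsum_geometric _

lemma geom_lt_top {c : ℝ} (hc : 0 < c) : ((1:ℝ≥0∞) - 2 ^ (-c))⁻¹ < ⊤ := by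
  rw [ENNReal.inv_lt_top, tsub_pos_iff_lt]
  calc (2:ℝ≥0∞) ^ (-c) < 2 ^ (0:ℝ) := by
        apply ENNReal.rpow_lt_rpow_of_exponent_lt one_lt_two ENNReal.ofNat_ne_top
        linarith
    _ = 1 := ENNReal.rpow_zero

/-- geometric sum over integers k ≤ j -/
lemma mygeom_le (c : ℝ) (j : ℤ) :
    ∑' k : ℤ, (if k ≤ j then (2:ℝ≥0∞) ^ (((k:ℝ) - (j:ℝ)) * c) else 0)
      = (1 - 2 ^ (-c))⁻¹ := by
  rw [← geom_nat c]
  refine (Function.Injective.tsum_eq (g := fun m : ℕ => j - (m:ℤ)) ?_ ?_).symm.trans ?_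
  · intro m n h; simp only at h; omega
  · intro k hk
    simp only [Function.mem_support, ne_eq, ite_eq_right_iff, not_forall] at hk
    obtain ⟨hkj, -⟩ := hk
    exact ⟨(j - k).toNat, by show j - (((j - k).toNat : ℤ)) = k; omega⟩
  · apply tsum_congr; intro m
    rw [if_pos (by show j - (m:ℤ) ≤ j; omega)]
    congr 1
    push_cast
    ring

/-- geometric sum over integers j ≥ k -/
lemma mygeom_ge (c : ℝ) (k : ℤ) :
    ∑' j : ℤ, (if k ≤ j then (2:ℝ≥0∞) ^ (((k:ℝ) - (j:ℝ)) * c) else 0)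
      = (1 - 2 ^ (-c))⁻¹ := by
  rw [← geom_nat c]
  refine (Function.Injective.tsum_eq (g := fun m : ℕ => k + (m:ℤ)) ?_ ?_).symm.trans ?_
  · intro m n h; simp only at h; omega
  · intro j hj
    simp only [Function.mem_support, ne_eq, ite_eq_right_iff, not_forall] at hj
    obtain ⟨hkj, -⟩ := hj
    exact ⟨(j - k).toNat, by show k + (((j - k).toNat : ℤ)) = j; omega⟩
  · apply tsum_congr; intro m
    rw [if_pos (by show k ≤ k + (m:ℤ); omega)]
    congr 1
    push_cast
    ring

lemma finset_rpow_le {β : ℝ} (hβ0 : 0 < β) (hβ1 : β ≤ 1) (s : Finset ℤ) (f : ℤ → ℝ≥0∞) :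
    (∑ j ∈ s, f j) ^ β ≤ ∑ j ∈ s, f j ^ β := by
  classical
  induction s using Finset.induction_on with
  | empty => simp [ENNReal.zero_rpow_of_pos hβ0]
  | @insert a s ha ih =>
      rw [Finset.sum_insert ha, Finset.sum_insert ha]
      exact (ENNReal.rpow_add_le_add_rpow _ _ hβ0.le hβ1).trans (add_le_add_right ih _)

lemma tsum_rpow_le {β : ℝ} (hβ0 : 0 < β) (hβ1 : β ≤ 1) (f : ℤ → ℝ≥0∞) :
    (∑' j, f j) ^ β ≤ ∑' j, f j ^ β := by
  have key : ∑' j, f j ≤ (∑' j, f j ^ β) ^ (1/β) := by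
    rw [ENNReal.tsum_eq_iSup_sum]
    refine iSup_le fun s => ?_
    have h1 : (∑ j ∈ s, f j) ^ β ≤ ∑' j, f j ^ β :=
      (finset_rpow_le hβ0 hβ1 s f).trans (ENNReal.sum_le_tsum s)
    have h2 := ENNReal.rpow_le_rpow h1 (by positivity : (0:ℝ) ≤ 1/β)
    rwa [← ENNReal.rpow_mul, mul_one_div, div_self hβ0.ne', ENNReal.rpow_one] at h2
  have h3 := ENNReal.rpow_le_rpow key hβ0.le
  rwa [← ENNReal.rpow_mul, one_div_mul_cancel hβ0.ne', ENNReal.rpow_one] at h3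

lemma hardy_aux {β ε : ℝ} (hβ : 0 < β) (hε : 0 < ε) :
    ∃ C : ℝ≥0∞, C ≠ 0 ∧ C ≠ ⊤ ∧ ∀ a : ℤ → ℝ≥0∞, ∀ k : ℤ,
      (∑' j : ℤ, if k ≤ j then a j else 0) ^ β
        ≤ C * ∑' j : ℤ, (if k ≤ j then (2:ℝ≥0∞) ^ (((j:ℝ) - (k:ℝ)) * ε) * a j ^ β else 0) := by
  rcases le_or_gt β 1 with hβ1 | hβ1
  · refine ⟨1, one_ne_zero, ENNReal.one_ne_top, fun a k => ?_⟩
    rw [one_mul]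
    refine (tsum_rpow_le hβ hβ1 _).trans (Summable.tsum_le_tsum (fun j => ?_)
      ENNReal.summable ENNReal.summable)
    by_cases h : k ≤ j
    · simp only [if_pos h]
      calc a j ^ β = 1 * a j ^ β := (one_mul _).symm
        _ ≤ (2:ℝ≥0∞) ^ (((j:ℝ) - (k:ℝ)) * ε) * a j ^ β := by
            apply mul_le_mul_left
            calc (1:ℝ≥0∞) = 2 ^ (0:ℝ) := ENNReal.rpow_zero.symm
              _ ≤ _ := ENNReal.rpow_le_rpow_of_exponent_le one_le_two
                  (by have hjk : (k:ℝ) ≤ (j:ℝ) := by exact_mod_cast h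
                      nlinarith)
    · simp [if_neg h, ENNReal.zero_rpow_of_pos hβ]
  · -- Hölder case
    set p : ℝ := β / (β - 1) with hp
    have hb1 : 0 < β - 1 := by linarith
    have hp1 : 1 < p := by rw [hp]; rw [lt_div_iff₀ hb1]; linarith
    have hpq : Real.HolderConjugate p β := by
      refine Real.holderConjugate_iff.mpr ⟨hp1, ?_⟩
      rw [hp]
      rw [inv_div]
      field_simp
      ring
    set δ : ℝ := ε / β with hδ
    have hδ0 : 0 < δ := div_pos hε hβ
    set G : ℝ≥0∞ := (1 - 2 ^ (-(δ * p)))⁻¹ with hG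
    have hGtop : G ≠ ⊤ := (geom_lt_top (by positivity)).ne
    have hG0 : G ≠ 0 := by
      rw [hG]
      simp only [ne_eq, ENNReal.inv_eq_zero]
      exact (tsub_le_self.trans_lt ENNReal.one_lt_top).ne
    refine ⟨G ^ (β / p), ?_, ?_, fun a k => ?_⟩
    · simp [ENNReal.rpow_eq_zero_iff, hG0, hGtop, ne_eq]
    · exact ENNReal.rpow_ne_top_of_nonneg (by positivity) hGtop
    · set f : ℤ → ℝ≥0∞ := fun j => if k ≤ j then (2:ℝ≥0∞) ^ (((k:ℝ) - (j:ℝ)) * δ) else 0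
      set g : ℤ → ℝ≥0∞ := fun j =>
        if k ≤ j then (2:ℝ≥0∞) ^ (((j:ℝ) - (k:ℝ)) * δ) * a j else 0
      have hfg : ∀ j, (if k ≤ j then a j else 0) = f j * g j := by
        intro j
        by_cases h : k ≤ j
        · simp only [f, g, if_pos h, ← mul_assoc, two_rpow_mul_two_rpow]
          rw [show ((k:ℝ) - j) * δ + ((j:ℝ) - k) * δ = 0 by ring, ENNReal.rpow_zero, one_mul]
        · simp [f, g, if_neg h]
      have hHolder := ENNReal.lintegral_mul_le_Lp_mul_Lq (Measure.count (α := ℤ)) hpq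
        (measurable_of_countable f).aemeasurable (measurable_of_countable g).aemeasurable
      rw [MeasureTheory.lintegral_count, MeasureTheory.lintegral_count,
        MeasureTheory.lintegral_count] at hHolder
      have hF : ∑' j, f j ^ p = G := by
        rw [hG, ← mygeom_ge (δ * p) k]
        apply tsum_congr; intro j
        by_cases h : k ≤ j
        · simp only [f, if_pos h, ← ENNReal.rpow_mul, mul_assoc]
        · simp [f, if_neg h, ENNReal.zero_rpow_of_pos (lt_trans zero_lt_one hp1)]
      have hGg : ∑' j, g j ^ β
          = ∑' j, (if k ≤ j then (2:ℝ≥0∞) ^ (((j:ℝ) - (k:ℝ)) * ε) * a j ^ β else 0) := by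
        apply tsum_congr; intro j
        by_cases h : k ≤ j
        · simp only [g, if_pos h, ENNReal.mul_rpow_of_nonneg _ _ hβ.le, ← ENNReal.rpow_mul]
          rw [show ((j:ℝ) - k) * δ * β = ((j:ℝ) - k) * ε by
            rw [hδ]; field_simp]
        · simp [g, if_neg h, ENNReal.zero_rpow_of_pos hβ]
      calc (∑' j : ℤ, if k ≤ j then a j else 0) ^ β
          = (∑' j, f j * g j) ^ β := by rw [tsum_congr hfg]
        _ ≤ ((∑' j, f j ^ p) ^ (1/p) * (∑' j, g j ^ β) ^ (1/β)) ^ β :=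
            ENNReal.rpow_le_rpow hHolder hβ.le
        _ = (G ^ (1/p)) ^ β * ((∑' j, g j ^ β) ^ (1/β)) ^ β := by
            rw [hF, ENNReal.mul_rpow_of_nonneg _ _ hβ.le]
        _ = G ^ (β / p) * ∑' j, g j ^ β := by
            rw [← ENNReal.rpow_mul, ← ENNReal.rpow_mul, one_div_mul_cancel hβ.ne',
              ENNReal.rpow_one, one_div, inv_mul_eq_div]
        _ = _ := by rw [hGg]

lemma hardy {α β : ℝ} (hα : 0 < α) (hβ : 0 < β) :
    ∃ C : ℝ≥0∞, C ≠ 0 ∧ C ≠ ⊤ ∧ ∀ a : ℤ → ℝ≥0∞,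
      ∑' k : ℤ, (2:ℝ≥0∞) ^ ((k:ℝ) * α) * (∑' j : ℤ, if k ≤ j then a j else 0) ^ β
        ≤ C * ∑' k : ℤ, (2:ℝ≥0∞) ^ ((k:ℝ) * α) * a k ^ β := by
  obtain ⟨C₁, hC₁0, hC₁t, hC₁⟩ := hardy_aux hβ (half_pos hα)
  set G₂ : ℝ≥0∞ := (1 - 2 ^ (-(α/2)))⁻¹ with hG₂
  have hG₂top : G₂ ≠ ⊤ := (geom_lt_top (half_pos hα)).ne
  have hG₂0 : G₂ ≠ 0 := by
    rw [hG₂]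
    simp only [ne_eq, ENNReal.inv_eq_zero]
    exact (tsub_le_self.trans_lt ENNReal.one_lt_top).ne
  refine ⟨C₁ * G₂, mul_ne_zero hC₁0 hG₂0, ENNReal.mul_ne_top hC₁t hG₂top, fun a => ?_⟩
  have step1 : ∑' k : ℤ, (2:ℝ≥0∞) ^ ((k:ℝ) * α) * (∑' j : ℤ, if k ≤ j then a j else 0) ^ β
      ≤ C₁ * ∑' k : ℤ, ∑' j : ℤ,
          (if k ≤ j then (2:ℝ≥0∞) ^ ((k:ℝ) * α) *
            ((2:ℝ≥0∞) ^ (((j:ℝ) - (k:ℝ)) * (α/2)) * a j ^ β) else 0) := by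
    rw [← ENNReal.tsum_mul_left]
    refine Summable.tsum_le_tsum (fun k => ?_) ENNReal.summable ENNReal.summable
    calc (2:ℝ≥0∞) ^ ((k:ℝ) * α) * (∑' j : ℤ, if k ≤ j then a j else 0) ^ β
        ≤ (2:ℝ≥0∞) ^ ((k:ℝ) * α) *
          (C₁ * ∑' j : ℤ, (if k ≤ j then (2:ℝ≥0∞) ^ (((j:ℝ) - (k:ℝ)) * (α/2)) * a j ^ β else 0)) :=
          mul_le_mul_right (hC₁ a k) _
      _ = C₁ * ∑' j : ℤ,
          (if k ≤ j then (2:ℝ≥0∞) ^ ((k:ℝ) * α) *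
            ((2:ℝ≥0∞) ^ (((j:ℝ) - (k:ℝ)) * (α/2)) * a j ^ β) else 0) := by
          rw [mul_left_comm, ← ENNReal.tsum_mul_left]
          congr 1
          apply tsum_congr; intro j
          rw [mul_ite, mul_zero]
  refine step1.trans ?_
  rw [ENNReal.tsum_comm, mul_assoc]
  apply mul_le_mul_right
  rw [← ENNReal.tsum_mul_left]
  refine le_of_eq (tsum_congr fun j => ?_)
  have inner : ∀ k : ℤ, (if k ≤ j then (2:ℝ≥0∞) ^ ((k:ℝ) * α) *
      ((2:ℝ≥0∞) ^ (((j:ℝ) - (k:ℝ)) * (α/2)) * a j ^ β) else 0)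
      = ((2:ℝ≥0∞) ^ ((j:ℝ) * α) * a j ^ β) *
        (if k ≤ j then (2:ℝ≥0∞) ^ (((k:ℝ) - (j:ℝ)) * (α/2)) else 0) := by
    intro k
    by_cases h : k ≤ j
    · simp only [if_pos h]
      rw [mul_right_comm ((2:ℝ≥0∞) ^ ((j:ℝ) * α)) (a j ^ β),
        two_rpow_mul_two_rpow, ← mul_assoc, two_rpow_mul_two_rpow,
        show (k:ℝ) * α + ((j:ℝ) - (k:ℝ)) * (α/2) = (j:ℝ) * α + ((k:ℝ) - (j:ℝ)) * (α/2) by ring]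
    · simp [if_neg h]
  rw [tsum_congr inner, ENNReal.tsum_mul_left, mygeom_le (α/2) j]
  ring

/-- for `0 < r < 1`, `r' = r/(1−r)`, non-decreasing weight `v` and
covering sequence `∫_0^{x_k} u = 2^k`,
`(∑_k 2^{k r'/r} (∫_{x_k}^{x_{k+1}} v^{−q} w)^{r'/q})^{1/r'}
  ≈ (∫_0^∞ (∫_0^t u)^{r'} (∫_t^∞ v^{−q} w)^{r'/q} u(t) dt)^{1/r'}`. -/
theorem discrete_sum_equiv_continuous_integral
    (q r : ℝ) (hq : 0 < q) (hr0 : 0 < r) (hr1 : r < 1) :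
    ∃ c₁ c₂ : ℝ≥0∞, 0 < c₁ ∧ c₂ < ∞ ∧
      ∀ u v w : ℝ → ℝ≥0∞, IsWeight u → IsWeight v → IsWeight w →
        MonotoneOn v (Set.Ioi 0) →
      ∀ x : ℤ → ℝ, StrictMono x → (∀ k, 0 < x k) →
        (∀ k : ℤ, (∫⁻ t in Set.Ioc 0 (x k), u t) = 2 ^ k) →
        (⋃ k : ℤ, Set.Ioc (x k) (x (k + 1))) = Set.Ioi (0 : ℝ) →
      c₁ * (∫⁻ t in Set.Ioi (0 : ℝ),
              (∫⁻ s in Set.Ioc 0 t, u s) ^ (r / (1 - r)) *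
              (∫⁻ s in Set.Ioi t, v s ^ (-q) * w s) ^ ((r / (1 - r)) / q) *
              u t) ^ ((1 - r) / r)
          ≤ (∑' k : ℤ, (2 : ℝ≥0∞) ^ (((k : ℝ) * (r / (1 - r))) / r) *
              (∫⁻ s in Set.Ioc (x k) (x (k + 1)), v s ^ (-q) * w s) ^ ((r / (1 - r)) / q)
            ) ^ ((1 - r) / r) ∧
        (∑' k : ℤ, (2 : ℝ≥0∞) ^ (((k : ℝ) * (r / (1 - r))) / r) *
              (∫⁻ s in Set.Ioc (x k) (x (k + 1)), v s ^ (-q) * w s) ^ ((r / (1 - r)) / q)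
            ) ^ ((1 - r) / r)
          ≤ c₂ * (∫⁻ t in Set.Ioi (0 : ℝ),
              (∫⁻ s in Set.Ioc 0 t, u s) ^ (r / (1 - r)) *
              (∫⁻ s in Set.Ioi t, v s ^ (-q) * w s) ^ ((r / (1 - r)) / q) *
              u t) ^ ((1 - r) / r) := by
  have h1r : 0 < 1 - r := by linarith
  set r' : ℝ := r / (1 - r) with hr'def
  have hr'0 : 0 < r' := div_pos hr0 h1r
  set al : ℝ := r' / r with haldef
  have hal0 : 0 < al := div_pos hr'0 hr0
  set be : ℝ := r' / q with hbedef
  have hbe0 : 0 < be := div_pos hr'0 hq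
  set e : ℝ := (1 - r) / r with hedef
  have he0 : 0 < e := div_pos h1r hr0
  have hr'1 : r' + 1 = al := by
    rw [haldef, hr'def]
    field_simp
    ring
  obtain ⟨C, hC0, hCt, hC⟩ := hardy hal0 hbe0
  set K : ℝ≥0∞ := 2 ^ r' * C with hKdef
  have hK0 : K ≠ 0 := mul_ne_zero (two_rpow_ne_zero r') hC0
  have hKt : K ≠ ⊤ := ENNReal.mul_ne_top (two_rpow_ne_top r') hCt
  have hKe0 : K ^ e ≠ 0 := by
    simp [ENNReal.rpow_eq_zero_iff, hK0, hKt]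
  have hKet : K ^ e ≠ ⊤ := ENNReal.rpow_ne_top_of_nonneg he0.le hKt
  refine ⟨(K ^ e)⁻¹, 2 ^ (al * e), ENNReal.inv_pos.mpr hKet,
    ENNReal.rpow_lt_top_of_nonneg (by positivity) ENNReal.ofNat_ne_top, ?_⟩
  intro u v w hu hv hw _ x hsm hx0 hxint hcov
  set I : ℝ≥0∞ := ∫⁻ t in Ioi (0:ℝ),
      (∫⁻ s in Ioc 0 t, u s) ^ r' * (∫⁻ s in Ioi t, v s ^ (-q) * w s) ^ be * u t with hIdef
  set Sd : ℝ≥0∞ := ∑' k : ℤ, (2:ℝ≥0∞) ^ (((k:ℝ) * r') / r) *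
      (∫⁻ s in Ioc (x k) (x (k+1)), v s ^ (-q) * w s) ^ be with hSdef
  -- pairwise disjointness
  have pdisj : Pairwise (Function.onFun Disjoint fun k : ℤ => Ioc (x k) (x (k+1))) := by
    have key : ∀ i j : ℤ, i < j → Disjoint (Ioc (x i) (x (i+1))) (Ioc (x j) (x (j+1))) := by
      intro i j hij
      rw [Set.Ioc_disjoint_Ioc]
      exact le_trans (min_le_left _ _) (le_trans (hsm.monotone (by omega)) (le_max_right _ _))
    intro i j hij
    rcases lt_or_gt_of_ne hij with h | h
    · exact key i j h
    · exact (key j i h).symm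
  have hxik : ∀ k : ℤ, (∫⁻ t in Ioc (0:ℝ) (x k), u t) = 2 ^ ((k:ℝ)) := by
    intro k
    rw [hxint k, ← ENNReal.rpow_intCast]
  have intU : ∀ k : ℤ, (∫⁻ t in Ioc (x k) (x (k+1)), u t) = 2 ^ ((k:ℝ)) := by
    intro k
    have hsplit : Ioc (0:ℝ) (x (k+1)) = Ioc 0 (x k) ∪ Ioc (x k) (x (k+1)) :=
      (Ioc_union_Ioc_eq_Ioc (hx0 k).le (hsm (by omega)).le).symm
    have h2 : (∫⁻ t in Ioc (0:ℝ) (x (k+1)), u t)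
        = (∫⁻ t in Ioc (0:ℝ) (x k), u t) + ∫⁻ t in Ioc (x k) (x (k+1)), u t := by
      rw [hsplit, lintegral_union measurableSet_Ioc (Ioc_disjoint_Ioc_of_le le_rfl)]
    rw [hxik, hxik,
      show (((k+1:ℤ)):ℝ) = (k:ℝ) + 1 by push_cast; ring,
      ENNReal.rpow_add _ _ two_ne_zero ENNReal.ofNat_ne_top, ENNReal.rpow_one, mul_two] at h2
    exact ((ENNReal.add_right_inj (two_rpow_ne_top _)).mp h2).symm
  -- tail decomposition
  have tail_eq : ∀ k : ℤ,
      Ioi (x k) = ⋃ j : ℤ, (if k ≤ j then Ioc (x j) (x (j+1)) else (∅ : Set ℝ)) := by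
    intro k
    ext t
    simp only [mem_Ioi, mem_iUnion]
    constructor
    · intro ht
      have ht0 : t ∈ Ioi (0:ℝ) := lt_trans (hx0 k) ht
      rw [← hcov] at ht0
      obtain ⟨j, hj⟩ := mem_iUnion.mp ht0
      have hkj : k ≤ j := by
        by_contra hlt
        push_neg at hlt
        have : t ≤ x k := hj.2.trans (hsm.monotone (by omega))
        linarith
      exact ⟨j, by rw [if_pos hkj]; exact hj⟩
    · rintro ⟨j, hj⟩
      by_cases h : k ≤ j
      · rw [if_pos h] at hj
        exact lt_of_le_of_lt (hsm.monotone h) hj.1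
      · rw [if_neg h] at hj
        exact absurd hj (Set.notMem_empty t)
  have tail_sum : ∀ k : ℤ, (∫⁻ s in Ioi (x k), v s ^ (-q) * w s)
      = ∑' j : ℤ, (if k ≤ j then ∫⁻ s in Ioc (x j) (x (j+1)), v s ^ (-q) * w s else 0) := by
    intro k
    rw [tail_eq k, lintegral_iUnion
      (fun j => by split
                   · exact measurableSet_Ioc
                   · exact MeasurableSet.empty)
      (fun i j hij => (pdisj hij).mono (by split <;> simp) (by split <;> simp))]
    exact tsum_congr fun j => by split <;> simp
  have Isum : I = ∑' k : ℤ, ∫⁻ t in Ioc (x k) (x (k+1)),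
      (∫⁻ s in Ioc 0 t, u s) ^ r' * (∫⁻ s in Ioi t, v s ^ (-q) * w s) ^ be * u t := by
    rw [hIdef, ← hcov, lintegral_iUnion (fun _ => measurableSet_Ioc) pdisj]
  -- per-interval upper bound
  have upper_k : ∀ k : ℤ, (∫⁻ t in Ioc (x k) (x (k+1)),
        (∫⁻ s in Ioc 0 t, u s) ^ r' * (∫⁻ s in Ioi t, v s ^ (-q) * w s) ^ be * u t)
      ≤ 2 ^ r' * (2 ^ ((k:ℝ) * al) *
          (∫⁻ s in Ioi (x k), v s ^ (-q) * w s) ^ be) := by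
    intro k
    have hb : ∀ t ∈ Ioc (x k) (x (k+1)),
        (∫⁻ s in Ioc 0 t, u s) ^ r' * (∫⁻ s in Ioi t, v s ^ (-q) * w s) ^ be * u t
          ≤ (2 ^ (((k:ℝ)+1) * r') * (∫⁻ s in Ioi (x k), v s ^ (-q) * w s) ^ be) * u t := by
      intro t ht
      have hU : (∫⁻ s in Ioc (0:ℝ) t, u s) ≤ 2 ^ ((k:ℝ)+1) := by
        rw [show (k:ℝ)+1 = (((k+1:ℤ)):ℝ) by push_cast; ring, ← hxik (k+1)]
        exact lintegral_mono_set (Ioc_subset_Ioc_right ht.2)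
      have hT : (∫⁻ s in Ioi t, v s ^ (-q) * w s)
          ≤ ∫⁻ s in Ioi (x k), v s ^ (-q) * w s :=
        lintegral_mono_set (Ioi_subset_Ioi ht.1.le)
      refine mul_le_mul_left (mul_le_mul' ?_ (ENNReal.rpow_le_rpow hT hbe0.le)) _
      calc (∫⁻ s in Ioc (0:ℝ) t, u s) ^ r' ≤ (2 ^ ((k:ℝ)+1)) ^ r' :=
            ENNReal.rpow_le_rpow hU hr'0.le
        _ = 2 ^ (((k:ℝ)+1) * r') := (ENNReal.rpow_mul 2 _ _).symm
    calc (∫⁻ t in Ioc (x k) (x (k+1)),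
          (∫⁻ s in Ioc 0 t, u s) ^ r' * (∫⁻ s in Ioi t, v s ^ (-q) * w s) ^ be * u t)
        ≤ ∫⁻ t in Ioc (x k) (x (k+1)),
            (2 ^ (((k:ℝ)+1) * r') * (∫⁻ s in Ioi (x k), v s ^ (-q) * w s) ^ be) * u t :=
          setLIntegral_mono' measurableSet_Ioc hb
      _ = (2 ^ (((k:ℝ)+1) * r') * (∫⁻ s in Ioi (x k), v s ^ (-q) * w s) ^ be) *
            ∫⁻ t in Ioc (x k) (x (k+1)), u t := lintegral_const_mul _ hu.1
      _ = 2 ^ r' * (2 ^ ((k:ℝ) * al) * (∫⁻ s in Ioi (x k), v s ^ (-q) * w s) ^ be) := by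
          rw [intU k, mul_right_comm, two_rpow_mul_two_rpow, ← mul_assoc, two_rpow_mul_two_rpow,
            show ((k:ℝ)+1) * r' + (k:ℝ) = r' + (k:ℝ) * al by rw [← hr'1]; ring]
  -- per-interval lower bound
  have lower_k : ∀ k : ℤ, 2 ^ ((k:ℝ) * al) * (∫⁻ s in Ioi (x (k+1)), v s ^ (-q) * w s) ^ be
      ≤ ∫⁻ t in Ioc (x k) (x (k+1)),
        (∫⁻ s in Ioc 0 t, u s) ^ r' * (∫⁻ s in Ioi t, v s ^ (-q) * w s) ^ be * u t := by
    intro k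
    have hb : ∀ t ∈ Ioc (x k) (x (k+1)),
        (2 ^ ((k:ℝ) * r') * (∫⁻ s in Ioi (x (k+1)), v s ^ (-q) * w s) ^ be) * u t
          ≤ (∫⁻ s in Ioc 0 t, u s) ^ r' * (∫⁻ s in Ioi t, v s ^ (-q) * w s) ^ be * u t := by
      intro t ht
      have hU : (2:ℝ≥0∞) ^ ((k:ℝ)) ≤ ∫⁻ s in Ioc (0:ℝ) t, u s := by
        rw [← hxik k]
        exact lintegral_mono_set (Ioc_subset_Ioc_right ht.1.le)
      have hT : (∫⁻ s in Ioi (x (k+1)), v s ^ (-q) * w s)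
          ≤ ∫⁻ s in Ioi t, v s ^ (-q) * w s :=
        lintegral_mono_set (Ioi_subset_Ioi ht.2)
      refine mul_le_mul_left (mul_le_mul' ?_ (ENNReal.rpow_le_rpow hT hbe0.le)) _
      calc (2:ℝ≥0∞) ^ ((k:ℝ) * r') = (2 ^ ((k:ℝ))) ^ r' := ENNReal.rpow_mul 2 _ _
        _ ≤ (∫⁻ s in Ioc (0:ℝ) t, u s) ^ r' := ENNReal.rpow_le_rpow hU hr'0.le
    calc 2 ^ ((k:ℝ) * al) * (∫⁻ s in Ioi (x (k+1)), v s ^ (-q) * w s) ^ be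
        = (2 ^ ((k:ℝ) * r') * (∫⁻ s in Ioi (x (k+1)), v s ^ (-q) * w s) ^ be) *
            ∫⁻ t in Ioc (x k) (x (k+1)), u t := by
          rw [intU k, mul_right_comm, two_rpow_mul_two_rpow,
            show (k:ℝ) * r' + (k:ℝ) = (k:ℝ) * al by rw [← hr'1]; ring]
      _ = ∫⁻ t in Ioc (x k) (x (k+1)),
            (2 ^ ((k:ℝ) * r') * (∫⁻ s in Ioi (x (k+1)), v s ^ (-q) * w s) ^ be) * u t :=
          (lintegral_const_mul _ hu.1).symm
      _ ≤ _ := setLIntegral_mono' measurableSet_Ioc hb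
  -- key inequality 1 : I ≤ K * Sd
  have key1 : I ≤ K * Sd := by
    rw [Isum]
    calc (∑' k : ℤ, ∫⁻ t in Ioc (x k) (x (k+1)),
          (∫⁻ s in Ioc 0 t, u s) ^ r' * (∫⁻ s in Ioi t, v s ^ (-q) * w s) ^ be * u t)
        ≤ ∑' k : ℤ, 2 ^ r' * (2 ^ ((k:ℝ) * al) *
            (∫⁻ s in Ioi (x k), v s ^ (-q) * w s) ^ be) :=
          Summable.tsum_le_tsum upper_k ENNReal.summable ENNReal.summable
      _ = 2 ^ r' * ∑' k : ℤ, 2 ^ ((k:ℝ) * al) *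
            (∑' j : ℤ, if k ≤ j then ∫⁻ s in Ioc (x j) (x (j+1)), v s ^ (-q) * w s else 0) ^ be := by
          rw [ENNReal.tsum_mul_left]
          congr 1
          exact tsum_congr fun k => by rw [tail_sum k]
      _ ≤ 2 ^ r' * (C * ∑' k : ℤ, 2 ^ ((k:ℝ) * al) *
            (∫⁻ s in Ioc (x k) (x (k+1)), v s ^ (-q) * w s) ^ be) :=
          mul_le_mul_right (hC _) _
      _ = K * Sd := by
          rw [hKdef, hSdef, mul_assoc]
          congr 2
          exact tsum_congr fun k => by rw [mul_div_assoc]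
  -- key inequality 2 : Sd ≤ 2^al * I
  have key2 : Sd ≤ 2 ^ al * I := by
    have hSd2 : Sd = ∑' k : ℤ, (2:ℝ≥0∞) ^ ((((k+1:ℤ)):ℝ) * r' / r) *
        (∫⁻ s in Ioc (x (k+1)) (x (k+1+1)), v s ^ (-q) * w s) ^ be := by
      rw [hSdef]
      exact (Equiv.tsum_eq (Equiv.addRight (1:ℤ)) (fun k : ℤ => (2:ℝ≥0∞) ^ (((k:ℝ) * r') / r) *
        (∫⁻ s in Ioc (x k) (x (k+1)), v s ^ (-q) * w s) ^ be)).symm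
    rw [hSd2, Isum, ← ENNReal.tsum_mul_left]
    refine Summable.tsum_le_tsum (fun k => ?_) ENNReal.summable ENNReal.summable
    calc (2:ℝ≥0∞) ^ ((((k+1:ℤ)):ℝ) * r' / r) *
          (∫⁻ s in Ioc (x (k+1)) (x (k+1+1)), v s ^ (-q) * w s) ^ be
        ≤ (2:ℝ≥0∞) ^ ((((k+1:ℤ)):ℝ) * r' / r) *
          (∫⁻ s in Ioi (x (k+1)), v s ^ (-q) * w s) ^ be :=
          mul_le_mul_right (ENNReal.rpow_le_rpow
            (lintegral_mono_set (fun t ht => ht.1)) hbe0.le) _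
      _ = 2 ^ al * (2 ^ ((k:ℝ) * al) * (∫⁻ s in Ioi (x (k+1)), v s ^ (-q) * w s) ^ be) := by
          rw [← mul_assoc, two_rpow_mul_two_rpow,
            show al + (k:ℝ) * al = (((k+1:ℤ)):ℝ) * r' / r by
              push_cast
              rw [haldef]
              ring]
      _ ≤ 2 ^ al * (∫⁻ t in Ioc (x k) (x (k+1)),
            (∫⁻ s in Ioc 0 t, u s) ^ r' * (∫⁻ s in Ioi t, v s ^ (-q) * w s) ^ be * u t) :=
          mul_le_mul_right (lower_k k) _
  constructor
  · have h := ENNReal.rpow_le_rpow key1 he0.le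
    rw [ENNReal.mul_rpow_of_nonneg _ _ he0.le] at h
    calc (K ^ e)⁻¹ * I ^ e ≤ (K ^ e)⁻¹ * (K ^ e * Sd ^ e) := mul_le_mul_right h _
      _ = Sd ^ e := by rw [← mul_assoc, ENNReal.inv_mul_cancel hKe0 hKet, one_mul]
  · have h := ENNReal.rpow_le_rpow key2 he0.le
    rw [ENNReal.mul_rpow_of_nonneg _ _ he0.le, ← ENNReal.rpow_mul] at h
    exact h
end
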